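/- arXiv:2309.04121 — 6 statements merged into one kernel-verified Lean document; each statement's English description precedes it below -/
import Mathlib

section
/- Let A, B, C ∈ F_{q²} with B ≠ 0 and set D = Tr(A)² − 4N(B). If there does not exist θ ∈ F_{q²} such that Tr(A)·θ^q + 2Bθ + C = 0, then D = 0 and Σ_{w ∈ F_{q²}} χ(A·w^{q+1} + B·w² + C·w) = 0. -/
open Finset Polynomial

private lemma card_filter_le_natDegree {K : Type} [Field K] [Fintype K] [DecidableEq K]
    (P : Polynomial K) (hP : P ≠ 0) (pr : K → Prop) [DecidablePred pr]
    (h : ∀ x, pr x → P.eval x = 0) :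
    (Finset.univ.filter pr).card ≤ P.natDegree := by
  have hsub : Finset.univ.filter pr ⊆ P.roots.toFinset := by
    intro x hx
    rw [Finset.mem_filter] at hx
    rw [Multiset.mem_toFinset, Polynomial.mem_roots hP]
    exact h x hx.2
  calc (Finset.univ.filter pr).card ≤ P.roots.toFinset.card := Finset.card_le_card hsub
    _ ≤ Multiset.card P.roots := Multiset.toFinset_card_le _
    _ ≤ P.natDegree := Polynomial.card_roots' P

-- the "a X^m + b X + c" polynomial helper
private lemma card_filter_poly_le {K : Type} [Field K] [Fintype K] [DecidableEq K]
    (a b c : K) (m : ℕ) (hm : 1 < m) (ha : a ≠ 0) (pr : K → Prop) [DecidablePred pr]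
    (h : ∀ x, pr x → a * x ^ m + b * x + c = 0) :
    (Finset.univ.filter pr).card ≤ m := by
  set P : Polynomial K := C a * X ^ m + (C b * X + C c) with hPdef
  have hcoeff : P.coeff m = a := by
    simp [hPdef, Polynomial.coeff_add, Polynomial.coeff_C_mul, Polynomial.coeff_X_pow,
      Polynomial.coeff_X, Polynomial.coeff_C]
    have h1 : ¬ (1 = m) := by omega
    have h0 : ¬ (m = 0) := by omega
    simp [h1, h0]
  have hP : P ≠ 0 := fun h0 => ha (by rw [← hcoeff, h0, Polynomial.coeff_zero])
  have hdeg : P.natDegree ≤ m := by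
    apply le_trans (Polynomial.natDegree_add_le _ _)
    simp only [sup_le_iff]
    constructor
    · exact le_trans (Polynomial.natDegree_C_mul_le _ _) (by simp)
    · apply le_trans (Polynomial.natDegree_add_le _ _)
      simp only [sup_le_iff]
      constructor
      · exact le_trans (Polynomial.natDegree_C_mul_le _ _) (by simp [Polynomial.natDegree_X]; omega)
      · simp
  refine le_trans (card_filter_le_natDegree P hP pr ?_) hdeg
  intro x hx
  have := h x hx
  simp only [hPdef, Polynomial.eval_add, Polynomial.eval_mul, Polynomial.eval_C,
    Polynomial.eval_pow, Polynomial.eval_X]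
  linear_combination this

/-- Let `A, B, C ∈ F_{q²}` with `B ≠ 0` and set `D = Tr(A)² − 4N(B)`.
If there does not exist `θ ∈ F_{q²}` with `Tr(A)·θ^q + 2Bθ + C = 0`, then `D = 0` and
`∑_{w ∈ F_{q²}} χ(A·w^{q+1} + B·w² + C·w) = 0`.
Here `K` plays the role of `F_{q²}`, `Tr(x) = x^q + x`, `N(x) = x^{q+1}`, and `χ` is the
canonical additive character of `F_{q²}`, `χ(x) = ζ_p^{Tr_{F_{q²}/F_p}(x)}` where the absolute
trace is `∑_{i < 2n} x^(p^i)` (an element of the prime field, identified with a natural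
number `m < p` via the canonical map `ℕ → K`). -/
theorem stmt0 (p n q : ℕ) (hp : p.Prime) (hp2 : p ≠ 2) (hn : 0 < n)
    (hq : q = p ^ n)
    (K : Type) [Field K] [Fintype K] (hK : Fintype.card K = q ^ 2)
    (ζ : ℂ) (hζ : IsPrimitiveRoot ζ p)
    (χ : K → ℂ)
    (hχ : ∀ x : K, ∀ m : ℕ, (m : K) = ∑ i ∈ Finset.range (2 * n), x ^ p ^ i →
      χ x = ζ ^ m)
    (A B C : K) (hB : B ≠ 0)
    (hno : ¬ ∃ θ : K, (A ^ q + A) * θ ^ q + 2 * B * θ + C = 0) :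
    (A ^ q + A) ^ 2 - 4 * B ^ (q + 1) = 0 ∧
      ∑ w : K, χ (A * w ^ (q + 1) + B * w ^ 2 + C * w) = 0 := by
  classical
  haveI fp : Fact p.Prime := ⟨hp⟩
  have hp3 : 3 ≤ p := by have := hp.two_le; omega
  have hq3 : 3 ≤ q := by
    rw [hq]
    calc 3 ≤ p := hp3
    _ = p ^ 1 := (pow_one p).symm
    _ ≤ p ^ n := Nat.pow_le_pow_right (by omega) hn
  have hq2n : Fintype.card K = p ^ (2 * n) := by rw [hK, hq, ← pow_mul, Nat.mul_comm]
  have hchar : CharP K p := by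
    have hrp : (ringChar K).Prime := CharP.char_is_prime K _
    have hdvd : ringChar K ∣ p ^ (2 * n) := by
      rw [← hq2n]
      exact (CharP.cast_eq_zero_iff K (ringChar K) _).1 (FiniteField.cast_card_eq_zero K)
    have h1 := Nat.Prime.dvd_of_dvd_pow hrp hdvd
    have heq : ringChar K = p := (Nat.prime_dvd_prime_iff_eq hrp hp).1 h1
    rw [← heq]; exact ringChar.charP K
  haveI : CharP K p := hchar
  haveI : ExpChar K p := expChar_prime K p
  -- basic powers
  have hpow_card : ∀ x : K, x ^ (q * q) = x := by
    intro x
    have h1 := FiniteField.pow_card x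
    rw [hK, pow_two] at h1
    exact h1
  have hfrobq2 : ∀ x : K, (x ^ q) ^ q = x := by
    intro x; rw [← pow_mul]; exact hpow_card x
  have haddq : ∀ x y : K, (x + y) ^ q = x ^ q + y ^ q := by
    intro x y; rw [hq]; exact add_pow_char_pow ..
  set ψ : ZMod p →+* K := ZMod.castHom (dvd_refl p) K with hψ
  have hnatq : ∀ m : ℕ, ((m : K)) ^ q = (m : K) := by
    intro m
    have h1 : ((m : ZMod p)) ^ q = (m : ZMod p) := by rw [hq]; exact ZMod.pow_card_pow _
    calc ((m : K)) ^ q = (ψ ((m : ZMod p))) ^ q := by rw [map_natCast]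
    _ = ψ (((m : ZMod p)) ^ q) := (map_pow ψ _ _).symm
    _ = ψ ((m : ZMod p)) := by rw [h1]
    _ = (m : K) := map_natCast ψ m
  have h2q : (2 : K) ^ q = 2 := by
    have := hnatq 2; push_cast at this; exact this
  have h2ne : (2 : K) ≠ 0 := by
    intro h0
    have : ((2 : ℕ) : K) = 0 := by push_cast; exact h0
    have hd := (CharP.cast_eq_zero_iff K p 2).1 this
    have := Nat.le_of_dvd (by norm_num) hd
    omega
  have hqodd : Odd q := by
    rw [hq]; exact (hp.odd_of_ne_two hp2).pow
  have hneg2q : (-2 : K) ^ q = -2 := by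
    rw [hqodd.neg_pow, h2q]
  -- prime subfield
  have fixed_mem : ∀ y : K, y ^ p = y → ∃ m : ℕ, (m : K) = y := by
    intro y hy
    set f : Polynomial K := Polynomial.X ^ p - Polynomial.X with hf
    have hfne : f ≠ 0 := by
      intro h0
      have hne1 : ¬ ((1:ℕ) = p) := by omega
      have hc : f.coeff p = 1 := by
        rw [hf]
        simp only [Polynomial.coeff_sub, Polynomial.coeff_X_pow, Polynomial.coeff_X, if_pos rfl,
          if_neg hne1]
        norm_num
      rw [h0] at hc; simp at hc
    have hfd : f.natDegree ≤ p := le_trans (Polynomial.natDegree_sub_le _ _) (by simp [Polynomial.natDegree_X_pow, Polynomial.natDegree_X]; omega)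
    set S : Finset K := (Finset.univ : Finset (ZMod p)).image (fun a => ψ a) with hS
    have hcardS : S.card = p := by
      rw [hS, Finset.card_image_of_injective _ ψ.injective, Finset.card_univ, ZMod.card]
    have hSsub : S ⊆ f.roots.toFinset := by
      intro x hx; rw [hS, Finset.mem_image] at hx; obtain ⟨a, -, rfl⟩ := hx
      rw [Multiset.mem_toFinset, Polynomial.mem_roots hfne]
      show f.eval (ψ a) = 0
      simp [hf, ← map_pow, ZMod.pow_card]
    have hy' : y ∈ f.roots.toFinset := by
      rw [Multiset.mem_toFinset, Polynomial.mem_roots hfne]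
      show f.eval y = 0
      simp [hf, hy]
    have hRcard : f.roots.toFinset.card ≤ p :=
      le_trans (Multiset.toFinset_card_le _) (le_trans (Polynomial.card_roots' f) hfd)
    have hSeq : S = f.roots.toFinset :=
      Finset.eq_of_subset_of_card_le hSsub (by omega)
    rw [← hSeq, hS, Finset.mem_image] at hy'
    obtain ⟨a, -, ha⟩ := hy'
    refine ⟨a.val, ?_⟩
    rw [← ha, ← map_natCast ψ a.val]
    congr 1
    exact ZMod.natCast_rightInverse a
  -- the absolute trace
  set tr : K → K := fun x => ∑ i ∈ Finset.range (2 * n), x ^ p ^ i with htr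
  have hshift : ∀ x : K, ∑ i ∈ Finset.range (2 * n), x ^ p ^ (i + 1) = tr x := by
    intro x
    have hN : x ^ p ^ (2 * n) = x := by
      have := FiniteField.pow_card x; rw [hq2n] at this; exact this
    have e1 := Finset.sum_range_succ' (fun i => x ^ p ^ i) (2 * n)
    have e2 := Finset.sum_range_succ (fun i => x ^ p ^ i) (2 * n)
    have e3 : (∑ i ∈ Finset.range (2 * n), x ^ p ^ (i + 1)) + x ^ p ^ 0
        = tr x + x ^ p ^ (2 * n) := by rw [← e1, e2]
    rw [hN, pow_zero, pow_one] at e3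
    exact add_right_cancel e3
  have htr_frob : ∀ x : K, (tr x) ^ p = tr x := by
    intro x
    rw [htr]
    simp only
    rw [sum_pow_char]
    have : ∀ i ∈ Finset.range (2 * n), (x ^ p ^ i) ^ p = x ^ p ^ (i + 1) := by
      intro i _; rw [← pow_mul, ← pow_succ]
    rw [Finset.sum_congr rfl this]
    exact hshift x
  have htr_p : ∀ x : K, tr (x ^ p) = tr x := by
    intro x
    rw [htr]
    simp only
    have : ∀ i ∈ Finset.range (2 * n), (x ^ p) ^ p ^ i = x ^ p ^ (i + 1) := by
      intro i _; rw [← pow_mul, ← pow_succ']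
    rw [Finset.sum_congr rfl this]
    exact hshift x
  have htr_q : ∀ x : K, tr (x ^ q) = tr x := by
    have key : ∀ k : ℕ, ∀ x : K, tr (x ^ p ^ k) = tr x := by
      intro k
      induction k with
      | zero => intro x; rw [pow_zero, pow_one]
      | succ k ih => intro x; rw [pow_succ, pow_mul]; rw [htr_p (x ^ p ^ k)] at *; exact ih x
    intro x; rw [hq]; exact key n x
  have htr_add : ∀ x y : K, tr (x + y) = tr x + tr y := by
    intro x y
    rw [htr]
    simp only
    rw [← Finset.sum_add_distrib]
    apply Finset.sum_congr rfl
    intro i _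
    exact add_pow_char_pow ..
  have hrep : ∀ x : K, ∃ m : ℕ, (m : K) = tr x ∧ χ x = ζ ^ m := by
    intro x
    obtain ⟨m, hm⟩ := fixed_mem (tr x) (htr_frob x)
    exact ⟨m, hm, hχ x m hm⟩
  -- character lemmas
  have hζp1 : ζ ^ p = 1 := hζ.pow_eq_one
  have hχ_add : ∀ x y : K, χ (x + y) = χ x * χ y := by
    intro x y
    obtain ⟨mx, hmx, hx⟩ := hrep x
    obtain ⟨my, hmy, hy⟩ := hrep y
    have h1 : (((mx + my : ℕ)) : K) = tr (x + y) := by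
      push_cast; rw [htr_add, hmx, hmy]
    rw [hχ (x + y) (mx + my) h1, pow_add, hx, hy]
  have hχ0 : χ 0 = 1 := by
    have h1 : ((0 : ℕ) : K) = tr 0 := by
      rw [htr]; simp only [Nat.cast_zero]
      rw [Finset.sum_eq_zero]
      intro i _
      exact zero_pow (pow_ne_zero i hp.pos.ne')
    rw [hχ 0 0 h1, pow_zero]
  have hχ_ne : ∀ x : K, χ x ≠ 0 := by
    intro x
    obtain ⟨m, -, hx⟩ := hrep x
    rw [hx]
    exact pow_ne_zero m (hζ.ne_zero hp.pos.ne')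
  have hχ_mulneg : ∀ x : K, χ x * χ (-x) = 1 := by
    intro x; rw [← hχ_add, add_neg_cancel, hχ0]
  have hχnorm : ∀ x : K, ‖χ x‖ = 1 := by
    intro x
    obtain ⟨m, -, hx⟩ := hrep x
    rw [hx, norm_pow, Complex.norm_eq_one_of_pow_eq_one hζp1 hp.pos.ne', one_pow]
  have hχ_conj : ∀ x : K, (starRingEnd ℂ) (χ x) = χ (-x) := by
    intro x
    have h1 : (χ x)⁻¹ = (starRingEnd ℂ) (χ x) := Complex.inv_eq_conj (hχnorm x)
    rw [← h1]
    exact (eq_inv_of_mul_eq_one_right (hχ_mulneg x)).symm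
  have hχ_frobq : ∀ x : K, χ (x ^ q) = χ x := by
    intro x
    obtain ⟨m, hm, hx⟩ := hrep x
    have h2 : (m : K) = tr (x ^ q) := by rw [htr_q]; exact hm
    rw [hχ (x ^ q) m h2, hx]
  have hχ_sq : ∀ x : K, χ x ^ 2 = 1 → χ x = 1 := by
    intro x h2
    obtain ⟨m, -, hx⟩ := hrep x
    rw [hx] at h2 ⊢
    rw [← pow_mul] at h2
    have hdvd : p ∣ m * 2 := (hζ.pow_eq_one_iff_dvd _).1 h2
    have hcop : Nat.Coprime p 2 := (Nat.coprime_primes hp Nat.prime_two).2 hp2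
    have : p ∣ m := (Nat.Coprime.dvd_of_dvd_mul_right hcop) hdvd
    exact (hζ.pow_eq_one_iff_dvd m).2 this
  have hχ_tr0 : ∀ x : K, x ^ q = -x → χ x = 1 := by
    intro x hx
    apply hχ_sq
    rw [pow_two]
    nth_rewrite 2 [← hχ_frobq x]
    rw [hx]
    exact hχ_mulneg x
  -- the subfield F_q
  set Fq : Finset K := Finset.univ.filter (fun c : K => c ^ q = c) with hFq
  have hFq_mem : ∀ c : K, c ∈ Fq ↔ c ^ q = c := by
    intro c; rw [hFq, Finset.mem_filter]; simp
  have hFqcard : q ≤ Fq.card := by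
    set s : Finset K := Finset.univ.erase (0 : K) with hs
    have hscard : s.card = q ^ 2 - 1 := by
      rw [hs, Finset.card_erase_of_mem (Finset.mem_univ _), Finset.card_univ, hK]
    set f : K → K := fun x => x ^ (q + 1) with hfdef
    have hfq : ∀ x : K, (x ^ (q + 1)) ^ q = x ^ (q + 1) := by
      intro x
      rw [← pow_mul, add_mul, one_mul, pow_add, hpow_card, ← pow_succ']
    have himg : s.image f ⊆ Fq.erase 0 := by
      intro a ha
      rw [Finset.mem_image] at ha
      obtain ⟨x, hxs, rfl⟩ := ha
      rw [hs, Finset.mem_erase] at hxs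
      rw [Finset.mem_erase, hFq_mem]
      exact ⟨pow_ne_zero _ hxs.1, hfq x⟩
    have hfib : ∀ a ∈ s.image f, (s.filter (fun x => f x = a)).card ≤ q + 1 := by
      intro a _
      have h1 := card_filter_poly_le (1 : K) 0 (-a) (q + 1) (by omega) one_ne_zero
        (fun x => f x = a) (fun x hx => by rw [hfdef] at hx; simp only at hx; rw [hx]; ring)
      refine le_trans (Finset.card_le_card ?_) h1
      intro x hx
      rw [Finset.mem_filter] at hx ⊢
      exact ⟨Finset.mem_univ _, hx.2⟩
    have hmul := Finset.card_le_mul_card_image s (q + 1) hfib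
    have he : (q + 1) * (q - 1) + 1 = q ^ 2 := by
      obtain ⟨k, rfl⟩ : ∃ k, q = k + 1 := ⟨q - 1, by omega⟩
      simp only [Nat.add_sub_cancel]
      ring
    have himgcard : q - 1 ≤ (s.image f).card := by
      have h2 : (q + 1) * (q - 1) ≤ (q + 1) * (s.image f).card := by omega
      exact Nat.le_of_mul_le_mul_left h2 (by omega)
    have h3 : q - 1 ≤ (Fq.erase 0).card :=
      le_trans himgcard (Finset.card_le_card himg)
    have h4 : (Fq.erase 0).card + 1 = Fq.card :=
      Finset.card_erase_add_one (by rw [hFq_mem]; exact zero_pow (by omega))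
    omega
  have hd0 : ∃ d : K, d ^ q = d ∧ χ d ≠ 1 := by
    by_contra hcon
    push_neg at hcon
    have htr0 : ∀ d : K, d ^ q = d → (∑ i ∈ Finset.range n, d ^ p ^ i) = 0 := by
      intro d hd
      have hχd := hcon d hd
      obtain ⟨m, hm, hx⟩ := hrep d
      rw [hx] at hχd
      have hdvd : p ∣ m := (hζ.pow_eq_one_iff_dvd m).1 hχd
      have htrd : tr d = 0 := by
        rw [← hm]
        exact (CharP.cast_eq_zero_iff K p m).2 hdvd
      have hsplit : tr d = (∑ i ∈ Finset.range n, d ^ p ^ i)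
          + (∑ i ∈ Finset.range n, d ^ p ^ (n + i)) := by
        rw [htr]
        simp only
        rw [two_mul, Finset.sum_range_add]
      have hsame : ∀ i ∈ Finset.range n, d ^ p ^ (n + i) = d ^ p ^ i := by
        intro i _
        rw [pow_add, pow_mul, ← hq, hd]
      rw [Finset.sum_congr rfl hsame] at hsplit
      have h2 : (2 : K) * (∑ i ∈ Finset.range n, d ^ p ^ i) = 0 := by
        rw [htrd] at hsplit
        linear_combination - hsplit
      exact (mul_eq_zero.1 h2).resolve_left h2ne
    -- polynomial argument
    set g : Polynomial K := ∑ i ∈ Finset.range n, Polynomial.X ^ p ^ i with hg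
    have hgne : g ≠ 0 := by
      intro h0
      have hc : g.coeff 1 = 1 := by
        rw [hg, Polynomial.finset_sum_coeff]
        rw [Finset.sum_eq_single_of_mem 0 (Finset.mem_range.2 hn)]
        · simp
        · intro i _ hi
          rw [Polynomial.coeff_X_pow]
          have : ¬ ((1:ℕ) = p ^ i) := by
            have : p ^ 1 ≤ p ^ i := Nat.pow_le_pow_right (by omega) (by omega)
            simp at this ⊢
            omega
          simp [this]
      rw [h0] at hc; simp at hc
    have hgdeg : g.natDegree ≤ p ^ (n - 1) := by
      rw [hg]
      apply Polynomial.natDegree_sum_le_of_forall_le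
      intro i hi
      rw [Polynomial.natDegree_X_pow]
      exact Nat.pow_le_pow_right hp.pos (by rw [Finset.mem_range] at hi; omega)
    have hcard := card_filter_le_natDegree g hgne (fun c : K => c ^ q = c)
      (fun x hx => by
        rw [hg]
        rw [Polynomial.eval_finset_sum]
        simp only [Polynomial.eval_pow, Polynomial.eval_X]
        exact htr0 x hx)
    have hlt : p ^ (n - 1) < q := by
      rw [hq]
      exact Nat.pow_lt_pow_right (by omega) (by omega)
    rw [← hFq] at hcard
    omega
  -- derive θ0
  set TrA : K := A ^ q + A with hTrAdef
  have hTrAq : TrA ^ q = TrA := by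
    rw [hTrAdef, haddq, hfrobq2]; ring
  have hθ0ex : ∃ θ0 : K, θ0 ≠ 0 ∧ TrA * θ0 ^ q + 2 * B * θ0 = 0 := by
    by_contra hcon
    push_neg at hcon
    have hinj : Function.Injective (fun θ : K => TrA * θ ^ q + 2 * B * θ) := by
      intro a b hab
      simp only at hab
      by_contra hne
      have hsub : (a - b) ^ q = a ^ q - b ^ q := by
        have h1 := haddq (a - b) b
        rw [sub_add_cancel] at h1
        linear_combination - h1
      have h1 : TrA * (a - b) ^ q + 2 * B * (a - b) = 0 := by
        rw [hsub]
        linear_combination hab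
      exact (hcon (a - b) (sub_ne_zero.2 hne)) h1
    have hsurj := Finite.injective_iff_surjective.1 hinj
    obtain ⟨θ, hθ⟩ := hsurj (-C)
    simp only at hθ
    exact hno ⟨θ, by linear_combination hθ⟩
  obtain ⟨θ0, hθ0ne, hθ0⟩ := hθ0ex
  have hTrAne : TrA ≠ 0 := by
    intro h0
    rw [h0, zero_mul, zero_add] at hθ0
    exact (mul_ne_zero (mul_ne_zero h2ne hB) hθ0ne) hθ0
  have hθ0q : TrA * θ0 + 2 * B ^ q * θ0 ^ q = 0 := by
    have h1 : (TrA * θ0 ^ q) ^ q = (-(2 * B * θ0)) ^ q := by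
      congr 1
      linear_combination hθ0
    rw [mul_pow, hTrAq, hfrobq2, hqodd.neg_pow, mul_pow, mul_pow, h2q] at h1
    linear_combination h1
  have hD : TrA ^ 2 - 4 * B ^ (q + 1) = 0 := by
    have hmul : (TrA ^ 2 - 4 * B ^ (q + 1)) * (θ0 ^ q * θ0) = 0 := by
      have hBq1 : B ^ (q + 1) = B ^ q * B := pow_succ B q
      rw [hBq1]
      linear_combination (TrA * θ0) * hθ0 + (-2 * B * θ0) * hθ0q
    rcases mul_eq_zero.1 hmul with h | h
    · exact h
    · exact absurd h (mul_ne_zero (pow_ne_zero _ hθ0ne) hθ0ne)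
  refine ⟨hD, ?_⟩
  -- γ ≠ 0
  obtain ⟨β, hβ⟩ : ∃ b : K, b = C * θ0 := ⟨_, rfl⟩
  obtain ⟨γ, hγdef⟩ : ∃ g : K, g = β ^ q + β := ⟨_, rfl⟩
  have hγq : γ ^ q = γ := by
    rw [hγdef, haddq, hfrobq2]; ring
  have hγne : γ ≠ 0 := by
    intro h0
    have h0' : β ^ q + β = 0 := by rw [← hγdef]; exact h0
    have hθ0qne : θ0 ^ q ≠ 0 := pow_ne_zero _ hθ0ne
    set L : K → K := fun θ => TrA * θ ^ q + 2 * B * θ with hL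
    set Im : Finset K := Finset.univ.image L with hIm
    set H : Finset K := Finset.univ.filter (fun y => θ0 ^ q * y ^ q + θ0 * y = 0) with hH
    have hImH : Im ⊆ H := by
      intro y hy
      rw [hIm, Finset.mem_image] at hy
      obtain ⟨θ, -, rfl⟩ := hy
      rw [hH, Finset.mem_filter]
      refine ⟨Finset.mem_univ _, ?_⟩
      have hLq : (L θ) ^ q = TrA * θ + 2 * B ^ q * θ ^ q := by
        rw [hL]
        simp only
        rw [haddq, mul_pow, mul_pow, hfrobq2, hTrAq, mul_pow, h2q]
      rw [hLq, hL]
      simp only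
      linear_combination θ * hθ0 + θ ^ q * hθ0q
    have hHcard : H.card ≤ q := by
      have h1 := card_filter_poly_le (θ0 ^ q) θ0 0 q (by omega) hθ0qne
        (fun y => θ0 ^ q * y ^ q + θ0 * y = 0) (fun y hy => by linear_combination hy)
      rw [hH]
      exact h1
    have hfibL : ∀ a ∈ (Finset.univ : Finset K).image L,
        ((Finset.univ : Finset K).filter (fun x => L x = a)).card ≤ q := by
      intro a _
      exact card_filter_poly_le TrA (2 * B) (-a) q (by omega) hTrAne
        (fun x => L x = a) (fun x hx => by rw [hL] at hx; simp only at hx; linear_combination hx)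
    have hImcard : q ≤ Im.card := by
      have h1 := Finset.card_le_mul_card_image (Finset.univ : Finset K) q hfibL
      rw [Finset.card_univ, hK, pow_two] at h1
      rw [hIm]
      exact Nat.le_of_mul_le_mul_left h1 (by omega)
    have hHIm : H = Im := (Finset.eq_of_subset_of_card_le hImH (le_trans hHcard hImcard)).symm
    have hCH : -C ∈ H := by
      rw [hH, Finset.mem_filter]
      refine ⟨Finset.mem_univ _, ?_⟩
      rw [hqodd.neg_pow]
      have hβq : β ^ q = C ^ q * θ0 ^ q := by rw [hβ, mul_pow]
      linear_combination (-1 : K) * h0' + hβq + hβ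
    rw [hHIm, hIm, Finset.mem_image] at hCH
    obtain ⟨θ, -, hθ⟩ := hCH
    refine hno ⟨θ, ?_⟩
    rw [hL] at hθ
    simp only at hθ
    linear_combination hθ
  -- Part D: the exponential sum
  obtain ⟨d0, hd0q, hd0χ⟩ := hd0
  obtain ⟨f, hf⟩ : ∃ f : K → K, f = fun w => A * w ^ (q + 1) + B * w ^ 2 + C * w := ⟨_, rfl⟩
  obtain ⟨α, hα⟩ : ∃ a : K, a = A * (θ0 ^ q * θ0) + B * θ0 ^ 2 := ⟨_, rfl⟩
  have hq2swap : ∀ x : K, (x ^ 2) ^ q = (x ^ q) ^ 2 := fun x => by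
    rw [← pow_mul, ← pow_mul, mul_comm]
  have hαqexp : α ^ q = A ^ q * (θ0 * θ0 ^ q) + B ^ q * (θ0 ^ q) ^ 2 := by
    rw [hα, haddq, mul_pow, mul_pow, hfrobq2, mul_pow, hq2swap]
  have hTrA2 : TrA ^ 2 * (α ^ q + α) = 0 := by
    rw [hαqexp, hα]
    linear_combination (TrA ^ 2 * θ0 + B ^ q * (TrA * θ0 ^ q - 2 * B * θ0)) * hθ0
      - (B * θ0 ^ 2) * hD - (TrA ^ 2 * θ0 ^ q * θ0) * hTrAdef
  have hαneg : α ^ q = -α := by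
    rcases mul_eq_zero.1 hTrA2 with h | h
    · exact absurd h (pow_ne_zero 2 hTrAne)
    · exact eq_neg_of_add_eq_zero_left h
  have hinner : ∀ c : K, c ≠ 0 → ∑ v : K, χ (c * v) = 0 := by
    intro c hc
    have h1 : ∑ v : K, χ (c * v) = ∑ v : K, χ v := Equiv.sum_comp (Equiv.mulLeft₀ c hc) χ
    have h2 : χ d0 * (∑ v : K, χ v) = ∑ v : K, χ v := by
      rw [Finset.mul_sum]
      calc ∑ v : K, χ d0 * χ v = ∑ v : K, χ (d0 + v) :=
            Finset.sum_congr rfl (fun v _ => (hχ_add d0 v).symm)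
        _ = ∑ v : K, χ v := Equiv.sum_comp (Equiv.addLeft d0) χ
    have h3 : ∑ v : K, χ v = 0 := by
      by_contra h4
      have h5 : (χ d0 - 1) * (∑ v : K, χ v) = 0 := by linear_combination h2
      rcases mul_eq_zero.1 h5 with h6 | h6
      · exact hd0χ (by linear_combination h6)
      · exact h4 h6
    rw [h1, h3]
  have hT0 : ∑ c ∈ Fq, χ (β * c) = 0 := by
    have hexc : ∃ c0, c0 ∈ Fq ∧ χ (β * c0) ≠ 1 := by
      by_contra hcon
      push_neg at hcon
      have hγc : ∀ c, c ∈ Fq → χ (γ * c) = 1 := by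
        intro c hc
        have hc' : c ^ q = c := (hFq_mem c).1 hc
        have h1 : χ (β ^ q * c) = χ (β * c) := by
          calc χ (β ^ q * c) = χ ((β * c) ^ q) := by rw [mul_pow, hc']
            _ = χ (β * c) := hχ_frobq _
        have h2 : χ (γ * c) = χ (β ^ q * c) * χ (β * c) := by
          rw [← hχ_add]
          congr 1
          rw [hγdef]; ring
        rw [h2, h1, hcon c hc, one_mul]
      have hmem : γ⁻¹ * d0 ∈ Fq := by
        rw [hFq_mem, mul_pow, inv_pow, hγq, hd0q]
      have h3 := hγc _ hmem
      rw [← mul_assoc, mul_inv_cancel₀ hγne, one_mul] at h3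
      exact hd0χ h3
    obtain ⟨c0, hc0Fq, hc0⟩ := hexc
    have hc0' : c0 ^ q = c0 := (hFq_mem c0).1 hc0Fq
    have hshiftT : (∑ c ∈ Fq, χ (β * c)) * χ (β * c0) = ∑ c ∈ Fq, χ (β * c) := by
      rw [Finset.sum_mul]
      calc ∑ c ∈ Fq, χ (β * c) * χ (β * c0) = ∑ c ∈ Fq, χ (β * (c + c0)) := by
            refine Finset.sum_congr rfl (fun c _ => ?_)
            rw [← hχ_add]
            congr 1
            ring
        _ = ∑ c ∈ Fq, χ (β * c) := by
            refine Finset.sum_nbij' (fun c => c + c0) (fun c => c - c0) ?_ ?_ ?_ ?_ ?_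
            · intro a ha
              rw [hFq_mem] at ha ⊢
              rw [haddq, ha, hc0']
            · intro a ha
              rw [hFq_mem] at ha ⊢
              have h1 := haddq (a - c0) c0
              rw [sub_add_cancel] at h1
              linear_combination - h1 + ha - hc0'
            · intro a _
              ring
            · intro a _
              ring
            · intro a _
              rfl
    have h5 : (∑ c ∈ Fq, χ (β * c)) * (χ (β * c0) - 1) = 0 := by linear_combination hshiftT
    rcases mul_eq_zero.1 h5 with h6 | h6
    · exact h6
    · exact absurd (by linear_combination h6) hc0
  have hL0 : ∀ v u : K, χ (f (v + u)) * χ (-(f v))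
      = χ (f u) * χ ((TrA * u ^ q + 2 * B * u) * v) := by
    intro v u
    have hvq : (v + u) ^ q = v ^ q + u ^ q := haddq v u
    have hexp : f (v + u) = f v + (A * v ^ q * u + (f u + (A * u ^ q + 2 * B * u) * v)) := by
      simp only [hf]
      rw [pow_succ, pow_succ, pow_succ, hvq]
      ring
    have hfrob : χ (A * v ^ q * u) = χ (A ^ q * u ^ q * v) := by
      rw [← hχ_frobq (A * v ^ q * u)]
      congr 1
      rw [mul_pow, mul_pow, hfrobq2]
      ring
    have hcomb : A ^ q * u ^ q * v + (A * u ^ q + 2 * B * u) * v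
        = (TrA * u ^ q + 2 * B * u) * v := by
      rw [hTrAdef]; ring
    calc χ (f (v + u)) * χ (-(f v))
        = (χ (f v) * χ (-(f v)))
            * (χ (A * v ^ q * u) * (χ (f u) * χ ((A * u ^ q + 2 * B * u) * v))) := by
          rw [hexp, hχ_add, hχ_add, hχ_add]; ring
      _ = χ (f u) * (χ (A ^ q * u ^ q * v) * χ ((A * u ^ q + 2 * B * u) * v)) := by
          rw [hχ_mulneg, hfrob]; ring
      _ = χ (f u) * χ ((TrA * u ^ q + 2 * B * u) * v) := by
          rw [← hχ_add, hcomb]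
  have hker : Finset.univ.filter (fun u : K => TrA * u ^ q + 2 * B * u = 0)
      = Fq.image (fun c => θ0 * c) := by
    ext u
    rw [Finset.mem_filter, Finset.mem_image]
    constructor
    · rintro ⟨-, hu⟩
      refine ⟨θ0⁻¹ * u, ?_, ?_⟩
      · rw [hFq_mem]
        have key : u ^ q * θ0 = u * θ0 ^ q := by
          have h1 : TrA * (u ^ q * θ0) = TrA * (u * θ0 ^ q) := by
            linear_combination θ0 * hu - u * hθ0
          exact mul_left_cancel₀ hTrAne h1
        rw [mul_pow, inv_pow]
        field_simp
        linear_combination key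
      · rw [← mul_assoc, mul_inv_cancel₀ hθ0ne, one_mul]
    · rintro ⟨c, hc, rfl⟩
      rw [hFq_mem] at hc
      refine ⟨Finset.mem_univ _, ?_⟩
      rw [mul_pow, hc]
      linear_combination c * hθ0
  have hkersum : ∑ u ∈ Finset.univ.filter (fun u : K => TrA * u ^ q + 2 * B * u = 0), χ (f u)
      = ∑ c ∈ Fq, χ (β * c) := by
    rw [hker, Finset.sum_image (fun x _ y _ h => mul_left_cancel₀ hθ0ne h)]
    refine Finset.sum_congr rfl (fun c hc => ?_)
    have hc' : c ^ q = c := (hFq_mem c).1 hc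
    have h1 : f (θ0 * c) = α * c ^ 2 + β * c := by
      simp only [hf, hα, hβ]
      rw [pow_succ, mul_pow, hc']
      ring
    have h2 : χ (α * c ^ 2) = 1 := by
      apply hχ_tr0
      have hc2 : (c ^ 2) ^ q = c ^ 2 := by
        rw [← pow_mul, mul_comm 2 q, pow_mul, hc']
      rw [mul_pow, hc2, hαneg]
      ring
    rw [h1, hχ_add, h2, one_mul]
  have hSS : (∑ w : K, χ (f w)) * (starRingEnd ℂ) (∑ w : K, χ (f w)) = 0 := by
    have hconjS : (starRingEnd ℂ) (∑ w : K, χ (f w)) = ∑ v : K, χ (-(f v)) := by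
      rw [map_sum]
      exact Finset.sum_congr rfl (fun v _ => hχ_conj _)
    rw [hconjS, Finset.sum_mul_sum]
    rw [Finset.sum_comm]
    have hrow : ∀ v : K, ∑ w : K, χ (f w) * χ (-(f v))
        = ∑ u : K, χ (f u) * χ ((TrA * u ^ q + 2 * B * u) * v) := by
      intro v
      calc ∑ w : K, χ (f w) * χ (-(f v))
          = ∑ u : K, χ (f (v + u)) * χ (-(f v)) :=
            (Equiv.sum_comp (Equiv.addLeft v) (fun w => χ (f w) * χ (-(f v)))).symm
        _ = ∑ u : K, χ (f u) * χ ((TrA * u ^ q + 2 * B * u) * v) :=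
            Finset.sum_congr rfl (fun u _ => hL0 v u)
    rw [Finset.sum_congr rfl (fun v _ => hrow v)]
    rw [Finset.sum_comm]
    have hcol : ∀ u : K, ∑ v : K, χ (f u) * χ ((TrA * u ^ q + 2 * B * u) * v)
        = if TrA * u ^ q + 2 * B * u = 0 then (Fintype.card K : ℂ) * χ (f u) else 0 := by
      intro u
      by_cases hu : TrA * u ^ q + 2 * B * u = 0
      · rw [if_pos hu, ← Finset.mul_sum]
        have hz : ∀ v : K, χ ((TrA * u ^ q + 2 * B * u) * v) = 1 := fun v => by
          rw [hu, zero_mul, hχ0]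
        rw [Finset.sum_congr rfl (fun v _ => hz v), Finset.sum_const, Finset.card_univ,
          nsmul_eq_mul, mul_one]
        ring
      · rw [if_neg hu, ← Finset.mul_sum, hinner _ hu, mul_zero]
    rw [Finset.sum_congr rfl (fun u _ => hcol u)]
    rw [← Finset.sum_filter, ← Finset.mul_sum, hkersum, hT0, mul_zero]
  have h2 : Complex.normSq (∑ w : K, χ (f w)) = 0 := by
    rw [Complex.mul_conj] at hSS
    exact_mod_cast hSS
  have h3 : (∑ w : K, χ (f w)) = 0 := Complex.normSq_eq_zero.1 h2
  have h4 : ∑ w : K, χ (A * w ^ (q + 1) + B * w ^ 2 + C * w) = ∑ w : K, χ (f w) := by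
    refine Finset.sum_congr rfl (fun w _ => ?_)
    simp only [hf]
  rw [h4]
  exact h3
end

section
/- Let A, B, C ∈ F_{q²} with B ≠ 0 and suppose Tr(A)² ≠ 4N(B), so D = Tr(A)² − 4N(B) ≠ 0. Then, with θ = (−Tr(A)·C^q + 2B^q·C)/(Tr(A)² − 4N(B)), one has Σ_{w ∈ F_{q²}} χ(A·w^{q+1} + B·w² + C·w) = −η(D) · q · χ(−A·θ^{q+1} − B·θ²). -/
open Finset Polynomial

lemma aux_card_roots {K : Type} [Field K] [Fintype K] [DecidableEq K]
    (g : Polynomial K) (hg : g ≠ 0) :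
    ((univ : Finset K).filter (fun x => g.eval x = 0)).card ≤ g.natDegree := by
  have h1 : ((univ : Finset K).filter (fun x => g.eval x = 0)) ⊆ g.roots.toFinset := by
    intro x hx
    simp only [mem_filter] at hx
    simp [Polynomial.mem_roots', hg, Polynomial.IsRoot, hx.2]
  calc ((univ : Finset K).filter (fun x => g.eval x = 0)).card
      ≤ g.roots.toFinset.card := Finset.card_le_card h1
    _ ≤ Multiset.card g.roots := g.roots.toFinset_card_le
    _ ≤ g.natDegree := Polynomial.card_roots' g

lemma aux_exists_nonfixed {q : ℕ} {K : Type} [Field K] [Fintype K]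
    (hq2 : 2 ≤ q) (hK : Fintype.card K = q^2) : ∃ c : K, c^q ≠ c := by
  classical
  by_contra h
  push_neg at h
  set g : Polynomial K := Polynomial.X^q - Polynomial.X with hg
  have hgne : g ≠ 0 := by
    intro h0
    have hq1 : q ≠ 1 := by omega
    have hc : g.coeff q = 1 := by
      simp [hg, Polynomial.coeff_X_pow, Polynomial.coeff_X, Ne.symm hq1]
    rw [h0] at hc
    simp at hc
  have hdeg : g.natDegree ≤ q := by
    have h2 := Polynomial.natDegree_sub_le (Polynomial.X^q : Polynomial K) Polynomial.X
    simp [Polynomial.natDegree_X_pow] at h2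
    rw [hg]
    omega
  have hall : ((univ : Finset K).filter (fun x => g.eval x = 0)) = univ := by
    apply Finset.eq_univ_of_forall
    intro x
    simp [hg, h x]
  have hcard := aux_card_roots g hgne
  rw [hall, Finset.card_univ, hK] at hcard
  have : q^2 ≤ q := le_trans hcard hdeg
  nlinarith

def trP (p m : ℕ) {K : Type} [Field K] (x : K) : K := ∑ i ∈ Finset.range m, x ^ p ^ i

lemma trP_add {p m : ℕ} {K : Type} [Field K] [Fact p.Prime] [CharP K p] (x y : K) :
    trP p m (x + y) = trP p m x + trP p m y := by
  unfold trP
  rw [← Finset.sum_add_distrib]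
  exact Finset.sum_congr rfl (fun i _ => add_pow_char_pow x y p i)

lemma trP_zero {p m : ℕ} {K : Type} [Field K] (hp : 0 < p) : trP p m (0 : K) = 0 := by
  unfold trP
  apply Finset.sum_eq_zero
  intro i _
  exact zero_pow (pow_pos hp i).ne'

lemma trP_split {p n q : ℕ} {K : Type} [Field K] (hq : q = p ^ n)
    [Fact p.Prime] [CharP K p] (x : K) :
    trP p (2 * n) x = trP p n (x + x ^ q) := by
  unfold trP
  rw [two_mul, Finset.sum_range_add]
  have h : ∀ i ∈ Finset.range n, (x + x ^ q) ^ p ^ i = x ^ p ^ i + x ^ p ^ (n + i) := by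
    intro i _
    rw [add_pow_char_pow]
    congr 1
    rw [hq, ← pow_mul, ← pow_add]
  rw [Finset.sum_congr rfl h, Finset.sum_add_distrib]

lemma natCast_frob {p k : ℕ} {K : Type} [Field K] [Fact p.Prime] [CharP K p] (m : ℕ) :
    ((m : K)) ^ p ^ k = (m : K) := by
  have hpne : p ^ k ≠ 0 := pow_ne_zero k (Fact.out : p.Prime).pos.ne'
  induction m with
  | zero => simp [zero_pow hpne]
  | succ m ih =>
    push_cast
    rw [add_pow_char_pow, ih, one_pow]

lemma trP_fix {p n q : ℕ} {K : Type} [Field K] [Fintype K] (hq : q = p ^ n)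
    (hK : Fintype.card K = q ^ 2) [Fact p.Prime] [CharP K p] (x : K) :
    (trP p (2 * n) x) ^ p = trP p (2 * n) x := by
  have hfrob : (∑ i ∈ Finset.range (2*n), x ^ p ^ i) ^ p
      = ∑ i ∈ Finset.range (2*n), (x ^ p ^ i) ^ p := by
    have h := map_sum (frobenius K p) (fun i => x ^ p ^ i) (Finset.range (2*n))
    simp only [frobenius_def] at h
    exact h
  unfold trP
  rw [hfrob]
  have h1 : ∀ i ∈ Finset.range (2*n), (x ^ p ^ i) ^ p = x ^ p ^ (i+1) := by
    intro i _
    rw [← pow_mul, ← pow_succ]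
  rw [Finset.sum_congr rfl h1]
  have h2n : x ^ p ^ (2*n) = x := by
    have h3 : p ^ (2*n) = q ^ 2 := by rw [hq, ← pow_mul, mul_comm 2 n, pow_mul]
    rw [h3, ← hK, FiniteField.pow_card]
  have e1 := Finset.sum_range_succ' (fun i => x ^ p ^ i) (2*n)
  have e2 := Finset.sum_range_succ (fun i => x ^ p ^ i) (2*n)
  rw [e2] at e1
  simp only [h2n, pow_zero, pow_one] at e1
  exact add_right_cancel e1.symm

lemma exists_cast {p : ℕ} {K : Type} [Field K] [Fintype K] [Fact p.Prime] [CharP K p]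
    (x : K) (hx : x ^ p = x) : ∃ m : ℕ, m < p ∧ (m : K) = x := by
  classical
  have hp := (Fact.out : p.Prime)
  set S : Finset K := (univ : Finset K).filter (fun z => z ^ p - z = 0) with hS
  set T : Finset K := (Finset.range p).image (Nat.cast : ℕ → K) with hT
  have hinj : Set.InjOn (Nat.cast : ℕ → K) (Finset.range p) := by
    intro a ha b hb hab
    simp only [coe_range, Set.mem_Iio] at ha hb
    have h2 := (CharP.natCast_eq_natCast K p).mp hab
    rwa [Nat.ModEq, Nat.mod_eq_of_lt ha, Nat.mod_eq_of_lt hb] at h2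
  have hTcard : T.card = p := by
    rw [hT, Finset.card_image_of_injOn hinj, Finset.card_range]
  have hTS : T ⊆ S := by
    intro z hz
    rw [hT, Finset.mem_image] at hz
    obtain ⟨m, _, rfl⟩ := hz
    rw [hS, Finset.mem_filter]
    refine ⟨Finset.mem_univ _, ?_⟩
    have h4 : ((m : K)) ^ p ^ 1 = (m : K) := natCast_frob m
    rw [pow_one] at h4
    rw [h4, sub_self]
  have hScard : S.card ≤ p := by
    have hgne : (Polynomial.X ^ p - Polynomial.X : Polynomial K) ≠ 0 := by
      intro h0
      have hq1 : p ≠ 1 := hp.ne_one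
      have hc : (Polynomial.X ^ p - Polynomial.X : Polynomial K).coeff p = 1 := by
        simp [Polynomial.coeff_X_pow, Polynomial.coeff_X, Ne.symm hq1]
      rw [h0] at hc
      simp at hc
    have hb := aux_card_roots (Polynomial.X ^ p - Polynomial.X : Polynomial K) hgne
    have hdeg : (Polynomial.X ^ p - Polynomial.X : Polynomial K).natDegree ≤ p := by
      have hp2 := hp.two_le
      have h2 := Polynomial.natDegree_sub_le (Polynomial.X ^ p : Polynomial K) Polynomial.X
      simp [Polynomial.natDegree_X_pow] at h2
      omega
    have heq : S = (univ : Finset K).filter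
        (fun z => (Polynomial.X ^ p - Polynomial.X : Polynomial K).eval z = 0) := by
      rw [hS]
      apply Finset.filter_congr
      intro z _
      simp
    rw [heq]
    exact le_trans hb hdeg
  have hsub : S ⊆ T := by
    rw [Finset.eq_of_subset_of_card_le hTS (le_trans hScard hTcard.ge)]
  have hxS : x ∈ S := by
    rw [hS, Finset.mem_filter]
    exact ⟨Finset.mem_univ _, by rw [hx, sub_self]⟩
  have h5 := hsub hxS
  rw [hT, Finset.mem_image] at h5
  obtain ⟨m, hm, hmx⟩ := h5
  exact ⟨m, Finset.mem_range.mp hm, hmx⟩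

section Sfield

variable {q : ℕ} {K : Type} [Field K] [Fintype K]

lemma aux_card_S (hq2 : 2 ≤ q) (hK : Fintype.card K = q ^ 2)
    (S : Finset K) (hS : ∀ x : K, x ∈ S ↔ x ^ q = x)
    (hfa : ∀ x y : K, (x + y) ^ q = x ^ q + y ^ q)
    (hff : ∀ x : K, (x ^ q) ^ q = x)
    (hneg : ∀ x : K, (-x) ^ q = -(x ^ q))
    (h2K : (2 : K) ≠ 0) (h2q : (2 : K) ^ q = 2) :
    S.card = q := by
  classical
  obtain ⟨c, hc⟩ := aux_exists_nonfixed hq2 hK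
  set δ : K := c ^ q - c with hδ
  have hsub : ∀ x y : K, (x - y) ^ q = x ^ q - y ^ q := by
    intro x y
    rw [sub_eq_add_neg, hfa, hneg, sub_eq_add_neg]
  have hδq : δ ^ q = -δ := by
    rw [hδ, hsub, hff]
    ring
  have hδ0 : δ ≠ 0 := sub_ne_zero.mpr hc
  have h2δ : (2 : K) * δ ≠ 0 := mul_ne_zero h2K hδ0
  have key : (univ : Finset K).card = (S ×ˢ S).card := by
    apply Finset.card_nbij' (fun w => ((w + w ^ q) / 2, (w - w ^ q) / (2 * δ)))
      (fun z => z.1 + δ * z.2)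
    · intro w _
      rw [Finset.mem_coe, Finset.mem_product]
      constructor
      · rw [hS, div_pow, hfa, hff, h2q, add_comm (w ^ q) w]
      · rw [hS, div_pow, hsub, hff, mul_pow, h2q, hδq]
        rw [show w ^ q - w = -(w - w ^ q) by ring, show (2:K) * -δ = -(2 * δ) by ring,
          neg_div_neg_eq]
    · intro z _
      exact Finset.mem_univ _
    · intro w _
      field_simp
      try ring
    · intro z hz
      rw [Finset.mem_coe, Finset.mem_product, hS, hS] at hz
      obtain ⟨hx, hy⟩ := hz
      have hwq : (z.1 + δ * z.2) ^ q = z.1 - δ * z.2 := by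
        rw [hfa, mul_pow, hδq, hx, hy]
        ring
      beta_reduce
      rw [hwq]
      have e1 : (z.1 + δ * z.2 + (z.1 - δ * z.2)) / 2 = z.1 := by
        field_simp
        try ring
      have e2 : (z.1 + δ * z.2 - (z.1 - δ * z.2)) / (2 * δ) = z.2 := by
        field_simp
        try ring
      rw [e1, e2]
  rw [Finset.card_univ, hK, Finset.card_product] at key
  have : S.card ^ 2 = q ^ 2 := by rw [sq, key]
  exact Nat.pow_left_injective (by norm_num) this

lemma aux_pow_qsub1 (hq1 : 1 ≤ q) (u : K) (hu : u ^ q = u) (hune : u ≠ 0) :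
    u ^ (q - 1) = 1 := by
  have h : u ^ (q - 1) * u = 1 * u := by
    rw [← pow_succ, Nat.sub_add_cancel hq1, hu, one_mul]
  exact mul_right_cancel₀ hune h

lemma aux_dichotomy (hq1 : 1 ≤ q) (hodd : Odd q) (u : K) (hu : u ^ q = u) (hune : u ≠ 0) :
    u ^ ((q - 1) / 2) = 1 ∨ u ^ ((q - 1) / 2) = -1 := by
  obtain ⟨k, hk⟩ := hodd
  have he : (q - 1) / 2 * 2 = q - 1 := by omega
  have h2 : (u ^ ((q - 1) / 2)) ^ 2 = 1 := by
    rw [← pow_mul, he, aux_pow_qsub1 hq1 u hu hune]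
  have h1 : (u ^ ((q - 1) / 2) - 1) * (u ^ ((q - 1) / 2) + 1) = 0 := by
    linear_combination h2
  rcases mul_eq_zero.mp h1 with h | h
  · left; exact sub_eq_zero.mp h
  · right; exact eq_neg_of_add_eq_zero_left h

lemma aux_sq_iff (hq3 : 3 ≤ q) (hodd : Odd q)
    (S : Finset K) (hS : ∀ x : K, x ∈ S ↔ x ^ q = x) (hScard : S.card = q)
    (u : K) (hu : u ^ q = u) (hune : u ≠ 0) :
    (∃ y : K, y ^ q = y ∧ y ^ 2 = u) ↔ u ^ ((q - 1) / 2) = 1 := by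
  classical
  obtain ⟨k, hk⟩ := hodd
  set e := (q - 1) / 2 with he
  have he2 : e * 2 = q - 1 := by omega
  have he1 : 1 ≤ e := by omega
  constructor
  · rintro ⟨y, hyq, hy2⟩
    have hy0 : y ≠ 0 := by rintro rfl; simp at hy2; exact hune hy2.symm
    rw [← hy2, ← pow_mul, mul_comm 2 e, he2, aux_pow_qsub1 (by omega) y hyq hy0]
  · intro hue
    set R : Finset K := S.filter (fun v => v ^ e = 1) with hR
    set SQ : Finset K := (S.erase 0).image (fun y => y ^ 2) with hSQ
    have hSQR : SQ ⊆ R := by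
      intro v hv
      rw [hSQ, Finset.mem_image] at hv
      obtain ⟨y, hy, rfl⟩ := hv
      have hy0 : y ≠ 0 := Finset.ne_of_mem_erase hy
      have hyq : y ^ q = y := (hS y).mp (Finset.mem_of_mem_erase hy)
      rw [hR, Finset.mem_filter]
      refine ⟨(hS _).mpr ?_, ?_⟩
      · rw [← pow_mul, mul_comm 2 q, pow_mul, hyq]
      · rw [← pow_mul, mul_comm 2 e, he2, aux_pow_qsub1 (by omega) y hyq hy0]
    have hRcard : R.card ≤ e := by
      have hgne := Polynomial.X_pow_sub_C_ne_zero (n := e) (by omega) (1 : K)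
      have hb := aux_card_roots _ hgne
      have hsub : R ⊆ (univ : Finset K).filter
          (fun v => (Polynomial.X ^ e - Polynomial.C (1:K)).eval v = 0) := by
        intro v hv
        rw [hR, Finset.mem_filter] at hv
        simp [hv.2]
      calc R.card ≤ _ := Finset.card_le_card hsub
        _ ≤ _ := hb
        _ = e := Polynomial.natDegree_X_pow_sub_C
    have h0S : (0 : K) ∈ S := (hS 0).mpr (zero_pow (by omega))
    have herase : (S.erase 0).card = q - 1 := by
      rw [Finset.card_erase_of_mem h0S, hScard]
    have hfib : ∀ b ∈ SQ, ((S.erase 0).filter (fun y => y ^ 2 = b)).card ≤ 2 := by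
      intro b hb
      rw [hSQ, Finset.mem_image] at hb
      obtain ⟨y0, hy0, rfl⟩ := hb
      have hsub2 : (S.erase 0).filter (fun y => y ^ 2 = y0 ^ 2) ⊆ {y0, -y0} := by
        intro y hy
        rw [Finset.mem_filter] at hy
        have h3 : (y - y0) * (y + y0) = 0 := by linear_combination hy.2
        rcases mul_eq_zero.mp h3 with h | h
        · simp [sub_eq_zero.mp h]
        · simp [eq_neg_of_add_eq_zero_left h]
      calc _ ≤ ({y0, -y0} : Finset K).card := Finset.card_le_card hsub2
        _ ≤ 2 := Finset.card_insert_le _ _ |>.trans (by simp)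
    have himg : q - 1 ≤ 2 * SQ.card := by
      have h4 := Finset.card_le_mul_card_image (S.erase 0) 2 (by
        intro b hb; exact hfib b hb)
      rwa [herase] at h4
    have hSQcard : e ≤ SQ.card := by omega
    have hEq : SQ = R := Finset.eq_of_subset_of_card_le hSQR (hRcard.trans hSQcard)
    have huR : u ∈ R := by
      rw [hR, Finset.mem_filter]
      exact ⟨(hS u).mpr hu, hue⟩
    rw [← hEq, hSQ, Finset.mem_image] at huR
    obtain ⟨y, hy, hy2⟩ := huR
    exact ⟨y, (hS y).mp (Finset.mem_of_mem_erase hy), hy2⟩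

lemma aux_fiber_zero [DecidableEq K] (hq1 : 1 ≤ q)
    (S : Finset K) (hS : ∀ x : K, x ∈ S ↔ x ^ q = x) :
    (S.filter (fun x => x ^ 2 = (0:K))).card = 1 := by
  have h0S : (0 : K) ∈ S := (hS 0).mpr (zero_pow (by omega))
  have h : S.filter (fun x => x ^ 2 = (0:K)) = {0} := by
    ext x
    simp only [Finset.mem_filter, Finset.mem_singleton]
    constructor
    · rintro ⟨_, h⟩; exact pow_eq_zero_iff (by norm_num) |>.mp h
    · rintro rfl; exact ⟨h0S, by simp⟩
  rw [h, Finset.card_singleton]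

lemma aux_fiber_two [DecidableEq K] (h2K : (2:K) ≠ 0)
    (S : Finset K) (hS : ∀ x : K, x ∈ S ↔ x ^ q = x)
    (hneg : ∀ x : K, (-x) ^ q = -(x ^ q))
    (v : K) (hv0 : v ≠ 0) (hsq : ∃ y : K, y ^ q = y ∧ y ^ 2 = v) :
    (S.filter (fun x => x ^ 2 = v)).card = 2 := by
  obtain ⟨y, hyq, hy2⟩ := hsq
  have hy0 : y ≠ 0 := by rintro rfl; simp at hy2; exact hv0 hy2.symm
  have hyne : y ≠ -y := by
    intro h
    apply hy0
    have h5 : (2:K) * y = 0 := by linear_combination h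
    exact (mul_eq_zero.mp h5).resolve_left h2K
  have h : S.filter (fun x => x ^ 2 = v) = {y, -y} := by
    ext x
    simp only [Finset.mem_filter, Finset.mem_insert, Finset.mem_singleton]
    constructor
    · rintro ⟨_, h⟩
      have h3 : (x - y) * (x + y) = 0 := by linear_combination h - hy2
      rcases mul_eq_zero.mp h3 with h4 | h4
      · left; exact sub_eq_zero.mp h4
      · right; exact eq_neg_of_add_eq_zero_left h4
    · rintro (rfl | rfl)
      · exact ⟨(hS _).mpr hyq, hy2⟩
      · refine ⟨(hS _).mpr (by rw [hneg, hyq]), by rw [neg_pow, hy2]; simp⟩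
  rw [h, Finset.card_insert_of_notMem (by simpa using hyne), Finset.card_singleton]

lemma aux_fiber_none [DecidableEq K]
    (S : Finset K) (hS : ∀ x : K, x ∈ S ↔ x ^ q = x)
    (v : K) (hsq : ¬ ∃ y : K, y ^ q = y ∧ y ^ 2 = v) :
    (S.filter (fun x => x ^ 2 = v)).card = 0 := by
  rw [Finset.card_eq_zero]
  ext x
  simp only [Finset.mem_filter, Finset.notMem_empty, iff_false, not_and]
  intro hxS hx2
  exact hsq ⟨x, (hS x).mp hxS, hx2⟩

section PsiS

variable {q : ℕ} {K : Type} [Field K] [Fintype K]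
variable (S : Finset K) (ψ : K → ℂ)

lemma aux_sum_psi_zero (hS : ∀ x : K, x ∈ S ↔ x ^ q = x) (hψa : ∀ u v : K, ψ (u + v) = ψ u * ψ v)
    (hfa : ∀ x y : K, (x + y) ^ q = x ^ q + y ^ q)
    (hneg : ∀ x : K, (-x) ^ q = -(x ^ q))
    (u0 : K) (hu0S : u0 ^ q = u0) (hu0 : ψ u0 ≠ 1) :
    ∑ u ∈ S, ψ u = 0 := by
  have h1 : ∑ u ∈ S, ψ (u0 + u) = ∑ u ∈ S, ψ u := by
    apply Finset.sum_nbij' (fun u => u0 + u) (fun u => u - u0)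
    · intro a ha
      exact (hS _).mpr (by rw [hfa, hu0S, (hS a).mp ha])
    · intro a ha
      refine (hS _).mpr ?_
      rw [sub_eq_add_neg, hfa, hneg, hu0S, (hS a).mp ha, ← sub_eq_add_neg]
    · intro a _; ring
    · intro a _; ring
    · intro a _; rfl
  have h2 : ∑ u ∈ S, ψ (u0 + u) = ψ u0 * ∑ u ∈ S, ψ u := by
    rw [Finset.mul_sum]
    exact Finset.sum_congr rfl (fun u _ => hψa u0 u)
  have h3 : (ψ u0 - 1) * ∑ u ∈ S, ψ u = 0 := by
    linear_combination h2.symm.trans h1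
  exact (mul_eq_zero.mp h3).resolve_left (sub_ne_zero.mpr hu0)

lemma aux_sum_psi_lin (hS : ∀ x : K, x ∈ S ↔ x ^ q = x) (hψa : ∀ u v : K, ψ (u + v) = ψ u * ψ v)
    (hfa : ∀ x y : K, (x + y) ^ q = x ^ q + y ^ q)
    (hneg : ∀ x : K, (-x) ^ q = -(x ^ q))
    (u0 : K) (hu0S : u0 ^ q = u0) (hu0 : ψ u0 ≠ 1)
    (s : K) (hsq : s ^ q = s) (hs0 : s ≠ 0) :
    ∑ t ∈ S, ψ (s * t) = 0 := by
  have h1 : ∑ t ∈ S, ψ (s * t) = ∑ t ∈ S, ψ t := by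
    apply Finset.sum_nbij' (fun t => s * t) (fun t => t / s)
    · intro a ha
      exact (hS _).mpr (by rw [mul_pow, hsq, (hS a).mp ha])
    · intro a ha
      exact (hS _).mpr (by rw [div_pow, hsq, (hS a).mp ha])
    · intro a _; exact mul_div_cancel_left₀ a hs0
    · intro a _; exact mul_div_cancel₀ a hs0
    · intro a _; rfl
  rw [h1]
  exact aux_sum_psi_zero S ψ hS hψa hfa hneg u0 hu0S hu0

lemma aux_sum_psi_sq (hS : ∀ x : K, x ∈ S ↔ x ^ q = x) (s : K) (hsq : s ^ q = s) (hs0 : s ≠ 0) :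
    ∑ x ∈ S, ψ (s ^ 2 * x ^ 2) = ∑ x ∈ S, ψ (x ^ 2) := by
  apply Finset.sum_nbij' (fun x => s * x) (fun x => x / s)
  · intro a ha
    exact (hS _).mpr (by rw [mul_pow, hsq, (hS a).mp ha])
  · intro a ha
    exact (hS _).mpr (by rw [div_pow, hsq, (hS a).mp ha])
  · intro a _; exact mul_div_cancel_left₀ a hs0
  · intro a _; exact mul_div_cancel₀ a hs0
  · intro a _; rw [mul_pow]

lemma aux_sum_psi_nonsq (hS : ∀ x : K, x ∈ S ↔ x ^ q = x) (hq3 : 3 ≤ q) (hodd : Odd q) (hScard : S.card = q)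
    (h2K : (2:K) ≠ 0) (h1K : (1:K) ≠ -1)
    (hψa : ∀ u v : K, ψ (u + v) = ψ u * ψ v)
    (hfa : ∀ x y : K, (x + y) ^ q = x ^ q + y ^ q)
    (hneg : ∀ x : K, (-x) ^ q = -(x ^ q))
    (u0 : K) (hu0S : u0 ^ q = u0) (hu0 : ψ u0 ≠ 1)
    (a : K) (ha : a ^ q = a) (ha0 : a ≠ 0)
    (hans : ¬ ∃ y : K, y ^ q = y ∧ y ^ 2 = a) :
    ∑ x ∈ S, ψ (a * x ^ 2) = - ∑ x ∈ S, ψ (x ^ 2) := by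
  classical
  have hmaps : ∀ x ∈ S, x ^ 2 ∈ S := by
    intro x hx
    exact (hS _).mpr (by rw [← pow_mul, mul_comm 2 q, pow_mul, (hS x).mp hx])
  have hae : a ^ ((q-1)/2) = -1 := by
    rcases aux_dichotomy (q := q) (by omega) hodd a ha ha0 with h | h
    · exact absurd ((aux_sq_iff hq3 hodd S hS hScard a ha ha0).mpr h) hans
    · exact h
  have hcnt : ∀ v : K, v ^ q = v →
      ((S.filter (fun x => x ^ 2 = v / a)).card + (S.filter (fun x => x ^ 2 = v)).card) = 2 := by
    intro v hv
    by_cases hv0 : v = 0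
    · subst hv0
      rw [zero_div, aux_fiber_zero (q := q) (by omega) S hS]
    · have hva : v / a ≠ 0 := div_ne_zero hv0 ha0
      have hvaq : (v / a) ^ q = v / a := by rw [div_pow, hv, ha]
      rcases aux_dichotomy (q := q) (by omega) hodd v hv hv0 with h | h
      · have hsqv : ∃ y : K, y ^ q = y ∧ y ^ 2 = v :=
          (aux_sq_iff hq3 hodd S hS hScard v hv hv0).mpr h
        have hnsva : ¬ ∃ y : K, y ^ q = y ∧ y ^ 2 = v / a := by
          intro hc
          have := (aux_sq_iff hq3 hodd S hS hScard _ hvaq hva).mp hc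
          rw [div_pow, h, hae] at this
          rw [div_neg, div_one] at this
          exact h1K this.symm
        rw [aux_fiber_none S hS _ hnsva, aux_fiber_two h2K S hS hneg v hv0 hsqv]
      · have hnsv : ¬ ∃ y : K, y ^ q = y ∧ y ^ 2 = v := by
          intro hc
          have h8 := (aux_sq_iff hq3 hodd S hS hScard v hv hv0).mp hc
          rw [h8] at h
          exact h1K h
        have hsva : ∃ y : K, y ^ q = y ∧ y ^ 2 = v / a := by
          apply (aux_sq_iff hq3 hodd S hS hScard _ hvaq hva).mpr
          rw [div_pow, h, hae, neg_div_neg_eq, one_div_one]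
        rw [aux_fiber_none S hS _ hnsv, aux_fiber_two h2K S hS hneg _ hva hsva]
  have hA : ∑ x ∈ S, ψ (a * x ^ 2)
      = ∑ v ∈ S, ((S.filter (fun x => x ^ 2 = v)).card : ℂ) * ψ (a * v) := by
    rw [← Finset.sum_fiberwise_of_maps_to hmaps (fun x => ψ (a * x ^ 2))]
    apply Finset.sum_congr rfl
    intro v _
    rw [Finset.sum_congr rfl (fun x hx => by
      rw [(Finset.mem_filter.mp hx).2] : ∀ x ∈ S.filter (fun x => x ^ 2 = v),
        ψ (a * x ^ 2) = ψ (a * v)), Finset.sum_const, nsmul_eq_mul]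
  have hB : ∑ x ∈ S, ψ (x ^ 2)
      = ∑ v ∈ S, ((S.filter (fun x => x ^ 2 = v)).card : ℂ) * ψ v := by
    rw [← Finset.sum_fiberwise_of_maps_to hmaps (fun x => ψ (x ^ 2))]
    apply Finset.sum_congr rfl
    intro v _
    rw [Finset.sum_congr rfl (fun x hx => by
      rw [(Finset.mem_filter.mp hx).2] : ∀ x ∈ S.filter (fun x => x ^ 2 = v),
        ψ (x ^ 2) = ψ v), Finset.sum_const, nsmul_eq_mul]
  have hA2 : ∑ v ∈ S, ((S.filter (fun x => x ^ 2 = v)).card : ℂ) * ψ (a * v)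
      = ∑ w ∈ S, ((S.filter (fun x => x ^ 2 = w / a)).card : ℂ) * ψ w := by
    apply Finset.sum_nbij' (fun v => a * v) (fun w => w / a)
    · intro v hv
      exact (hS _).mpr (by rw [mul_pow, ha, (hS v).mp hv])
    · intro w hw
      exact (hS _).mpr (by rw [div_pow, ha, (hS w).mp hw])
    · intro v _; exact mul_div_cancel_left₀ v ha0
    · intro v _; exact mul_div_cancel₀ v ha0
    · intro v _
      rw [mul_div_cancel_left₀ v ha0]
  have hsum0 : ∑ u ∈ S, ψ u = 0 := aux_sum_psi_zero S ψ hS hψa hfa hneg u0 hu0S hu0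
  have htot : ∑ x ∈ S, ψ (a * x ^ 2) + ∑ x ∈ S, ψ (x ^ 2) = 0 := by
    rw [hA, hB, hA2, ← Finset.sum_add_distrib]
    have : ∀ w ∈ S, ((S.filter (fun x => x ^ 2 = w / a)).card : ℂ) * ψ w
        + ((S.filter (fun x => x ^ 2 = w)).card : ℂ) * ψ w = 2 * ψ w := by
      intro w hw
      have := hcnt w ((hS w).mp hw)
      have hcast : ((S.filter (fun x => x ^ 2 = w / a)).card : ℂ)
          + ((S.filter (fun x => x ^ 2 = w)).card : ℂ) = 2 := by
        exact_mod_cast congrArg (Nat.cast : ℕ → ℂ) this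
      linear_combination ψ w * hcast
    rw [Finset.sum_congr rfl this, ← Finset.mul_sum, hsum0, mul_zero]
  linear_combination htot

lemma aux_G_sq (hS : ∀ x : K, x ∈ S ↔ x ^ q = x)
    (hψa : ∀ u v : K, ψ (u + v) = ψ u * ψ v) (hψ0 : ψ 0 = 1)
    (hfa : ∀ x y : K, (x + y) ^ q = x ^ q + y ^ q)
    (hneg : ∀ x : K, (-x) ^ q = -(x ^ q))
    (h2K : (2:K) ≠ 0) (h2q : (2:K) ^ q = 2) (hq0 : q ≠ 0)
    (u0 : K) (hu0S : u0 ^ q = u0) (hu0 : ψ u0 ≠ 1) :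
    (∑ x ∈ S, ψ (x ^ 2)) * (∑ y ∈ S, ψ (-(y ^ 2))) = (S.card : ℂ) := by
  classical
  have hsub : ∀ x y : K, (x - y) ^ q = x ^ q - y ^ q := fun x y => by
    rw [sub_eq_add_neg, hfa, hneg, ← sub_eq_add_neg]
  have h1 : (∑ x ∈ S, ψ (x ^ 2)) * (∑ y ∈ S, ψ (-(y ^ 2)))
      = ∑ z ∈ S ×ˢ S, ψ (z.1 ^ 2 - z.2 ^ 2) := by
    rw [Finset.sum_mul_sum, Finset.sum_product]
    apply Finset.sum_congr rfl
    intro x _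
    apply Finset.sum_congr rfl
    intro y _
    rw [← hψa]
    congr 1
    ring
  have h2 : ∑ z ∈ S ×ˢ S, ψ (z.1 ^ 2 - z.2 ^ 2) = ∑ z ∈ S ×ˢ S, ψ (z.1 * z.2) := by
    apply Finset.sum_nbij' (fun z => (z.1 + z.2, z.1 - z.2))
      (fun z => ((z.1 + z.2) / 2, (z.1 - z.2) / 2))
    · intro z hz
      rw [Finset.mem_product] at hz ⊢
      obtain ⟨hx, hy⟩ := hz
      rw [hS] at hx hy
      constructor
      · exact (hS _).mpr (by rw [hfa, hx, hy])
      · exact (hS _).mpr (by rw [hsub, hx, hy])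
    · intro z hz
      rw [Finset.mem_product] at hz ⊢
      obtain ⟨hx, hy⟩ := hz
      rw [hS] at hx hy
      constructor
      · exact (hS _).mpr (by rw [div_pow, hfa, hx, hy, h2q])
      · exact (hS _).mpr (by rw [div_pow, hsub, hx, hy, h2q])
    · intro z _
      have e1 : (z.1 + z.2 + (z.1 - z.2)) / 2 = z.1 := by field_simp; ring
      have e2 : (z.1 + z.2 - (z.1 - z.2)) / 2 = z.2 := by field_simp; ring
      simp only [e1, e2]
    · intro z _
      have e1 : (z.1 + z.2) / 2 + (z.1 - z.2) / 2 = z.1 := by field_simp; ring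
      have e2 : (z.1 + z.2) / 2 - (z.1 - z.2) / 2 = z.2 := by field_simp; ring
      simp only [e1, e2]
    · intro z _
      congr 1
      ring
  have h0S : (0 : K) ∈ S := (hS 0).mpr (zero_pow hq0)
  have h3 : ∑ z ∈ S ×ˢ S, ψ (z.1 * z.2) = (S.card : ℂ) := by
    rw [Finset.sum_product]
    have hin : ∀ s ∈ S, ∑ t ∈ S, ψ (s * t) = if s = 0 then (S.card : ℂ) else 0 := by
      intro s hs
      by_cases h : s = 0
      · subst h
        rw [if_pos rfl]
        have : ∀ t ∈ S, ψ ((0:K) * t) = 1 := fun t _ => by rw [zero_mul, hψ0]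
        rw [Finset.sum_congr rfl this, Finset.sum_const, nsmul_eq_mul, mul_one]
      · rw [if_neg h]
        exact aux_sum_psi_lin S ψ hS hψa hfa hneg u0 hu0S hu0 s ((hS s).mp hs) h
    rw [Finset.sum_congr rfl hin, Finset.sum_ite_eq' S (0:K) (fun _ => (S.card : ℂ))]
    rw [if_pos h0S]
  rw [h1, h2, h3]

lemma aux_quad_sum (hS : ∀ x : K, x ∈ S ↔ x ^ q = x)
    (hq3 : 3 ≤ q) (hodd : Odd q) (hScard : S.card = q)
    (hψa : ∀ u v : K, ψ (u + v) = ψ u * ψ v) (hψ0 : ψ 0 = 1)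
    (hfa : ∀ x y : K, (x + y) ^ q = x ^ q + y ^ q)
    (hneg : ∀ x : K, (-x) ^ q = -(x ^ q))
    (h2K : (2:K) ≠ 0) (h1K : (1:K) ≠ -1) (h2q : (2:K) ^ q = 2)
    (u0 : K) (hu0S : u0 ^ q = u0) (hu0 : ψ u0 ≠ 1)
    (a b c d D : K) (haS : a ^ q = a) (hbS : b ^ q = b) (hcS : c ^ q = c)
    (hdS : d ^ q = d) (hDS : D ^ q = D)
    (hD0 : D ≠ 0) (hd0 : d ≠ 0) (hdns : ¬ ∃ y : K, y ^ q = y ∧ y ^ 2 = d)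
    (hdisc : c ^ 2 - 4 * (a * b) = 4 * (d * D))
    (ε : ℂ)
    (hε : ((∃ y : K, y ^ q = y ∧ y ^ 2 = D) ∧ ε = 1)
        ∨ ((¬ ∃ y : K, y ^ q = y ∧ y ^ 2 = D) ∧ ε = -1)) :
    ∑ z ∈ S ×ˢ S, ψ (a * z.1 ^ 2 + c * (z.1 * z.2) + b * z.2 ^ 2)
      = -ε * (S.card : ℂ) := by
  classical
  have hq0 : q ≠ 0 := by omega
  have h4K : (4:K) ≠ 0 := by
    have : (4:K) = 2 * 2 := by norm_num
    rw [this]; exact mul_ne_zero h2K h2K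
  set E : K → ℂ := fun v => if v ^ ((q-1)/2) = 1 then (1:ℂ) else -1 with hE
  have hEval : ∀ v : K, v ^ q = v → v ≠ 0 →
      (E v = 1 ∧ v ^ ((q-1)/2) = 1 ∧ (∃ y : K, y ^ q = y ∧ y ^ 2 = v))
      ∨ (E v = -1 ∧ v ^ ((q-1)/2) = -1 ∧ ¬(∃ y : K, y ^ q = y ∧ y ^ 2 = v)) := by
    intro v hv h0
    rcases aux_dichotomy (q := q) (by omega) hodd v hv h0 with h | h
    · left
      exact ⟨by simp only [hE]; rw [if_pos h],
        h, (aux_sq_iff hq3 hodd S hS hScard v hv h0).mpr h⟩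
    · right
      have hne : ¬ (v ^ ((q-1)/2) = 1) := fun hc => h1K (hc.symm.trans h)
      exact ⟨by simp only [hE]; rw [if_neg hne],
        h, fun hsq => h1K (((aux_sq_iff hq3 hodd S hS hScard v hv h0).mp hsq).symm.trans h)⟩
  have hEmul : ∀ u v : K, u ^ q = u → v ^ q = v → u ≠ 0 → v ≠ 0 →
      E (u * v) = E u * E v := by
    intro u v huq hvq hu0' hv0'
    have hm : (u * v) ^ ((q-1)/2) = u ^ ((q-1)/2) * v ^ ((q-1)/2) := mul_pow _ _ _
    have huvq : (u * v) ^ q = u * v := by rw [mul_pow, huq, hvq]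
    have huv0 : u * v ≠ 0 := mul_ne_zero hu0' hv0'
    rcases hEval u huq hu0' with ⟨h1, h2, _⟩ | ⟨h1, h2, _⟩ <;>
      rcases hEval v hvq hv0' with ⟨g1, g2, _⟩ | ⟨g1, g2, _⟩ <;>
      rcases hEval (u * v) huvq huv0 with ⟨k1, k2, _⟩ | ⟨k1, k2, _⟩ <;>
      rw [h2, g2] at hm <;> rw [k2] at hm <;> rw [h1, g1, k1] <;>
      first
        | (exact absurd (by linear_combination hm) h1K)
        | (exact absurd (by linear_combination -hm) h1K)
        | norm_num
  have hPsum : ∀ v : K, v ^ q = v → v ≠ 0 →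
      ∑ x ∈ S, ψ (v * x ^ 2) = E v * ∑ x ∈ S, ψ (x ^ 2) := by
    intro v hv h0
    rcases hEval v hv h0 with ⟨h1, _, hsq⟩ | ⟨h1, _, hsq⟩
    · obtain ⟨s, hsq', hs2⟩ := hsq
      have hs0 : s ≠ 0 := by rintro rfl; simp at hs2; exact h0 hs2.symm
      rw [h1, one_mul, ← hs2]
      exact aux_sum_psi_sq S ψ hS s hsq' hs0
    · rw [h1, aux_sum_psi_nonsq S ψ hS hq3 hodd hScard h2K h1K hψa hfa hneg
        u0 hu0S hu0 v hv h0 hsq]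
      ring
  set G := ∑ x ∈ S, ψ (x ^ 2) with hG
  have hm1S : (-1:K) ^ q = -1 := by rw [hneg, one_pow]
  have hm10 : (-1:K) ≠ 0 := by norm_num
  have hGG : G * G = E (-1) * (S.card : ℂ) := by
    have h4 := aux_G_sq S ψ hS hψa hψ0 hfa hneg h2K h2q hq0 u0 hu0S hu0
    have h5 : ∑ y ∈ S, ψ (-(y ^ 2)) = E (-1) * G := by
      have hc : ∀ y ∈ S, ψ (-(y ^ 2)) = ψ ((-1) * y ^ 2) := by
        intro y _; congr 1; ring
      rw [Finset.sum_congr rfl hc]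
      exact hPsum (-1) hm1S hm10
    rw [h5] at h4
    rcases hEval (-1) hm1S hm10 with ⟨h1, _, _⟩ | ⟨h1, _, _⟩ <;> rw [h1] at h4 ⊢ <;>
      first
        | linear_combination h4
        | linear_combination -h4
  have hED : E D = ε := by
    rcases hε with ⟨hsq, hev⟩ | ⟨hsq, hev⟩ <;>
      rcases hEval D hDS hD0 with ⟨h1, _, h3⟩ | ⟨h1, _, h3⟩
    · rw [h1, hev]
    · exact absurd hsq h3
    · exact absurd h3 (by simpa using hsq)
    · rw [h1, hev]
  have hEd : E d = -1 := by
    rcases hEval d hdS hd0 with ⟨_, _, h3⟩ | ⟨h1, _, _⟩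
    · exact absurd h3 hdns
    · exact h1
  have h0S : (0:K) ∈ S := (hS 0).mpr (zero_pow hq0)
  by_cases ha0 : a = 0
  · subst ha0
    -- linear in x case
    have hc0 : c ≠ 0 := by
      intro h
      rw [h] at hdisc
      have h6 : (4:K) * (d * D) = 0 := by linear_combination -hdisc
      exact (mul_ne_zero h4K (mul_ne_zero hd0 hD0)) h6
    have hDns : ¬ ∃ y : K, y ^ q = y ∧ y ^ 2 = D := by
      rintro ⟨y, hyq, hy2⟩
      have hy0 : y ≠ 0 := by rintro rfl; simp at hy2; exact hD0 hy2.symm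
      apply hdns
      refine ⟨c / (2 * y), by rw [div_pow, hcS, mul_pow, h2q, hyq], ?_⟩
      have h7 : c ^ 2 = 4 * (d * D) := by linear_combination hdisc
      rw [div_pow, h7, ← hy2]
      field_simp
      ring
    have hεm1 : ε = -1 := by
      rcases hε with ⟨hsq, _⟩ | ⟨_, hev⟩
      · exact absurd hsq hDns
      · exact hev
    rw [hεm1]
    rw [Finset.sum_product, Finset.sum_comm]
    have hin : ∀ y ∈ S, (∑ x ∈ S, ψ (0 * x ^ 2 + c * (x * y) + b * y ^ 2))
        = if y = 0 then (S.card : ℂ) else 0 := by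
      intro y hy
      by_cases hy0 : y = 0
      · subst hy0
        rw [if_pos rfl]
        have hone : ∀ x ∈ S, ψ (0 * x ^ 2 + c * (x * 0) + b * 0 ^ 2) = 1 := by
          intro x _
          rw [show (0:K) * x ^ 2 + c * (x * 0) + b * 0 ^ 2 = 0 by ring, hψ0]
        rw [Finset.sum_congr rfl hone, Finset.sum_const, nsmul_eq_mul, mul_one]
      · rw [if_neg hy0]
        have hsplit : ∀ x ∈ S, ψ (0 * x ^ 2 + c * (x * y) + b * y ^ 2)
            = ψ ((c * y) * x) * ψ (b * y ^ 2) := by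
          intro x _
          rw [← hψa]
          congr 1
          ring
        rw [Finset.sum_congr rfl hsplit, ← Finset.sum_mul]
        rw [aux_sum_psi_lin S ψ hS hψa hfa hneg u0 hu0S hu0 (c * y)
          (by rw [mul_pow, hcS, (hS y).mp hy]) (mul_ne_zero hc0 hy0), zero_mul]
    rw [Finset.sum_congr rfl hin, Finset.sum_ite_eq' S (0:K) (fun _ => (S.card : ℂ)),
      if_pos h0S]
    ring
  · -- a ≠ 0 : complete the square
    set k := c / (2 * a) with hk
    set f := b - c ^ 2 / (4 * a) with hf
    have hkS : k ^ q = k := by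
      rw [hk, div_pow, hcS, mul_pow, h2q, haS]
    have hc2q : (c ^ 2) ^ q = c ^ 2 := by
      rw [← pow_mul, mul_comm 2 q, pow_mul, hcS]
    have h4aq : ((4:K) * a) ^ q = 4 * a := by
      rw [mul_pow, haS, show (4:K) = 2 * 2 by norm_num, mul_pow, h2q]
    have hfS : f ^ q = f := by
      rw [hf, sub_eq_add_neg, hfa, hneg, div_pow, hc2q, h4aq, hbS, ← sub_eq_add_neg]
    have hfval : f = -(d * D) / a := by
      rw [hf]
      field_simp
      linear_combination (-1 : K) * hdisc
    have hf0 : f ≠ 0 := by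
      rw [hfval]
      exact div_ne_zero (neg_ne_zero.mpr (mul_ne_zero hd0 hD0)) ha0
    have heq : ∀ x y : K, a * x ^ 2 + c * (x * y) + b * y ^ 2
        = a * (x + k * y) ^ 2 + f * y ^ 2 := by
      intro x y
      rw [hk, hf]
      field_simp
      ring
    rw [Finset.sum_product, Finset.sum_comm]
    have hin : ∀ y ∈ S, (∑ x ∈ S, ψ (a * x ^ 2 + c * (x * y) + b * y ^ 2))
        = (E a * G) * ψ (f * y ^ 2) := by
      intro y hy
      have hyS := (hS y).mp hy
      have hky : (k * y) ^ q = k * y := by rw [mul_pow, hkS, hyS]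
      have step1 : ∑ x ∈ S, ψ (a * x ^ 2 + c * (x * y) + b * y ^ 2)
          = ∑ x ∈ S, ψ (a * x ^ 2 + f * y ^ 2) := by
        rw [Finset.sum_congr rfl (fun x _ => by rw [heq x y])]
        apply Finset.sum_nbij' (fun x => x + k * y) (fun x => x - k * y)
        · intro x hx
          exact (hS _).mpr (by rw [hfa, (hS x).mp hx, hky])
        · intro x hx
          refine (hS _).mpr ?_
          rw [sub_eq_add_neg, hfa, hneg, (hS x).mp hx, hky, ← sub_eq_add_neg]
        · intro x _; ring
        · intro x _; ring
        · intro x _; rfl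
      rw [step1]
      have step2 : ∀ x ∈ S, ψ (a * x ^ 2 + f * y ^ 2) = ψ (a * x ^ 2) * ψ (f * y ^ 2) := by
        intro x _
        rw [← hψa]
      rw [Finset.sum_congr rfl step2, ← Finset.sum_mul, hPsum a haS ha0]
    rw [Finset.sum_congr rfl hin]
    have step3 : ∑ y ∈ S, (E a * G) * ψ (f * y ^ 2) = (E a * G) * (E f * G) := by
      rw [← Finset.mul_sum, hPsum f hfS hf0]
    rw [step3]
    -- now reduce the E-product
    have haf : a * f = -(d * D) := by
      rw [hfval]
      field_simp
      try ring
    have hEaf : E a * E f = E (a * f) := (hEmul a f haS hfS ha0 hf0).symm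
    have hEm : E (a * f) = E (-1) * E (d * D) := by
      rw [show a * f = (-1) * (d * D) by rw [haf]; ring]
      exact hEmul (-1) (d * D) hm1S (by rw [mul_pow, hdS, hDS]) hm10
        (mul_ne_zero hd0 hD0)
    have hEdD : E (d * D) = E d * E D := hEmul d D hdS hDS hd0 hD0
    have hE1sq : E (-1) * E (-1) = 1 := by
      rcases hEval (-1) hm1S hm10 with ⟨h1, _, _⟩ | ⟨h1, _, _⟩ <;> rw [h1] <;> norm_num
    calc (E a * G) * (E f * G) = (E a * E f) * (G * G) := by ring
      _ = (E (-1) * (E d * E D)) * (E (-1) * (S.card : ℂ)) := by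
          rw [hEaf, hEm, hEdD, hGG]
      _ = (E (-1) * E (-1)) * (E d * E D) * (S.card : ℂ) := by ring
      _ = -ε * (S.card : ℂ) := by rw [hE1sq, hEd, hED]; ring

end PsiS

lemma aux_tr_ne {p n q : ℕ} {K : Type} [Field K] [Fintype K] [Fact p.Prime] [CharP K p]
    (hn : 0 < n) (hq : q = p ^ n) (hK : Fintype.card K = q ^ 2) :
    ∃ z : K, trP p (2 * n) z ≠ 0 := by
  classical
  have hp := (Fact.out : p.Prime)
  have hp2 := hp.two_le
  by_contra h
  push_neg at h
  set g : Polynomial K := ∑ i ∈ Finset.range (2 * n), Polynomial.X ^ (p ^ i) with hg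
  have hcoeff : g.coeff 1 = 1 := by
    rw [hg, Polynomial.finset_sum_coeff]
    rw [Finset.sum_eq_single_of_mem 0 (Finset.mem_range.mpr (by omega))]
    · simp
    · intro i _ hi0
      rw [Polynomial.coeff_X_pow]
      have hpi : p ≤ p ^ i := by
        calc p = p ^ 1 := (pow_one p).symm
          _ ≤ p ^ i := Nat.pow_le_pow_right (by omega) (by omega)
      rw [if_neg (by omega)]
  have hgne : g ≠ 0 := fun h0 => by simp [h0] at hcoeff
  have hdeg : g.natDegree ≤ p ^ (2 * n - 1) := by
    rw [hg]
    apply Polynomial.natDegree_sum_le_of_forall_le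
    intro i hi
    rw [Polynomial.natDegree_X_pow]
    have hile : i ≤ 2 * n - 1 := by
      have := Finset.mem_range.mp hi
      omega
    exact Nat.pow_le_pow_right (by omega) hile
  have hall : ((univ : Finset K).filter (fun x => g.eval x = 0)) = univ := by
    apply Finset.eq_univ_of_forall
    intro x
    simp only [Finset.mem_filter, Finset.mem_univ, true_and]
    have : g.eval x = trP p (2 * n) x := by
      rw [hg, Polynomial.eval_finset_sum]
      unfold trP
      exact Finset.sum_congr rfl (fun i _ => by rw [Polynomial.eval_pow, Polynomial.eval_X])
    rw [this, h x]
  have hcard := aux_card_roots g hgne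
  rw [hall, Finset.card_univ, hK] at hcard
  have hlt : p ^ (2 * n - 1) < p ^ (2 * n) := Nat.pow_lt_pow_right (by omega) (by omega)
  have hq2n : q ^ 2 = p ^ (2 * n) := by
    rw [hq, ← pow_mul, Nat.mul_comm]
  have hfin : q ^ 2 < q ^ 2 :=
    lt_of_le_of_lt (le_trans hcard hdeg) (by rw [hq2n]; exact hlt)
  exact absurd hfin (lt_irrefl _)


open Finset

/-- Let `A, B, C ∈ F_{q²}` with `B ≠ 0` and `Tr(A)² ≠ 4N(B)`, so
`D = Tr(A)² − 4N(B) ≠ 0`. Then, with `θ = (−Tr(A)·C^q + 2B^q·C)/D`, one has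
`∑_{w ∈ F_{q²}} χ(A·w^{q+1} + B·w² + C·w) = −η(D)·q·χ(−A·θ^{q+1} − B·θ²)`.
Here `K` plays the role of `F_{q²}`, `F_q = {x : K | x^q = x}`, `Tr(x) = x^q + x`,
`N(x) = x^{q+1}`, `χ` is the canonical additive character of `F_{q²}` (via the absolute trace
`∑_{i < 2n} x^(p^i)`), and `η` is the quadratic character of `F_q` extended by `η(0) = 0`. -/
theorem stmt1 (p n q : ℕ) (hp : p.Prime) (hp2 : p ≠ 2) (hn : 0 < n)
    (hq : q = p ^ n)
    (K : Type) [Field K] [Fintype K] (hK : Fintype.card K = q ^ 2)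
    (ζ : ℂ) (hζ : IsPrimitiveRoot ζ p)
    (χ : K → ℂ)
    (hχ : ∀ x : K, ∀ m : ℕ, (m : K) = ∑ i ∈ Finset.range (2 * n), x ^ p ^ i →
      χ x = ζ ^ m)
    (η : K → ℂ) (hη0 : η 0 = 0)
    (hη1 : ∀ x : K, x ≠ 0 → (∃ y : K, y ^ q = y ∧ y ^ 2 = x) → η x = 1)
    (hη2 : ∀ x : K, x ≠ 0 → ¬ (∃ y : K, y ^ q = y ∧ y ^ 2 = x) → η x = -1)
    (A B C : K) (hB : B ≠ 0)
    (hD : (A ^ q + A) ^ 2 - 4 * B ^ (q + 1) ≠ 0)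
    (θ : K)
    (hθ : θ = (-(A ^ q + A) * C ^ q + 2 * B ^ q * C) /
      ((A ^ q + A) ^ 2 - 4 * B ^ (q + 1))) :
    ∑ w : K, χ (A * w ^ (q + 1) + B * w ^ 2 + C * w) =
      -η ((A ^ q + A) ^ 2 - 4 * B ^ (q + 1)) * q *
        χ (-A * θ ^ (q + 1) - B * θ ^ 2) := by
  classical
  haveI hfact : Fact p.Prime := ⟨hp⟩
  have hq2n : q ^ 2 = p ^ (2 * n) := by rw [hq, ← pow_mul, Nat.mul_comm]
  have hCharP : CharP K p := by
    obtain ⟨r, hr⟩ := CharP.exists K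
    haveI := hr
    obtain ⟨m0, hrp, hcard⟩ := FiniteField.card K r
    have hrdvd : r ∣ p ^ (2 * n) := by
      rw [← hq2n, ← hK, hcard]
      exact dvd_pow_self r m0.pos.ne'
    have hrp2 : r = p := (Nat.prime_dvd_prime_iff_eq hrp hp).mp (hrp.dvd_of_dvd_pow hrdvd)
    exact hrp2 ▸ hr
  haveI := hCharP
  -- numeric facts
  have hp3 : 3 ≤ p := by have := hp.two_le; omega
  have hq3 : 3 ≤ q := le_trans hp3 (by rw [hq]; exact Nat.le_self_pow hn.ne' p)
  have hq0 : q ≠ 0 := by omega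
  have hoddq : Odd q := by rw [hq]; exact (hp.odd_of_ne_two hp2).pow
  have hfa : ∀ x y : K, (x + y) ^ q = x ^ q + y ^ q := by
    intro x y; rw [hq]; exact add_pow_char_pow x y p n
  have hff : ∀ x : K, (x ^ q) ^ q = x := by
    intro x
    rw [← pow_mul]
    have hqq : q * q = Fintype.card K := by rw [hK, sq]
    rw [hqq, FiniteField.pow_card]
  have hneg : ∀ x : K, (-x) ^ q = -(x ^ q) := fun x => hoddq.neg_pow x
  have hsub : ∀ x y : K, (x - y) ^ q = x ^ q - y ^ q := fun x y => by
    rw [sub_eq_add_neg, hfa, hneg, ← sub_eq_add_neg]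
  have hnat : ∀ m : ℕ, ((m : K)) ^ q = m := by
    intro m; rw [hq]; exact natCast_frob m
  have h2q : (2 : K) ^ q = 2 := by
    have h := hnat 2; push_cast at h; exact h
  have h4q : (4 : K) ^ q = 4 := by
    have h := hnat 4; push_cast at h; exact h
  have h2K : (2 : K) ≠ 0 := by
    intro h
    have h2 : ((2 : ℕ) : K) = 0 := by push_cast; exact h
    have h3 := (CharP.cast_eq_zero_iff K p 2).mp h2
    have h4 := Nat.le_of_dvd (by norm_num) h3
    omega
  have h1K : (1 : K) ≠ -1 := by
    intro h; apply h2K; linear_combination h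
  -- character machinery
  have chiM : ∀ x : K, ∃ m : ℕ, (m : K) = trP p (2 * n) x ∧ χ x = ζ ^ m := by
    intro x
    obtain ⟨m, _, hmx⟩ := exists_cast (trP p (2 * n) x) (trP_fix hq hK x)
    exact ⟨m, hmx, hχ x m hmx⟩
  have zeta_eq : ∀ m m' : ℕ, (m : K) = (m' : K) → ζ ^ m = ζ ^ m' := by
    intro m m' hmm
    have hmod := (CharP.natCast_eq_natCast K p).mp hmm
    have h1 : ∀ a : ℕ, ζ ^ a = ζ ^ (a % p) := by
      intro a
      conv_lhs => rw [← Nat.div_add_mod a p]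
      rw [pow_add, pow_mul, hζ.pow_eq_one, one_pow, one_mul]
    rw [h1 m, h1 m']
    exact congrArg (fun t => ζ ^ t) hmod
  have chi_eq : ∀ x y : K, trP p (2 * n) x = trP p (2 * n) y → χ x = χ y := by
    intro x y h
    obtain ⟨m, hm1, hm2⟩ := chiM x
    obtain ⟨m', hm1', hm2'⟩ := chiM y
    rw [hm2, hm2']
    exact zeta_eq _ _ (by rw [hm1, hm1', h])
  have chi_add : ∀ x y : K, χ (x + y) = χ x * χ y := by
    intro x y
    obtain ⟨m, hm1, hm2⟩ := chiM x
    obtain ⟨m', hm1', hm2'⟩ := chiM y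
    obtain ⟨m'', hm1'', hm2''⟩ := chiM (x + y)
    rw [hm2, hm2', hm2'', ← pow_add]
    apply zeta_eq
    rw [Nat.cast_add, hm1, hm1', hm1'', trP_add]
  have chi_zero : χ 0 = 1 := by
    obtain ⟨m, hm1, hm2⟩ := chiM 0
    rw [hm2, zeta_eq m 0 (by rw [hm1, trP_zero hp.pos]; simp), pow_zero]
  have chi_T : ∀ z : K, χ z = χ ((z + z ^ q) / 2) := by
    intro z
    apply chi_eq
    rw [trP_split hq, trP_split hq]
    congr 1
    rw [div_pow, hfa, hff, h2q]
    field_simp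
    ring
  set ψ : K → ℂ := fun u => χ (u / 2) with hψdef
  have hψa : ∀ u v : K, ψ (u + v) = ψ u * ψ v := by
    intro u v
    simp only [hψdef]
    rw [← chi_add]
    congr 1
    ring
  have hψ0 : ψ 0 = 1 := by simp only [hψdef]; rw [zero_div, chi_zero]
  have chi_psi : ∀ z : K, χ z = ψ (z + z ^ q) := by
    intro z
    simp only [hψdef]
    exact chi_T z
  obtain ⟨z0, hz0⟩ := aux_tr_ne hn hq hK
  have hχz0 : χ z0 ≠ 1 := by
    obtain ⟨m, hm1, hm2⟩ := chiM z0
    rw [hm2]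
    intro hone
    exact hz0 (by
      rw [← hm1, (CharP.cast_eq_zero_iff K p m).mpr ((hζ.pow_eq_one_iff_dvd m).mp hone)])
  have hu0S : (z0 + z0 ^ q) ^ q = z0 + z0 ^ q := by rw [hfa, hff]; ring
  have hu0 : ψ (z0 + z0 ^ q) ≠ 1 := by rw [← chi_psi]; exact hχz0
  -- the subfield
  set S : Finset K := univ.filter (fun x => x ^ q = x) with hSdef
  have hS : ∀ x : K, x ∈ S ↔ x ^ q = x := by intro x; simp [hSdef]
  have hScard : S.card = q := aux_card_S (by omega) hK S hS hfa hff hneg h2K h2q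
  -- Frobenius-stability of the data
  have hTAq : (A ^ q + A) ^ q = A ^ q + A := by rw [hfa, hff]; ring
  have hTBq : (B ^ q + B) ^ q = B ^ q + B := by rw [hfa, hff]; ring
  have hNBq : (B ^ (q + 1)) ^ q = B ^ (q + 1) := by
    rw [pow_succ, mul_pow, hff]; ring
  have hDq : ((A ^ q + A) ^ 2 - 4 * B ^ (q + 1)) ^ q
      = (A ^ q + A) ^ 2 - 4 * B ^ (q + 1) := by
    rw [hsub, mul_pow, h4q, hNBq, ← pow_mul, mul_comm 2 q, pow_mul, hTAq]
  -- theta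
  have hθq : θ ^ q = (-(A ^ q + A) * C + 2 * B * C ^ q) /
      ((A ^ q + A) ^ 2 - 4 * B ^ (q + 1)) := by
    rw [hθ, div_pow, hDq, hfa, mul_pow, mul_pow, mul_pow, hneg, hTAq, hff, h2q, hff]
  have hlin : (A ^ q + A) * θ ^ q + 2 * B * θ + C = 0 := by
    rw [hθq, hθ]
    field_simp
    ring
  have hlinq : (A ^ q + A) * θ + 2 * B ^ q * θ ^ q + C ^ q = 0 := by
    have h9 := congrArg (fun t : K => t ^ q) hlin
    rw [hfa, hfa, mul_pow, hTAq, hff, mul_pow, mul_pow, h2q, zero_pow hq0] at h9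
    linear_combination h9
  have hsθ : (θ ^ (q + 1)) ^ q = θ ^ (q + 1) := by
    rw [pow_succ, mul_pow, hff]; ring
  -- step 1 : shift by theta
  have hwθ : ∀ w : K, χ (A * (w + θ) ^ (q + 1) + B * (w + θ) ^ 2 + C * (w + θ))
      = χ (-A * θ ^ (q + 1) - B * θ ^ 2) * χ (A * w ^ (q + 1) + B * w ^ 2) := by
    intro w
    have hexp : A * (w + θ) ^ (q + 1) + B * (w + θ) ^ 2 + C * (w + θ)
        = (A * w ^ (q + 1) + B * w ^ 2) + ((A * (w * θ ^ q + θ * w ^ q)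
          + 2 * B * (θ * w) + C * w) + (A * θ ^ (q + 1) + B * θ ^ 2 + C * θ)) := by
      rw [pow_succ, pow_succ, hfa]
      ring
    rw [hexp, chi_add,
      chi_add (A * (w * θ ^ q + θ * w ^ q) + 2 * B * (θ * w) + C * w)
        (A * θ ^ (q + 1) + B * θ ^ 2 + C * θ)]
    have hL : χ (A * (w * θ ^ q + θ * w ^ q) + 2 * B * (θ * w) + C * w) = 1 := by
      rw [chi_psi]
      have hLq : (A * (w * θ ^ q + θ * w ^ q) + 2 * B * (θ * w) + C * w) +
          (A * (w * θ ^ q + θ * w ^ q) + 2 * B * (θ * w) + C * w) ^ q = 0 := by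
        simp only [hfa, mul_pow, hff, h2q]
        linear_combination w * hlin + w ^ q * hlinq
      rw [hLq, hψ0]
    have hz1 : A * θ ^ (q + 1) + B * θ ^ 2 + C * θ
        = -(A ^ q) * θ ^ (q + 1) - B * θ ^ 2 := by
      linear_combination θ * hlin
    have hZ : χ (A * θ ^ (q + 1) + B * θ ^ 2 + C * θ)
        = χ (-A * θ ^ (q + 1) - B * θ ^ 2) := by
      rw [hz1, chi_psi, chi_psi]
      congr 1
      have e1 : (-(A ^ q) * θ ^ (q + 1) - B * θ ^ 2) ^ q
          = -A * θ ^ (q + 1) - B ^ q * (θ ^ q) ^ 2 := by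
        rw [hsub, mul_pow, mul_pow, hneg, hff, hsθ, ← pow_mul, mul_comm 2 q, pow_mul]
      have e2 : (-A * θ ^ (q + 1) - B * θ ^ 2) ^ q
          = -(A ^ q) * θ ^ (q + 1) - B ^ q * (θ ^ q) ^ 2 := by
        rw [hsub, mul_pow, mul_pow, hneg, hsθ, ← pow_mul, mul_comm 2 q, pow_mul]
      rw [e1, e2]
      ring
    rw [hL, hZ]
    ring
  have hstep1 : ∑ w : K, χ (A * w ^ (q + 1) + B * w ^ 2 + C * w)
      = χ (-A * θ ^ (q + 1) - B * θ ^ 2) * ∑ w : K, χ (A * w ^ (q + 1) + B * w ^ 2) := by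
    have hb := Fintype.sum_equiv (Equiv.addRight θ)
      (fun w : K => χ (A * (w + θ) ^ (q + 1) + B * (w + θ) ^ 2 + C * (w + θ)))
      (fun w : K => χ (A * w ^ (q + 1) + B * w ^ 2 + C * w))
      (fun w => rfl)
    rw [← hb, Finset.mul_sum]
    exact Fintype.sum_congr _ _ (fun w => hwθ w)
  -- step 2 : coordinates
  obtain ⟨c0, hc0⟩ := aux_exists_nonfixed (q := q) (by omega) hK
  set δ : K := c0 ^ q - c0 with hδdef
  have hδq : δ ^ q = -δ := by rw [hδdef, hsub, hff]; ring
  have hδ0 : δ ≠ 0 := sub_ne_zero.mpr hc0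
  have hstep2 : ∑ w : K, χ (A * w ^ (q + 1) + B * w ^ 2)
      = ∑ z ∈ S ×ˢ S, ψ (((A ^ q + A) + (B ^ q + B)) * z.1 ^ 2
          + (2 * δ * (B - B ^ q)) * (z.1 * z.2)
          + (δ ^ 2 * ((B ^ q + B) - (A ^ q + A))) * z.2 ^ 2) := by
    symm
    apply Finset.sum_nbij' (fun z : K × K => z.1 + δ * z.2)
      (fun w => ((w + w ^ q) / 2, (w - w ^ q) / (2 * δ)))
    · intro z _
      exact Finset.mem_univ _
    · intro w _
      rw [Finset.mem_product]
      constructor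
      · exact (hS _).mpr (by rw [div_pow, hfa, hff, h2q, add_comm (w ^ q) w])
      · refine (hS _).mpr ?_
        rw [div_pow, hsub, hff, mul_pow, h2q, hδq,
          show w ^ q - w = -(w - w ^ q) by ring, show (2:K) * -δ = -(2 * δ) by ring,
          neg_div_neg_eq]
    · intro z hz
      rw [Finset.mem_product, hS, hS] at hz
      obtain ⟨hx, hy⟩ := hz
      have hwq : (z.1 + δ * z.2) ^ q = z.1 - δ * z.2 := by
        rw [hfa, mul_pow, hδq, hx, hy]; ring
      rw [hwq]
      have e1 : (z.1 + δ * z.2 + (z.1 - δ * z.2)) / 2 = z.1 := by field_simp; try ring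
      have e2 : (z.1 + δ * z.2 - (z.1 - δ * z.2)) / (2 * δ) = z.2 := by
        field_simp; try ring
      rw [e1, e2]
    · intro w _
      field_simp
      try ring
    · intro z hz
      rw [Finset.mem_product, hS, hS] at hz
      obtain ⟨hx, hy⟩ := hz
      rw [chi_psi]
      congr 1
      simp only [pow_succ, pow_two, mul_pow, hfa, hneg, hδq, hx, hy, hff, neg_neg]
      ring
  -- nonsquare discriminant generator
  have hdns : ¬ ∃ y : K, y ^ q = y ∧ y ^ 2 = δ ^ 2 := by
    rintro ⟨y, hyq, hy2⟩
    have h7 : (y - δ) * (y + δ) = 0 := by linear_combination hy2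
    have hδfix : δ ^ q ≠ δ := by
      rw [hδq]
      intro h8
      apply hδ0
      have h10 : (2:K) * δ = 0 := by linear_combination -h8
      exact (mul_eq_zero.mp h10).resolve_left h2K
    rcases mul_eq_zero.mp h7 with h8 | h8
    · have h9 : y = δ := sub_eq_zero.mp h8
      exact hδfix (h9 ▸ hyq)
    · have h9 : y = -δ := eq_neg_of_add_eq_zero_left h8
      apply hδfix
      have h11 := h9 ▸ hyq
      rw [hneg] at h11
      exact neg_injective h11
  have hdq2 : (δ ^ 2) ^ q = δ ^ 2 := by
    rw [← pow_mul, mul_comm 2 q, pow_mul, hδq]; ring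
  have hd02 : δ ^ 2 ≠ 0 := pow_ne_zero 2 hδ0
  have haS : ((A ^ q + A) + (B ^ q + B)) ^ q = (A ^ q + A) + (B ^ q + B) := by
    rw [hfa, hTAq, hTBq]
  have hcS : (2 * δ * (B - B ^ q)) ^ q = 2 * δ * (B - B ^ q) := by
    rw [mul_pow, mul_pow, h2q, hδq, hsub, hff]
    ring
  have hbS : (δ ^ 2 * ((B ^ q + B) - (A ^ q + A))) ^ q
      = δ ^ 2 * ((B ^ q + B) - (A ^ q + A)) := by
    rw [mul_pow, hdq2, hsub, hTAq, hTBq]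
  have hdisc : (2 * δ * (B - B ^ q)) ^ 2
      - 4 * (((A ^ q + A) + (B ^ q + B)) * (δ ^ 2 * ((B ^ q + B) - (A ^ q + A))))
      = 4 * (δ ^ 2 * ((A ^ q + A) ^ 2 - 4 * B ^ (q + 1))) := by
    ring
  have hε : ((∃ y : K, y ^ q = y ∧ y ^ 2 = ((A ^ q + A) ^ 2 - 4 * B ^ (q + 1)))
        ∧ η ((A ^ q + A) ^ 2 - 4 * B ^ (q + 1)) = 1)
      ∨ ((¬ ∃ y : K, y ^ q = y ∧ y ^ 2 = ((A ^ q + A) ^ 2 - 4 * B ^ (q + 1)))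
        ∧ η ((A ^ q + A) ^ 2 - 4 * B ^ (q + 1)) = -1) := by
    by_cases hd : ∃ y : K, y ^ q = y ∧ y ^ 2 = ((A ^ q + A) ^ 2 - 4 * B ^ (q + 1))
    · exact Or.inl ⟨hd, hη1 _ hD hd⟩
    · exact Or.inr ⟨hd, hη2 _ hD hd⟩
  have hquad := aux_quad_sum S ψ hS hq3 hoddq hScard hψa hψ0 hfa hneg h2K h1K h2q
    (z0 + z0 ^ q) hu0S hu0
    ((A ^ q + A) + (B ^ q + B)) (δ ^ 2 * ((B ^ q + B) - (A ^ q + A)))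
    (2 * δ * (B - B ^ q)) (δ ^ 2)
    ((A ^ q + A) ^ 2 - 4 * B ^ (q + 1)) haS hbS hcS hdq2 hDq hD hd02 hdns hdisc
    (η ((A ^ q + A) ^ 2 - 4 * B ^ (q + 1))) hε
  rw [hstep1, hstep2, hquad, hScard]
  ring
end Sfield
end

section
/- Let A, B, C ∈ F_{q²} with B ≠ 0, and suppose there exists θ ∈ F_{q²} with Tr(A)·θ^q + 2Bθ + C = 0. If Tr(A) = 2B^{(q+1)/2}, then Σ_{w ∈ F_{q²}} χ(A·w^{q+1} + B·w² + C·w) = q·G·χ(−A·θ^{q+1} − B·θ²); and if Tr(A) = −2B^{(q+1)/2}, then Σ_{w ∈ F_{q²}} χ(A·w^{q+1} + B·w² + C·w) = −q·G·χ(−A·θ^{q+1} − B·θ²). -/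
open Finset
open Polynomial
open scoped Classical

/-- Let `A, B, C ∈ F_{q²}` with `B ≠ 0`, and suppose there exists `θ ∈ F_{q²}`
with `Tr(A)·θ^q + 2Bθ + C = 0`. If `Tr(A) = 2B^{(q+1)/2}`, then
`∑_{w} χ(A·w^{q+1} + B·w² + C·w) = q·G·χ(−A·θ^{q+1} − B·θ²)`; and if
`Tr(A) = −2B^{(q+1)/2}`, then the sum equals `−q·G·χ(−A·θ^{q+1} − B·θ²)`.
Here `K` plays the role of `F_{q²}`, `F_q = {x : K | x^q = x}`, `Tr(x) = x^q + x`,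
`χ` is the canonical additive character of `F_{q²}` (via the absolute trace
`∑_{i < 2n} x^(p^i)`), `ψ` the canonical additive character of `F_q` (via the absolute trace
`∑_{i < n} x^(p^i)` on the subfield), `η` the quadratic character of `F_q` (with `η(0)=0`),
and `G = ∑_{u ∈ F_q^*} η(u)ψ(u)` the quadratic Gauss sum of `F_q`. -/
theorem stmt2 (p n q : ℕ) (hp : p.Prime) (hp2 : p ≠ 2) (hn : 0 < n)
    (hq : q = p ^ n)
    (K : Type) [Field K] [Fintype K] (hK : Fintype.card K = q ^ 2)
    (ζ : ℂ) (hζ : IsPrimitiveRoot ζ p)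
    (χ : K → ℂ)
    (hχ : ∀ x : K, ∀ m : ℕ, (m : K) = ∑ i ∈ Finset.range (2 * n), x ^ p ^ i →
      χ x = ζ ^ m)
    (ψ : K → ℂ)
    (hψ : ∀ x : K, x ^ q = x → ∀ m : ℕ, (m : K) = ∑ i ∈ Finset.range n, x ^ p ^ i →
      ψ x = ζ ^ m)
    (η : K → ℂ) (hη0 : η 0 = 0)
    (hη1 : ∀ x : K, x ≠ 0 → (∃ y : K, y ^ q = y ∧ y ^ 2 = x) → η x = 1)
    (hη2 : ∀ x : K, x ≠ 0 → ¬ (∃ y : K, y ^ q = y ∧ y ^ 2 = x) → η x = -1)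
    (G : ℂ)
    (hG : G = ∑ u ∈ Finset.univ.filter (fun u : K => u ^ q = u ∧ u ≠ 0), η u * ψ u)
    (A B C : K) (hB : B ≠ 0)
    (θ : K) (hθ : (A ^ q + A) * θ ^ q + 2 * B * θ + C = 0) :
    (A ^ q + A = 2 * B ^ ((q + 1) / 2) →
      ∑ w : K, χ (A * w ^ (q + 1) + B * w ^ 2 + C * w) =
        q * G * χ (-A * θ ^ (q + 1) - B * θ ^ 2)) ∧
    (A ^ q + A = -(2 * B ^ ((q + 1) / 2)) →
      ∑ w : K, χ (A * w ^ (q + 1) + B * w ^ 2 + C * w) =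
        -(q * G * χ (-A * θ ^ (q + 1) - B * θ ^ 2))) := by
  haveI hfp : Fact p.Prime := ⟨hp⟩
  have hp1 : 1 < p := hp.one_lt
  have hq1 : 1 < q := by
    rw [hq]; exact Nat.one_lt_pow hn.ne' hp1
  have hqodd : Odd q := by
    rw [hq]; exact (hp.odd_of_ne_two hp2).pow
  haveI charK : CharP K p := by
    haveI := ringChar.charP K
    obtain ⟨m, hrp, hcard⟩ := FiniteField.card K (ringChar K)
    have hrpp : ringChar K = p := by
      have h1 : ringChar K ∣ q ^ 2 := by
        rw [← hK, hcard]; exact dvd_pow_self _ (by positivity)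
      rw [hq] at h1
      exact (Nat.prime_dvd_prime_iff_eq hrp hp).mp
        (hrp.dvd_of_dvd_pow (hrp.dvd_of_dvd_pow h1))
    rw [← hrpp]; exact ringChar.charP K
  -- basic field facts
  have two_ne : (2 : K) ≠ 0 := by
    intro h
    have := (CharP.cast_eq_zero_iff K p 2).mp (by exact_mod_cast h)
    have h2 := (Nat.prime_dvd_prime_iff_eq hp Nat.prime_two).mp this
    exact hp2 h2
  have pow_card2 : ∀ x : K, x ^ (q ^ 2) = x := by
    intro x; rw [← hK]; exact FiniteField.pow_card x
  have pow_qq : ∀ x : K, (x ^ q) ^ q = x := by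
    intro x; rw [← pow_mul, ← sq, pow_card2]
  have frob_add : ∀ x y : K, (x + y) ^ q = x ^ q + y ^ q := by
    intro x y; rw [hq]; exact add_pow_char_pow x y p n
  have frob_sub : ∀ x y : K, (x - y) ^ q = x ^ q - y ^ q := by
    intro x y; rw [hq]; exact sub_pow_char_pow x y n
  -- fermat: x^p = x → x^q = x
  have fermat_pow : ∀ (m : ℕ) (x : K), x ^ p = x → x ^ (p ^ m) = x := by
    intro m
    induction m with
    | zero => intro x _; simp
    | succ k ih =>
      intro x hx
      rw [pow_succ, pow_mul, ih x hx, hx]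
  have fermat_q : ∀ x : K, x ^ p = x → x ^ q = x := by
    intro x hx; rw [hq]; exact fermat_pow n x hx
  have nat_fermat : ∀ m : ℕ, ((m : K)) ^ p = (m : K) := by
    intro m
    have := map_natCast (frobenius K p) m
    rwa [frobenius_def] at this
  -- root counting helper
  have root_bound : ∀ (N : ℕ) (P : K[X]), P ≠ 0 → P.natDegree ≤ N →
      (univ.filter fun x : K => P.eval x = 0).card ≤ N := by
    intro N P hP hdeg
    have hsub : (univ.filter fun x : K => P.eval x = 0) ⊆ P.roots.toFinset := by
      intro x hx
      rw [Multiset.mem_toFinset, mem_roots hP]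
      exact (mem_filter.mp hx).2
    calc (univ.filter fun x : K => P.eval x = 0).card ≤ P.roots.toFinset.card :=
          Finset.card_le_card hsub
      _ ≤ Multiset.card P.roots := Multiset.toFinset_card_le _
      _ ≤ P.natDegree := P.card_roots'
      _ ≤ N := hdeg
  -- every element of prime subfield is a nat cast
  have exists_m : ∀ x : K, x ^ p = x → ∃ m : ℕ, (m : K) = x := by
    intro x hx
    set R := (univ.filter fun y : K => y ^ p - y = 0) with hR
    have hcast : ((range p).image (fun m : ℕ => (m : K))) ⊆ R := by
      intro y hy
      obtain ⟨m, _, rfl⟩ := Finset.mem_image.mp hy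
      simp [hR, nat_fermat m]
    have hinj : Set.InjOn (fun m : ℕ => (m : K)) (range p : Finset ℕ) := by
      intro a ha b hb hab
      simp only [coe_range, Set.mem_Iio] at ha hb
      exact CharP.natCast_injOn_Iio K p ha hb hab
    have hPne : (X ^ p - X : K[X]) ≠ 0 := by
      intro h
      have h2 : ((X ^ p - X : K[X])).coeff p = 0 := by rw [h]; simp
      rw [coeff_sub, coeff_X_pow, if_pos rfl, coeff_X, if_neg (by omega)] at h2
      norm_num at h2
    have hPdeg : (X ^ p - X : K[X]).natDegree ≤ p := by
      refine le_trans (natDegree_sub_le _ _) ?_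
      rw [natDegree_X_pow, natDegree_X]
      omega
    have hcardR : R.card ≤ p := by
      have := root_bound p (X ^ p - X) hPne hPdeg
      simpa [hR, eval_sub, eval_pow, eval_X] using this
    have hcardI : ((range p).image (fun m : ℕ => (m : K))).card = p := by
      rw [Finset.card_image_of_injOn hinj, card_range]
    have hEq : R = (range p).image (fun m : ℕ => (m : K)) :=
      (Finset.eq_of_subset_of_card_le hcast (by omega)).symm
    have hxR : x ∈ R := by simp [hR, hx]
    rw [hEq] at hxR
    obtain ⟨m, _, hm⟩ := Finset.mem_image.mp hxR
    exact ⟨m, hm⟩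
  -- ===== trace and character lemmas =====
  have zeta_ne : ζ ≠ 0 := by
    intro h
    have := hζ.pow_eq_one
    rw [h] at this
    simp [zero_pow (by omega : p ≠ 0)] at this
  have zeta_mod : ∀ m : ℕ, ζ ^ m = ζ ^ (m % p) := by
    intro m
    conv_lhs => rw [← Nat.mod_add_div m p]
    rw [pow_add, pow_mul, hζ.pow_eq_one, one_pow, mul_one]
  have zeta_cast : ∀ m m' : ℕ, ((m : K) = (m' : K)) → ζ ^ m = ζ ^ m' := by
    intro m m' hmm
    have := (CharP.natCast_eq_natCast K p).mp hmm
    rw [zeta_mod m, zeta_mod m', this]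
  have pexp : ∀ (z : K) (i : ℕ), (z ^ q) ^ p ^ i = z ^ p ^ (n + i) := by
    intro z i
    rw [← pow_mul, hq, ← pow_add]
  have trn_stab : ∀ w : K, w ^ q = w →
      (∑ i ∈ range n, w ^ p ^ i) ^ p = ∑ i ∈ range n, w ^ p ^ i := by
    intro w hw
    rw [sum_pow_char]
    have h1 : ∀ i, (w ^ p ^ i) ^ p = w ^ p ^ (i + 1) := by
      intro i; rw [← pow_mul, ← pow_succ]
    simp_rw [h1]
    have h2 : ∑ i ∈ range (n + 1), w ^ p ^ i
        = (∑ i ∈ range n, w ^ p ^ (i + 1)) + w ^ p ^ 0 :=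
      Finset.sum_range_succ' _ n
    rw [Finset.sum_range_succ] at h2
    have h3 : w ^ p ^ n = w ^ p ^ 0 := by rw [← hq] at *; rw [hw, pow_zero, pow_one]
    rw [h3] at h2
    have := h2.symm
    -- h2 : ∑_{i<n} + w^{p^0} = ∑_{i<n} f(i+1) + w^{p^0}
    exact (add_right_cancel h2).symm
  have tr2_stab : ∀ z : K, (∑ i ∈ range (2 * n), z ^ p ^ i) ^ p = ∑ i ∈ range (2 * n), z ^ p ^ i := by
    intro z
    rw [sum_pow_char]
    have h1 : ∀ i, (z ^ p ^ i) ^ p = z ^ p ^ (i + 1) := by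
      intro i; rw [← pow_mul, ← pow_succ]
    simp_rw [h1]
    have h2 : ∑ i ∈ range (2 * n + 1), z ^ p ^ i
        = (∑ i ∈ range (2 * n), z ^ p ^ (i + 1)) + z ^ p ^ 0 :=
      Finset.sum_range_succ' _ (2 * n)
    rw [Finset.sum_range_succ] at h2
    have h3 : z ^ p ^ (2 * n) = z ^ p ^ 0 := by
      rw [pow_zero, pow_one, show p ^ (2 * n) = q ^ 2 by rw [hq, ← pow_mul, mul_comm], pow_card2]
    rw [h3] at h2
    exact (add_right_cancel h2).symm
  have χ_spec : ∀ x : K, ∃ m : ℕ, ((m : K) = ∑ i ∈ range (2 * n), x ^ p ^ i) ∧ χ x = ζ ^ m := by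
    intro x
    obtain ⟨m, hm⟩ := exists_m _ (tr2_stab x)
    exact ⟨m, hm, hχ x m hm⟩
  have ψ_spec : ∀ w : K, w ^ q = w →
      ∃ m : ℕ, ((m : K) = ∑ i ∈ range n, w ^ p ^ i) ∧ ψ w = ζ ^ m := by
    intro w hw
    obtain ⟨m, hm⟩ := exists_m _ (trn_stab w hw)
    exact ⟨m, hm, hψ w hw m hm⟩
  have χ_add : ∀ x y : K, χ (x + y) = χ x * χ y := by
    intro x y
    obtain ⟨mx, hmx, hx⟩ := χ_spec x
    obtain ⟨my, hmy, hy⟩ := χ_spec y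
    obtain ⟨mz, hmz, hz⟩ := χ_spec (x + y)
    have hsum : (∑ i ∈ range (2 * n), (x + y) ^ p ^ i)
        = (∑ i ∈ range (2 * n), x ^ p ^ i) + ∑ i ∈ range (2 * n), y ^ p ^ i := by
      rw [← Finset.sum_add_distrib]
      exact Finset.sum_congr rfl fun i _ => add_pow_char_pow x y p i
    have : (mz : K) = ((mx + my : ℕ) : K) := by
      push_cast
      rw [hmx, hmy, hmz, hsum]
    rw [hz, hx, hy, zeta_cast _ _ this, pow_add]
  have χ_zero : χ 0 = 1 := by
    have h := hχ 0 0 (by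
      rw [Nat.cast_zero]
      refine (Finset.sum_eq_zero fun i _ => ?_).symm
      exact zero_pow (by positivity))
    simpa using h
  have χ_ne : ∀ x : K, χ x ≠ 0 := by
    intro x
    obtain ⟨m, _, hx⟩ := χ_spec x
    rw [hx]
    exact pow_ne_zero _ zeta_ne
  have χ_pow_p : ∀ x : K, χ x ^ p = 1 := by
    intro x
    obtain ⟨m, _, hx⟩ := χ_spec x
    rw [hx, ← pow_mul, mul_comm, pow_mul, hζ.pow_eq_one, one_pow]
  have χ_sq : ∀ x : K, χ x * χ x = 1 → χ x = 1 := by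
    intro x h
    obtain ⟨k, hk⟩ := hp.odd_of_ne_two hp2
    have := χ_pow_p x
    rw [hk, pow_add, pow_mul, pow_one, sq, h, one_pow, one_mul] at this
    exact this
  have χψ : ∀ z : K, χ z = ψ (z ^ q + z) := by
    intro z
    have hzq : (z ^ q + z) ^ q = z ^ q + z := by
      rw [frob_add, pow_qq, add_comm]
    obtain ⟨m, hm, hψm⟩ := ψ_spec _ hzq
    have htr : (∑ i ∈ range n, (z ^ q + z) ^ p ^ i) = ∑ i ∈ range (2 * n), z ^ p ^ i := by
      have h1 : ∀ i ∈ range n, (z ^ q + z) ^ p ^ i = z ^ p ^ (n + i) + z ^ p ^ i := by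
        intro i _
        rw [add_pow_char_pow, pexp]
      rw [Finset.sum_congr rfl h1, Finset.sum_add_distrib, two_mul, Finset.sum_range_add, add_comm]
    rw [hψm, hχ z m (by rw [hm, htr])]
  have χ_frob : ∀ z : K, χ (z ^ q) = χ z := by
    intro z
    rw [χψ, χψ z, pow_qq, add_comm]
  have χ_neg : ∀ x : K, χ x * χ (-x) = 1 := by
    intro x
    rw [← χ_add, add_neg_cancel, χ_zero]
  have χ_sub_frob : ∀ x : K, χ (x - x ^ q) = 1 := by
    intro x
    have h1 : χ (x - x ^ q) * χ (x ^ q) = χ x := by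
      rw [← χ_add, sub_add_cancel]
    rw [χ_frob] at h1
    exact mul_right_cancel₀ (χ_ne x) (by rw [one_mul, h1])
  have ψ_add : ∀ x y : K, x ^ q = x → y ^ q = y → ψ (x + y) = ψ x * ψ y := by
    intro x y hx hy
    obtain ⟨mx, hmx, hhx⟩ := ψ_spec x hx
    obtain ⟨my, hmy, hhy⟩ := ψ_spec y hy
    obtain ⟨mz, hmz, hhz⟩ := ψ_spec (x + y) (by rw [frob_add, hx, hy])
    have hsum : (∑ i ∈ range n, (x + y) ^ p ^ i)
        = (∑ i ∈ range n, x ^ p ^ i) + ∑ i ∈ range n, y ^ p ^ i := by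
      rw [← Finset.sum_add_distrib]
      exact Finset.sum_congr rfl fun i _ => add_pow_char_pow x y p i
    have : (mz : K) = ((mx + my : ℕ) : K) := by
      push_cast
      rw [hmx, hmy, hmz, hsum]
    rw [hhz, hhx, hhy, zeta_cast _ _ this, pow_add]
  -- ===== cyclic group lemmas =====
  haveI : Fact (2 < p) := ⟨by have := hp.two_le; omega⟩
  have neg_one_ne : (-1 : K) ≠ 1 := CharP.neg_one_ne_one K p
  have hq2fact : (q + 1) * (q - 1) = q ^ 2 - 1 := by
    obtain ⟨q', rfl⟩ : ∃ q', q = q' + 1 := ⟨q - 1, by omega⟩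
    have h1 : (q' + 1 + 1) * (q' + 1 - 1) = q' * q' + 2 * q' := by
      simp only [Nat.add_sub_cancel]
      ring
    have h2 : (q' + 1) ^ 2 = q' * q' + 2 * q' + 1 := by ring
    omega
  obtain ⟨g, hg⟩ := IsCyclic.exists_monoid_generator (α := Kˣ)
  have hord : orderOf g = q ^ 2 - 1 := by
    have h1 : ∀ x : Kˣ, x ∈ Subgroup.zpowers g := by
      intro x
      obtain ⟨k, hk⟩ := hg x
      exact ⟨(k : ℤ), by simpa using hk⟩
    rw [orderOf_eq_card_of_forall_mem_zpowers h1, Nat.card_eq_fintype_card,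
      Fintype.card_units, hK]
  have pow_sub_one : ∀ y : K, y ≠ 0 → y ^ q = y → y ^ (q - 1) = 1 := by
    intro y hy hyq
    have h1 : y ^ (q - 1) * y = y ^ q := by
      rw [← pow_succ]
      congr 1
      omega
    rw [hyq] at h1
    field_simp at h1
    exact h1
  have hilbert : ∀ c : K, c ^ (q + 1) = 1 → ∃ u : K, u ≠ 0 ∧ u ^ (q - 1) = c := by
    intro c hc
    have hcne : c ≠ 0 := by
      intro h; rw [h, zero_pow (by omega)] at hc; exact zero_ne_one hc
    obtain ⟨k, hk0⟩ := hg (Units.mk0 c hcne)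
    have hk : g ^ k = Units.mk0 c hcne := hk0
    have hcu : (Units.mk0 c hcne) ^ (q + 1) = 1 := by
      ext
      push_cast
      exact hc
    have hdvd : q ^ 2 - 1 ∣ k * (q + 1) := by
      rw [← hord]
      apply orderOf_dvd_of_pow_eq_one
      rw [pow_mul, hk, hcu]
    obtain ⟨m, hm⟩ := hdvd
    have hk2 : k = (q - 1) * m := by
      have h1 : k * (q + 1) = ((q - 1) * m) * (q + 1) := by
        rw [hm, ← hq2fact]; ring
      exact Nat.eq_of_mul_eq_mul_right (by omega) h1
    refine ⟨((g ^ m : Kˣ) : K), Units.ne_zero _, ?_⟩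
    have h2 : (g ^ m) ^ (q - 1) = Units.mk0 c hcne := by
      rw [← pow_mul, mul_comm m (q - 1), ← hk2, hk]
    rw [← Units.val_pow_eq_pow_val, h2, Units.val_mk0]
  have sqrt_of_pow : ∀ x : K, x ≠ 0 → x ^ ((q - 1) / 2) = 1 →
      ∃ y : K, y ^ q = y ∧ y ^ 2 = x := by
    intro x hx hpow
    obtain ⟨k, hk0⟩ := hg (Units.mk0 x hx)
    have hk : g ^ k = Units.mk0 x hx := hk0
    have hxu : (Units.mk0 x hx) ^ ((q - 1) / 2) = 1 := by
      ext; push_cast; exact hpow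
    have hdvd : q ^ 2 - 1 ∣ k * ((q - 1) / 2) := by
      rw [← hord]
      apply orderOf_dvd_of_pow_eq_one
      rw [pow_mul, hk, hxu]
    obtain ⟨m, hm⟩ := hdvd
    obtain ⟨j, hj⟩ := hqodd
    have hjq : (q - 1) / 2 = j := by omega
    rw [hjq] at hm
    have hk2 : k = 2 * (q + 1) * m := by
      have h2 : k * ((q - 1) * j) = (q - 1) * ((q ^ 2 - 1) * m) := by
        calc k * ((q - 1) * j) = (q - 1) * (k * j) := by ring
          _ = (q - 1) * ((q ^ 2 - 1) * m) := by rw [hm]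
      have h3 : q - 1 = 2 * j := by omega
      have h4 : k * ((q - 1) * j) = j * (k * (q - 1)) := by ring
      have h5 : k * (q - 1) = 2 * (q + 1) * m * (q - 1) := by
        have h6 : j * (k * (q - 1)) = j * (2 * (q + 1) * m * (q - 1)) := by
          rw [← h4, h2, ← hq2fact, h3]; ring
        exact Nat.eq_of_mul_eq_mul_left (by omega) h6
      exact Nat.eq_of_mul_eq_mul_right (by omega) h5
    refine ⟨((g ^ ((q + 1) * m) : Kˣ) : K), ?_, ?_⟩
    · have hy1 : (g ^ ((q + 1) * m)) ^ (q - 1) = 1 := by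
        rw [← pow_mul]
        have : (q + 1) * m * (q - 1) = (q ^ 2 - 1) * m := by rw [← hq2fact]; ring
        rw [this, pow_mul, ← hord, pow_orderOf_eq_one, one_pow]
      have hy1' : ((g ^ ((q + 1) * m) : Kˣ) : K) ^ (q - 1) = 1 := by
        rw [← Units.val_pow_eq_pow_val, hy1, Units.val_one]
      calc ((g ^ ((q + 1) * m) : Kˣ) : K) ^ q
          = ((g ^ ((q + 1) * m) : Kˣ) : K) ^ (q - 1) * ((g ^ ((q + 1) * m) : Kˣ) : K) := by
            rw [← pow_succ]; congr 1; omega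
        _ = _ := by rw [hy1', one_mul]
    · have h2 : (g ^ ((q + 1) * m)) ^ 2 = Units.mk0 x hx := by
        rw [← pow_mul, show (q + 1) * m * 2 = k by rw [hk2]; ring, hk]
      rw [← Units.val_pow_eq_pow_val, h2, Units.val_mk0]
  have pow_half : ∀ x : K, x ^ q = x → x ≠ 0 →
      x ^ ((q - 1) / 2) = 1 ∨ x ^ ((q - 1) / 2) = -1 := by
    intro x hxq hx
    have h1 : x ^ ((q - 1) / 2) * x ^ ((q - 1) / 2) = 1 := by
      obtain ⟨j, hj⟩ := hqodd
      rw [← pow_add]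
      have : (q - 1) / 2 + (q - 1) / 2 = q - 1 := by omega
      rw [this]
      exact pow_sub_one x hx hxq
    exact mul_self_eq_one_iff.mp h1
  have eta_spec : ∀ x : K, x ^ q = x → x ≠ 0 →
      (x ^ ((q - 1) / 2) = 1 ∧ η x = 1) ∨ (x ^ ((q - 1) / 2) = -1 ∧ η x = -1) := by
    intro x hxq hx
    rcases pow_half x hxq hx with h | h
    · exact Or.inl ⟨h, hη1 x hx (sqrt_of_pow x hx h)⟩
    · refine Or.inr ⟨h, hη2 x hx ?_⟩
      rintro ⟨y, hyq, hy2⟩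
      have hy : y ≠ 0 := by
        intro h0; rw [h0] at hy2; rw [← hy2] at hx; simp at hx
      have : x ^ ((q - 1) / 2) = 1 := by
        rw [← hy2, ← pow_mul]
        obtain ⟨j, hj⟩ := hqodd
        have h2 : 2 * ((q - 1) / 2) = q - 1 := by omega
        rw [h2]
        exact pow_sub_one y hy hyq
      rw [h] at this
      exact neg_one_ne this
  -- ===== main computation =====
  have two_q : (2 : K) ^ q = 2 := by
    refine fermat_q 2 ?_
    have h := nat_fermat 2
    push_cast at h
    exact h
  have four_q : (4 : K) ^ q = 4 := by
    refine fermat_q 4 ?_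
    have h := nat_fermat 4
    push_cast at h
    exact h
  have two_pow_q_sub_one : (2 : K) ^ (q - 1) = 1 := by
    have h1 : (2 : K) ^ (q - 1) * 2 = 2 := by
      rw [← pow_succ, show q - 1 + 1 = q by omega, two_q]
    field_simp at h1
    exact h1
  have main : ∀ (ε : K) (εC : ℂ), ((ε = 1 ∧ εC = 1) ∨ (ε = -1 ∧ εC = -1)) →
      A ^ q + A = 2 * ε * B ^ ((q + 1) / 2) →
      ∑ w : K, χ (A * w ^ (q + 1) + B * w ^ 2 + C * w) =
        εC * (q * G * χ (-A * θ ^ (q + 1) - B * θ ^ 2)) := by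
    intro ε εC hcase hTrA
    have hε2 : ε * ε = 1 := by rcases hcase with ⟨h, _⟩ | ⟨h, _⟩ <;> rw [h] <;> ring
    have hεne : ε ≠ 0 := by
      intro h; rw [h] at hε2; simp at hε2
    have hεq : ε ^ q = ε := by
      rcases hcase with ⟨h, _⟩ | ⟨h, _⟩ <;> rw [h]
      · exact one_pow q
      · exact hqodd.neg_one_pow
    obtain ⟨b, hbdef⟩ : ∃ b : K, b = B ^ ((q + 1) / 2) := ⟨_, rfl⟩
    rw [← hbdef] at hTrA
    have hbne : b ≠ 0 := by rw [hbdef]; exact pow_ne_zero _ hB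
    have hb2 : b * b = B ^ (q + 1) := by
      rw [hbdef, ← pow_add]
      congr 1
      obtain ⟨j, hj⟩ := hqodd
      omega
    have hBq : B ^ q * B = b * b := by rw [hb2, pow_succ]
    have hbq : b ^ q = b := by
      have h1 : (2 * ε * b) ^ q = 2 * ε * b := by
        rw [← hTrA, frob_add, pow_qq, add_comm]
      rw [mul_pow, mul_pow, two_q, hεq] at h1
      have h2 : (2 : K) * ε ≠ 0 := mul_ne_zero two_ne hεne
      calc b ^ q = (2 * ε)⁻¹ * (2 * ε * b ^ q) := by field_simp
        _ = (2 * ε)⁻¹ * (2 * ε * b) := by rw [mul_assoc] at h1 ⊢; rw [h1]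
        _ = b := by field_simp
    obtain ⟨c, hcdef⟩ : ∃ c : K, c = -B * (ε * b)⁻¹ := ⟨_, rfl⟩
    have hcne : c ≠ 0 := by
      rw [hcdef]
      apply mul_ne_zero (neg_ne_zero.mpr hB)
      exact inv_ne_zero (mul_ne_zero hεne hbne)
    have hεbc : ε * b * c = -B := by
      rw [hcdef]
      field_simp
    have hcq : c ^ q = -B ^ q * (ε * b)⁻¹ := by
      rw [hcdef, mul_pow, hqodd.neg_pow, inv_pow, mul_pow, hεq, hbq]
    have hcq1 : c ^ q * c = 1 := by
      rw [hcq, hcdef]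
      field_simp
      linear_combination hBq - (b * b) * hε2
    have hc2 : B ^ q * (c * c) = B := by
      rw [hcdef]
      field_simp
      linear_combination hBq - (b * b) * hε2
    have hcnorm : c ^ (q + 1) = 1 := by rw [pow_succ, hcq1]
    obtain ⟨u0, hu0ne, hu0pow⟩ := hilbert c hcnorm
    have hu0q : u0 ^ q = c * u0 := by
      calc u0 ^ q = u0 ^ (q - 1) * u0 := by rw [← pow_succ]; congr 1; omega
        _ = c * u0 := by rw [hu0pow]
    obtain ⟨y0, hy0ne, hy0pow⟩ := hilbert (-1) (by
      have : Even (q + 1) := by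
        obtain ⟨j, hj⟩ := hqodd
        exact ⟨j + 1, by omega⟩
      exact this.neg_one_pow)
    have hy0q : y0 ^ q = -y0 := by
      calc y0 ^ q = y0 ^ (q - 1) * y0 := by rw [← pow_succ]; congr 1; omega
        _ = -y0 := by rw [hy0pow]; ring
    obtain ⟨d, hddef⟩ : ∃ d : K, d = 4 * B * u0 ^ 2 * y0 ^ 2 := ⟨_, rfl⟩
    have hdne : d ≠ 0 := by
      rw [hddef]
      have h4 : (4 : K) ≠ 0 := by
        intro h
        rw [show (4 : K) = 2 * 2 by norm_num] at h
        rcases mul_eq_zero.mp h with h | h <;> exact two_ne h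
      exact mul_ne_zero (mul_ne_zero (mul_ne_zero h4 hB) (pow_ne_zero _ hu0ne)) (pow_ne_zero _ hy0ne)
    have hu2q : (u0 ^ 2) ^ q = (c * u0) ^ 2 := by rw [pow_right_comm, hu0q]
    have hy2q : (y0 ^ 2) ^ q = y0 ^ 2 := by rw [pow_right_comm, hy0q]; ring
    have hdq : d ^ q = d := by
      rw [hddef]
      simp only [mul_pow]
      rw [four_q, hu2q, hy2q]
      linear_combination (4 * u0 ^ 2 * y0 ^ 2) * hc2
    obtain ⟨j, hjq⟩ := id hqodd
    have hjhalf : (q - 1) / 2 = j := by omega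
    have hpow2j : ∀ x : K, (x ^ 2) ^ j = x ^ (q - 1) := by
      intro x
      rw [← pow_mul]
      congr 1
      omega
    have hdhalf : d ^ ((q - 1) / 2) = ε := by
      rw [hjhalf, hddef]
      simp only [mul_pow]
      rw [show (4 : K) = 2 ^ 2 by norm_num, hpow2j, hpow2j, hpow2j,
        two_pow_q_sub_one, hu0pow, hy0pow]
      rw [hcdef, hbdef]
      have hBj : B ^ ((q + 1) / 2) = B ^ j * B := by
        rw [← pow_succ]
        congr 1
        omega
      rw [hBj]
      field_simp
      linear_combination -hε2
    have hεη : η d = εC := by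
      rcases eta_spec d hdq hdne with ⟨h1, h2⟩ | ⟨h1, h2⟩ <;>
        rcases hcase with ⟨he, hec⟩ | ⟨he, hec⟩
      · rw [h2, hec]
      · exfalso; rw [hdhalf, he] at h1; exact neg_one_ne h1
      · exfalso; rw [hdhalf, he] at h1; exact neg_one_ne h1.symm
      · rw [h2, hec]
    set Fq : Finset K := univ.filter (fun x : K => x ^ q = x) with hFqdef
    have hFq : ∀ x : K, x ∈ Fq ↔ x ^ q = x := by
      intro x; simp [hFqdef]
    have hinj : Set.InjOn (fun ts : K × K => ts.1 * (u0 * y0) + ts.2 * u0) ↑(Fq ×ˢ Fq) := by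
      rintro ⟨t, s⟩ ha ⟨t', s'⟩ hb hab
      simp only [Finset.coe_product, Set.mem_prod, Finset.mem_coe, hFq] at ha hb
      obtain ⟨htq, hsq⟩ := ha
      obtain ⟨htq', hsq'⟩ := hb
      simp only at hab
      have h0 : u0 * (t * y0 + s) = u0 * (t' * y0 + s') := by linear_combination hab
      have h1 : (t - t') * y0 = s' - s := by
        have := mul_left_cancel₀ hu0ne h0
        linear_combination this
      by_cases hts : t = t'
      · subst hts
        have hss : s = s' := by
          have : (0 : K) * y0 = s' - s := by rw [← h1]; ring
          rw [zero_mul] at this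
          linear_combination this
        rw [hss]
      · exfalso
        have htt : t - t' ≠ 0 := sub_ne_zero.mpr hts
        have h2 : y0 = (s' - s) * (t - t')⁻¹ := by
          field_simp
          linear_combination h1
        have h3 : y0 ^ q = y0 := by
          rw [h2, mul_pow, inv_pow, frob_sub, frob_sub, hsq, hsq', htq, htq']
        rw [hy0q] at h3
        have h4 : (2 : K) * y0 = 0 := by linear_combination -h3
        rcases mul_eq_zero.mp h4 with h | h
        · exact two_ne h
        · exact hy0ne h
    have hsurj : ∀ w : K, ∃ ts : K × K, ts ∈ Fq ×ˢ Fq ∧ ts.1 * (u0 * y0) + ts.2 * u0 = w := by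
      intro w
      set P : K := w * u0⁻¹ with hPdef
      set Qv : K := w ^ q * (c * u0)⁻¹ with hQdef
      have hPq : P ^ q = Qv := by
        rw [hPdef, hQdef, mul_pow, inv_pow, hu0q]
      have hcu0q : (c * u0) ^ q = u0 := by
        rw [mul_pow, hu0q, ← mul_assoc, hcq1, one_mul]
      have hQq : Qv ^ q = P := by
        rw [hQdef, hPdef, mul_pow, inv_pow, pow_qq, hcu0q]
      have hinv2 : ((2 : K)⁻¹) ^ q = 2⁻¹ := by rw [inv_pow, two_q]
      refine ⟨⟨(P - Qv) * 2⁻¹ * y0⁻¹, (P + Qv) * 2⁻¹⟩, ?_, ?_⟩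
      · rw [Finset.mem_product]
        constructor
        · rw [hFq]
          rw [mul_pow, mul_pow, frob_sub, hPq, hQq, hinv2, inv_pow, hy0q, inv_neg]
          ring
        · rw [hFq]
          rw [mul_pow, frob_add, hPq, hQq, hinv2, add_comm]
      · have hy0inv : y0⁻¹ * y0 = 1 := inv_mul_cancel₀ hy0ne
        have h2inv : (2 : K)⁻¹ * 2 = 1 := inv_mul_cancel₀ two_ne
        have hPu : P * u0 = w := by rw [hPdef]; field_simp
        simp only
        linear_combination ((P - Qv) * 2⁻¹ * u0) * hy0inv + (P * u0) * h2inv + hPu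
    have himg : (Fq ×ˢ Fq).image (fun ts : K × K => ts.1 * (u0 * y0) + ts.2 * u0) = univ := by
      apply Finset.eq_univ_of_forall
      intro w
      obtain ⟨ts, hts, hw⟩ := hsurj w
      exact Finset.mem_image.mpr ⟨ts, hts, hw⟩
    have card_Fq : Fq.card = q := by
      have h1 : ((Fq ×ˢ Fq).image (fun ts : K × K => ts.1 * (u0 * y0) + ts.2 * u0)).card
          = Fq.card * Fq.card := by
        rw [Finset.card_image_of_injOn hinj, Finset.card_product]
      rw [himg, Finset.card_univ, hK] at h1
      have h2 : q ^ 2 = q * q := sq q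
      rw [h2] at h1
      exact (Nat.mul_self_inj.mp h1.symm)
    -- ψ nontrivial on Fq
    have hψnontriv : ∃ s1 : K, s1 ^ q = s1 ∧ ψ s1 ≠ 1 := by
      have hex : ∃ s : K, s ^ q = s ∧ (∑ i ∈ range n, s ^ p ^ i) ≠ 0 := by
        by_contra hcon
        push_neg at hcon
        set P : K[X] := ∑ i ∈ range n, (X : K[X]) ^ (p ^ i) with hPdef2
        have hPeval : ∀ s : K, P.eval s = ∑ i ∈ range n, s ^ p ^ i := by
          intro s; rw [hPdef2]; simp [eval_finset_sum]
        have hPne : P ≠ 0 := by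
          intro h
          have h2 : P.coeff (p ^ (n - 1)) = 1 := by
            rw [hPdef2, finset_sum_coeff]
            rw [Finset.sum_eq_single (n - 1)]
            · rw [coeff_X_pow, if_pos rfl]
            · intro i hi hine
              rw [coeff_X_pow, if_neg]
              intro hEq
              exact hine (Nat.pow_right_injective hp.two_le hEq).symm
            · intro hni; exact absurd (Finset.mem_range.mpr (by omega)) hni
          rw [h] at h2; simp at h2
        have hPdeg : P.natDegree ≤ p ^ (n - 1) := by
          rw [hPdef2]
          refine le_trans (natDegree_sum_le _ _) ?_
          rw [Finset.fold_max_le]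
          refine ⟨by omega, ?_⟩
          intro i hi
          rw [Function.comp_apply, natDegree_X_pow]
          exact Nat.pow_le_pow_right (by omega) (by simp at hi; omega)
        have hcard2 : Fq.card ≤ p ^ (n - 1) := by
          have hsub2 : Fq ⊆ univ.filter (fun x : K => P.eval x = 0) := by
            intro x hx
            rw [hFq] at hx
            rw [mem_filter]
            exact ⟨mem_univ x, by rw [hPeval]; exact hcon x hx⟩
          exact le_trans (Finset.card_le_card hsub2) (root_bound _ P hPne hPdeg)
        rw [card_Fq] at hcard2
        have : p ^ (n - 1) < q := by
          rw [hq]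
          exact Nat.pow_lt_pow_right hp1 (by omega)
        omega
      obtain ⟨s1, hs1q, hs1tr⟩ := hex
      refine ⟨s1, hs1q, ?_⟩
      obtain ⟨m, hm, hpsim⟩ := ψ_spec s1 hs1q
      rw [hpsim]
      have hmp : ¬ (p ∣ m) := by
        intro hdvd
        rw [(CharP.cast_eq_zero_iff K p m).mpr hdvd] at hm
        exact hs1tr hm.symm
      intro hone
      rw [zeta_mod] at hone
      have h5 : m % p ≠ 0 := fun h6 => hmp (Nat.dvd_of_mod_eq_zero h6)
      exact hζ.pow_ne_one_of_pos_of_lt (by omega) (Nat.mod_lt m (by omega)) hone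
    -- sum of ψ over Fq is zero
    have hψsum0 : ∑ s ∈ Fq, ψ s = 0 := by
      obtain ⟨s1, hs1q, hs1ne⟩ := hψnontriv
      have h1 : ∑ s ∈ Fq, ψ (s + s1) = ∑ s ∈ Fq, ψ s := by
        refine Finset.sum_nbij' (fun s => s + s1) (fun s => s - s1) ?_ ?_ ?_ ?_ ?_
        · intro a ha; rw [hFq] at ha ⊢; rw [frob_add, ha, hs1q]
        · intro a ha; rw [hFq] at ha ⊢; rw [frob_sub, ha, hs1q]
        · intro a _; ring
        · intro a _; ring
        · intro a _; rfl
      have h2 : ∀ s ∈ Fq, ψ (s + s1) = ψ s * ψ s1 := fun s hs =>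
        ψ_add s s1 ((hFq s).mp hs) hs1q
      rw [Finset.sum_congr rfl h2, ← Finset.sum_mul] at h1
      by_contra h3
      have h5 : (∑ s ∈ Fq, ψ s) * (ψ s1 - 1) = 0 := by linear_combination h1
      rcases mul_eq_zero.mp h5 with h | h
      · exact h3 h
      · exact hs1ne (by linear_combination h)
    have hψsumd : ∀ a : K, a ^ q = a → a ≠ 0 → ∑ s ∈ Fq, ψ (a * s) = 0 := by
      intro a haq hane
      have h1 : ∑ s ∈ Fq, ψ (a * s) = ∑ s ∈ Fq, ψ s := by
        refine Finset.sum_nbij' (fun s => a * s) (fun s => a⁻¹ * s) ?_ ?_ ?_ ?_ ?_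
        · intro x hx; rw [hFq] at hx ⊢; rw [mul_pow, haq, hx]
        · intro x hx; rw [hFq] at hx ⊢; rw [mul_pow, inv_pow, haq, hx]
        · intro x _; show a⁻¹ * (a * x) = x; rw [inv_mul_cancel_left₀ hane]
        · intro x _; show a * (a⁻¹ * x) = x; rw [mul_inv_cancel_left₀ hane]
        · intro x _; rfl
      rw [h1, hψsum0]
    -- eta multiplicative against d
    have pick1 : ∀ x : K, x ^ q = x → x ≠ 0 → x ^ ((q - 1) / 2) = 1 → η x = 1 := by
      intro x h1 h2 h3
      rcases eta_spec x h1 h2 with ⟨_, h⟩ | ⟨hh, _⟩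
      · exact h
      · exact absurd (hh.symm.trans h3) neg_one_ne
    have pickn : ∀ x : K, x ^ q = x → x ≠ 0 → x ^ ((q - 1) / 2) = -1 → η x = -1 := by
      intro x h1 h2 h3
      rcases eta_spec x h1 h2 with ⟨hh, _⟩ | ⟨_, h⟩
      · exact absurd (h3.symm.trans hh) neg_one_ne
      · exact h
    have η_d_mul : ∀ u : K, u ^ q = u → η (d⁻¹ * u) = η d * η u := by
      intro u huq
      by_cases hu : u = 0
      · rw [hu, mul_zero, hη0, mul_zero]
      · have hdinvq : (d⁻¹ * u) ^ q = d⁻¹ * u := by rw [mul_pow, inv_pow, hdq, huq]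
        have hdinvne : d⁻¹ * u ≠ 0 := mul_ne_zero (inv_ne_zero hdne) hu
        have hpow : (d⁻¹ * u) ^ ((q - 1) / 2) = (d ^ ((q - 1) / 2))⁻¹ * u ^ ((q - 1) / 2) := by
          rw [mul_pow, inv_pow]
        rcases eta_spec d hdq hdne with ⟨hd1, hd2⟩ | ⟨hd1, hd2⟩ <;>
          rcases eta_spec u huq hu with ⟨hu1, hu2⟩ | ⟨hu1, hu2⟩ <;> rw [hd2, hu2]
        · rw [pick1 _ hdinvq hdinvne (by rw [hpow, hd1, hu1]; norm_num)]; norm_num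
        · rw [pickn _ hdinvq hdinvne (by rw [hpow, hd1, hu1]; norm_num)]; norm_num
        · rw [pickn _ hdinvq hdinvne (by rw [hpow, hd1, hu1]; norm_num)]; norm_num
        · rw [pick1 _ hdinvq hdinvne (by rw [hpow, hd1, hu1]; norm_num)]; norm_num
    -- counting square roots
    have hcount : ∀ s0 : K, s0 ∈ Fq →
        ((Fq.filter fun t => t ^ 2 = s0).card : ℂ) = 1 + η s0 := by
      intro s0 hs0
      by_cases h0 : s0 = 0
      · subst h0
        have hflt : Fq.filter (fun t => t ^ 2 = 0) = {0} := by
          ext t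
          simp only [mem_filter, mem_singleton, hFq]
          constructor
          · rintro ⟨_, ht2⟩
            exact pow_eq_zero_iff (by omega) |>.mp ht2
          · rintro rfl
            exact ⟨zero_pow (by omega), zero_pow (by omega)⟩
        rw [hflt, hη0]
        simp
      · rcases eta_spec s0 ((hFq s0).mp hs0) h0 with ⟨h1, h2⟩ | ⟨h1, h2⟩
        · obtain ⟨y, hyq, hy2⟩ := sqrt_of_pow s0 h0 h1
          have hyne : y ≠ 0 := by
            intro h
            rw [h] at hy2
            exact h0 (by rw [← hy2]; ring)
          have hflt : Fq.filter (fun t => t ^ 2 = s0) = {y, -y} := by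
            ext t
            simp only [mem_filter, mem_insert, mem_singleton, hFq]
            constructor
            · rintro ⟨htq, ht2⟩
              have hz : (t - y) * (t + y) = 0 := by linear_combination ht2 - hy2
              rcases mul_eq_zero.mp hz with h | h
              · left; linear_combination h
              · right; linear_combination h
            · rintro (rfl | rfl)
              · exact ⟨hyq, hy2⟩
              · refine ⟨?_, by rw [neg_sq, hy2]⟩
                have hoq : Odd q := ⟨j, hjq⟩
                rw [hoq.neg_pow, hyq]
          rw [hflt, h2]
          rw [Finset.card_insert_of_notMem, Finset.card_singleton]
          · norm_num
          · simp only [mem_singleton]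
            intro h
            have h4 : (2 : K) * y = 0 := by linear_combination h
            rcases mul_eq_zero.mp h4 with h' | h'
            · exact two_ne h'
            · exact hyne h'
        · have hflt : Fq.filter (fun t => t ^ 2 = s0) = ∅ := by
            rw [Finset.filter_eq_empty_iff]
            intro t ht ht2
            have htne : t ≠ 0 := by
              intro h
              rw [h] at ht2
              exact h0 (by rw [← ht2]; ring)
            have hpw : s0 ^ ((q - 1) / 2) = 1 := by
              rw [← ht2, ← pow_mul, show 2 * ((q - 1) / 2) = q - 1 by omega]
              exact pow_sub_one t htne ((hFq t).mp ht)
            exact neg_one_ne (h1.symm.trans hpw)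
          rw [hflt, h2]
          simp
    -- Gauss sum evaluation
    have hgauss : ∑ t ∈ Fq, ψ (d * t ^ 2) = η d * G := by
      have hsq_img : Fq.image (fun t : K => t ^ 2) ⊆ Fq := by
        intro x hx
        obtain ⟨t, ht, rfl⟩ := Finset.mem_image.mp hx
        rw [hFq, pow_right_comm, (hFq t).mp ht]
      have h1 : ∑ t ∈ Fq, ψ (d * t ^ 2)
          = ∑ s0 ∈ Fq.image (fun t : K => t ^ 2),
              ((Fq.filter fun t : K => t ^ 2 = s0).card) • ψ (d * s0) :=
        Finset.sum_comp (fun s0 => ψ (d * s0)) (fun t => t ^ 2)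
      have h2 : ∑ s0 ∈ Fq.image (fun t : K => t ^ 2),
            ((Fq.filter fun t : K => t ^ 2 = s0).card) • ψ (d * s0)
          = ∑ s0 ∈ Fq, ((Fq.filter fun t : K => t ^ 2 = s0).card) • ψ (d * s0) := by
        refine Finset.sum_subset hsq_img ?_
        intro x hx hnx
        have : Fq.filter (fun t : K => t ^ 2 = x) = ∅ := by
          rw [Finset.filter_eq_empty_iff]
          intro t ht ht2
          exact hnx (Finset.mem_image.mpr ⟨t, ht, ht2⟩)
        rw [this]
        simp
      have h3 : ∑ s0 ∈ Fq, ((Fq.filter fun t : K => t ^ 2 = s0).card) • ψ (d * s0)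
          = ∑ s0 ∈ Fq, (1 + η s0) * ψ (d * s0) := by
        refine Finset.sum_congr rfl fun s0 hs0 => ?_
        rw [nsmul_eq_mul, hcount s0 hs0]
      have h4 : ∑ s0 ∈ Fq, (1 + η s0) * ψ (d * s0)
          = (∑ s0 ∈ Fq, ψ (d * s0)) + ∑ s0 ∈ Fq, η s0 * ψ (d * s0) := by
        rw [← Finset.sum_add_distrib]
        exact Finset.sum_congr rfl fun s0 _ => by ring
      have h5 : ∑ s0 ∈ Fq, η s0 * ψ (d * s0) = ∑ u ∈ Fq, η (d⁻¹ * u) * ψ u := by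
        refine Finset.sum_nbij' (fun s => d * s) (fun u => d⁻¹ * u) ?_ ?_ ?_ ?_ ?_
        · intro x hx; rw [hFq] at hx ⊢; rw [mul_pow, hdq, hx]
        · intro x hx; rw [hFq] at hx ⊢; rw [mul_pow, inv_pow, hdq, hx]
        · intro x _; show d⁻¹ * (d * x) = x; rw [inv_mul_cancel_left₀ hdne]
        · intro x _; show d * (d⁻¹ * x) = x; rw [mul_inv_cancel_left₀ hdne]
        · intro x _; show η x * ψ (d * x) = η (d⁻¹ * (d * x)) * ψ (d * x)
          rw [inv_mul_cancel_left₀ hdne]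
      have h6 : ∑ u ∈ Fq, η (d⁻¹ * u) * ψ u = η d * ∑ u ∈ Fq, η u * ψ u := by
        rw [Finset.mul_sum]
        refine Finset.sum_congr rfl fun u hu => ?_
        rw [η_d_mul u ((hFq u).mp hu)]
        ring
      have h7 : ∑ u ∈ Fq, η u * ψ u = G := by
        rw [hG]
        have hset : univ.filter (fun u : K => u ^ q = u ∧ u ≠ 0)
            = Fq.filter (fun u => u ≠ 0) := by
          ext u
          simp [hFqdef, Finset.filter_filter]
        rw [hset]
        exact (Finset.sum_filter_of_ne fun u hu hne => by
          intro h0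
          rw [h0, hη0, zero_mul] at hne
          exact hne rfl).symm
      rw [h1, h2, h3, h4, h5, h6, h7, hψsumd d hdq hdne, zero_add]
    -- key algebraic identity
    have e1 : A ^ q = 2 * ε * b - A := by linear_combination hTrA
    have key : ∀ t s : K, t ^ q = t → s ^ q = s →
        (A * (t * (u0 * y0) + s * u0) ^ (q + 1) + B * (t * (u0 * y0) + s * u0) ^ 2) ^ q
          + (A * (t * (u0 * y0) + s * u0) ^ (q + 1) + B * (t * (u0 * y0) + s * u0) ^ 2)
          = d * t ^ 2 := by
      intro t s ht hs
      set w : K := t * (u0 * y0) + s * u0 with hw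
      have hwq : w ^ q = c * u0 * (s - t * y0) := by
        rw [hw, frob_add]
        simp only [mul_pow]
        rw [ht, hs, hu0q, hy0q]
        ring
      have h1 : (w ^ (q + 1)) ^ q = w * w ^ q := by
        rw [pow_succ, mul_pow, pow_qq]
      have h2 : (w ^ 2) ^ q = (w ^ q) ^ 2 := pow_right_comm w 2 q
      rw [frob_add, mul_pow, mul_pow, h1, h2, pow_succ w q, hwq, hw, e1, hddef]
      linear_combination (2 * u0 ^ 2 * (s + t * y0) * (s - t * y0)) * hεbc
        + (u0 ^ 2 * (s - t * y0) ^ 2) * hc2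
    -- sum over K via the parametrization
    have hT : ∑ w : K, χ (A * w ^ (q + 1) + B * w ^ 2) = (q : ℂ) * ∑ t ∈ Fq, ψ (d * t ^ 2) := by
      have h1 : ∑ w : K, χ (A * w ^ (q + 1) + B * w ^ 2)
          = ∑ ts ∈ Fq ×ˢ Fq, χ (A * (ts.1 * (u0 * y0) + ts.2 * u0) ^ (q + 1)
              + B * (ts.1 * (u0 * y0) + ts.2 * u0) ^ 2) := by
        rw [← himg]
        exact Finset.sum_image fun x hx y hy hxy =>
          hinj (Finset.mem_coe.mpr hx) (Finset.mem_coe.mpr hy) hxy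
      rw [h1, Finset.sum_product]
      have h2 : ∀ t ∈ Fq, ∑ s ∈ Fq, χ (A * (t * (u0 * y0) + s * u0) ^ (q + 1)
          + B * (t * (u0 * y0) + s * u0) ^ 2) = (q : ℂ) * ψ (d * t ^ 2) := by
        intro t ht
        have h3 : ∀ s ∈ Fq, χ (A * (t * (u0 * y0) + s * u0) ^ (q + 1)
            + B * (t * (u0 * y0) + s * u0) ^ 2) = ψ (d * t ^ 2) := by
          intro s hs
          rw [χψ]
          congr 1
          exact key t s ((hFq t).mp ht) ((hFq s).mp hs)
        rw [Finset.sum_congr rfl h3, Finset.sum_const, card_Fq, nsmul_eq_mul]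
      rw [Finset.sum_congr rfl h2, ← Finset.mul_sum]
    -- the shift by θ
    have hshift : ∑ w : K, χ (A * w ^ (q + 1) + B * w ^ 2 + C * w)
        = (∑ v : K, χ (A * v ^ (q + 1) + B * v ^ 2)) * χ (-A * θ ^ (q + 1) - B * θ ^ 2) := by
      have hre : ∑ w : K, χ (A * w ^ (q + 1) + B * w ^ 2 + C * w)
          = ∑ v : K, χ (A * (v + θ) ^ (q + 1) + B * (v + θ) ^ 2 + C * (v + θ)) :=
        (Fintype.sum_equiv (Equiv.addRight θ)
          (fun v => χ (A * (v + θ) ^ (q + 1) + B * (v + θ) ^ 2 + C * (v + θ)))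
          (fun w => χ (A * w ^ (q + 1) + B * w ^ 2 + C * w))
          (fun v => rfl)).symm
      rw [hre, Finset.sum_mul]
      refine Finset.sum_congr rfl fun v _ => ?_
      have hsplit : A * (v + θ) ^ (q + 1) + B * (v + θ) ^ 2 + C * (v + θ)
          = (A * v ^ (q + 1) + B * v ^ 2) + ((A * (v ^ q * θ))
            + ((A * (v * θ ^ q) + 2 * B * (v * θ) + C * v)
              + (A * θ ^ (q + 1) + B * θ ^ 2 + C * θ))) := by
        rw [pow_succ (v + θ), frob_add, pow_succ v, pow_succ θ]
        ring
      rw [hsplit, χ_add (A * v ^ (q + 1) + B * v ^ 2) _,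
        χ_add (A * (v ^ q * θ)) _,
        χ_add (A * (v * θ ^ q) + 2 * B * (v * θ) + C * v) _]
      have hfr : χ (A * (v ^ q * θ)) * χ (A * (v * θ ^ q) + 2 * B * (v * θ) + C * v) = 1 := by
        have hx : (A ^ q * (v * θ ^ q)) ^ q = A * (v ^ q * θ) := by
          rw [mul_pow, mul_pow, pow_qq, pow_qq]
        rw [← hx, χ_frob, ← χ_add]
        have harg : A ^ q * (v * θ ^ q) + (A * (v * θ ^ q) + 2 * B * (v * θ) + C * v)
            = v * ((A ^ q + A) * θ ^ q + 2 * B * θ + C) := by ring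
        rw [harg, hθ, mul_zero, χ_zero]
      have hchunk : χ (A * θ ^ (q + 1) + B * θ ^ 2 + C * θ) = χ (-A * θ ^ (q + 1) - B * θ ^ 2) := by
        have hNq : (θ ^ (q + 1)) ^ q = θ ^ (q + 1) := by
          rw [pow_succ, mul_pow, pow_qq]
          exact mul_comm _ _
        have hxq : (A * θ ^ (q + 1)) ^ q = A ^ q * θ ^ (q + 1) := by rw [mul_pow, hNq]
        have hprod : χ (A * θ ^ (q + 1) + B * θ ^ 2 + C * θ) * χ (A * θ ^ (q + 1) + B * θ ^ 2) = 1 := by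
          rw [← χ_add]
          have harg : (A * θ ^ (q + 1) + B * θ ^ 2 + C * θ) + (A * θ ^ (q + 1) + B * θ ^ 2)
              = (A * θ ^ (q + 1) - (A * θ ^ (q + 1)) ^ q)
                + θ * ((A ^ q + A) * θ ^ q + 2 * B * θ + C) := by
            rw [hxq, pow_succ θ q]
            ring
          rw [harg, χ_add, χ_sub_frob, one_mul, hθ, mul_zero, χ_zero]
        have hneg2 : -(A * θ ^ (q + 1) + B * θ ^ 2) = -A * θ ^ (q + 1) - B * θ ^ 2 := by ring
        have h9 := χ_neg (A * θ ^ (q + 1) + B * θ ^ 2)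
        calc χ (A * θ ^ (q + 1) + B * θ ^ 2 + C * θ)
            = χ (A * θ ^ (q + 1) + B * θ ^ 2 + C * θ)
              * (χ (A * θ ^ (q + 1) + B * θ ^ 2) * χ (-(A * θ ^ (q + 1) + B * θ ^ 2))) := by
              rw [h9, mul_one]
          _ = (χ (A * θ ^ (q + 1) + B * θ ^ 2 + C * θ) * χ (A * θ ^ (q + 1) + B * θ ^ 2))
              * χ (-(A * θ ^ (q + 1) + B * θ ^ 2)) := by ring
          _ = χ (-(A * θ ^ (q + 1) + B * θ ^ 2)) := by rw [hprod, one_mul]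
          _ = χ (-A * θ ^ (q + 1) - B * θ ^ 2) := by rw [hneg2]
      rw [hchunk]
      rw [show χ (A * (v ^ q * θ)) * (χ (A * (v * θ ^ q) + 2 * B * (v * θ) + C * v)
          * χ (-A * θ ^ (q + 1) - B * θ ^ 2))
        = (χ (A * (v ^ q * θ)) * χ (A * (v * θ ^ q) + 2 * B * (v * θ) + C * v))
          * χ (-A * θ ^ (q + 1) - B * θ ^ 2) from by ring, hfr, one_mul]
    rw [hshift, hT, hgauss, hεη]
    ring
  constructor
  · intro h
    have := main 1 1 (Or.inl ⟨rfl, rfl⟩) (by rw [h]; ring)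
    rw [this]; ring
  · intro h
    have := main (-1) (-1) (Or.inr ⟨rfl, rfl⟩) (by rw [h]; ring)
    rw [this]; ring
end

section
/- Let a, b, c ∈ F_{q²} with a^q + b ∉ F_q, and set γ = a² − ab + c and ε = a^q − a − b^q + b. Then the number of zeros of x^{q+1} + x² + a·x^q + b·x + c in F_{q²} is equal to the number of zeros in F_q of the cubic x³ − Tr(3a − b)·x² + (4Tr(γ) − ε²)·x + 4Tr(γε) + Tr(3a − b)·ε². -/
open Finset
open scoped Classical

private lemma key1 {R : Type} [CommRing R] (a A b B c C x X g gq e M u : R)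
    (hg : g = a ^ 2 - a * b + c) (hgq : gq = A ^ 2 - A * B + C)
    (he : e = A - a - B + b) (hM : M = 3 * A - B + 3 * a - b)
    (hu : u = X + x + A + a)
    (hx : X * x + x ^ 2 + a * X + b * x + c = 0)
    (hxq : x * X + X ^ 2 + A * x + B * X + C = 0) :
    (M - 2 * u) ^ 3 - M * (M - 2 * u) ^ 2 + (4 * (gq + g) - e ^ 2) * (M - 2 * u) +
      4 * (g * e - gq * e) + M * e ^ 2 = 0 := by
  subst hg hgq he hM hu
  linear_combination (-8 * ((X + x + A + a) + (B - a - 2 * A))) * hx +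
    (-8 * ((X + x + A + a) + (b - A - 2 * a))) * hxq

private lemma key2 {R : Type} [CommRing R] (a A b B c C r g gq e M : R)
    (hg : g = a ^ 2 - a * b + c) (hgq : gq = A ^ 2 - A * B + C)
    (he : e = A - a - B + b) (hM : M = 3 * A - B + 3 * a - b) :
    4 * gq * (M - r + 2 * (b - A - 2 * a)) + 4 * g * (M - r + 2 * (B - a - 2 * A)) +
      (M - r) * (M - r + 2 * (b - A - 2 * a)) * (M - r + 2 * (B - a - 2 * A)) +
      (r ^ 3 - M * r ^ 2 + (4 * (gq + g) - e ^ 2) * r + 4 * (g * e - gq * e) + M * e ^ 2) = 0 := by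
  subst hg hgq he hM
  ring

theorem stmt4 (p n q : ℕ) (hp : p.Prime) (hp2 : p ≠ 2) (hn : 0 < n)
    (hq : q = p ^ n)
    (K : Type) [Field K] [Fintype K] (hK : Fintype.card K = q ^ 2)
    (a b c : K) (hab : (a ^ q + b) ^ q ≠ a ^ q + b)
    (γ ε : K) (hγ : γ = a ^ 2 - a * b + c) (hε : ε = a ^ q - a - b ^ q + b) :
    (Finset.univ.filter
        (fun x : K => x ^ (q + 1) + x ^ 2 + a * x ^ q + b * x + c = 0)).card =
      (Finset.univ.filter
        (fun x : K => x ^ q = x ∧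
          x ^ 3 - ((3 * a - b) ^ q + (3 * a - b)) * x ^ 2 +
            (4 * (γ ^ q + γ) - ε ^ 2) * x +
            4 * ((γ * ε) ^ q + γ * ε) + ((3 * a - b) ^ q + (3 * a - b)) * ε ^ 2 = 0)).card := by
  haveI hpF : Fact p.Prime := ⟨hp⟩
  have hq0 : q ≠ 0 := by rw [hq]; exact pow_ne_zero n hp.pos.ne'
  -- characteristic of K is p
  haveI : CharP K (ringChar K) := ringChar.charP K
  have hrp : (ringChar K).Prime := CharP.char_is_prime K (ringChar K)
  obtain ⟨m, -, hcard⟩ := FiniteField.card K (ringChar K)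
  have hchr : ringChar K = p := by
    have h3 : ringChar K ^ (m : ℕ) = p ^ (2 * n) := by
      rw [← hcard, hK, hq, ← pow_mul, mul_comm]
    have hd : ringChar K ∣ p ^ (2 * n) := h3 ▸ dvd_pow_self (ringChar K) m.pos.ne'
    exact (Nat.prime_dvd_prime_iff_eq hrp hp).mp (hrp.dvd_of_dvd_pow hd)
  haveI hcp : CharP K p := hchr ▸ ringChar.charP K
  -- Frobenius facts
  have hadd : ∀ z w : K, (z + w) ^ q = z ^ q + w ^ q := by
    intro z w; rw [hq]; exact add_pow_char_pow z w p n
  have hsub : ∀ z w : K, (z - w) ^ q = z ^ q - w ^ q := by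
    intro z w; rw [hq]; exact sub_pow_char_pow z w n
  have hzero : (0 : K) ^ q = 0 := zero_pow hq0
  have hneg : ∀ z : K, (-z) ^ q = -z ^ q := by
    intro z
    rw [← zero_sub, hsub, hzero, zero_sub]
  have hqq : ∀ z : K, (z ^ q) ^ q = z := by
    intro z
    rw [← pow_mul]
    have : q * q = Fintype.card K := by rw [hK]; ring
    rw [this]
    exact FiniteField.pow_card z
  have hsq : ∀ z : K, (z ^ 2) ^ q = (z ^ q) ^ 2 := fun z => pow_right_comm z 2 q
  have h2 : (2 : K) ^ q = 2 := by
    rw [show (2 : K) = 1 + 1 by norm_num, hadd, one_pow]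
  have h3 : (3 : K) ^ q = 3 := by
    rw [show (3 : K) = 2 + 1 by norm_num, hadd, one_pow, h2]
  have h2ne : (2 : K) ≠ 0 := by
    intro h
    have h2' : ((2 : ℕ) : K) = 0 := by exact_mod_cast h
    have : p ∣ 2 := (CharP.cast_eq_zero_iff K p 2).mp h2'
    exact hp2 ((Nat.prime_dvd_prime_iff_eq hp Nat.prime_two).mp this)
  -- auxiliary quantities
  obtain ⟨M, hMdef⟩ : ∃ M : K, (3 * a - b) ^ q + (3 * a - b) = M := ⟨_, rfl⟩
  rw [hMdef]
  obtain ⟨BB, hBB⟩ : ∃ t : K, t = b - a ^ q - 2 * a := ⟨_, rfl⟩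
  have hγq : γ ^ q = (a ^ q) ^ 2 - a ^ q * b ^ q + c ^ q := by
    simp only [hγ, hadd, hsub, hsq, mul_pow]
  have hε0 : ε ≠ 0 := by
    intro h
    apply hab
    rw [hadd, hqq]
    have h' : a ^ q - a - b ^ q + b = 0 := by rw [← hε]; exact h
    linear_combination -h'
  have hεq : ε ^ q = -ε := by
    simp only [hε, hadd, hsub, hqq]
    ring
  have hBBq : BB ^ q = b ^ q - a - 2 * a ^ q := by
    simp only [hBB, hadd, hsub, hqq, mul_pow, h2]
  have hM' : M = 3 * a ^ q - b ^ q + 3 * a - b := by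
    rw [← hMdef]
    simp only [hsub, mul_pow, h3]
    ring
  have hMfix : M ^ q = M := by
    rw [hM']
    simp only [hadd, hsub, hqq, mul_pow, h3]
    ring
  have hεBB : ε = BB - BB ^ q := by
    rw [hBBq, hBB, hε]; ring
  have hfg : ∀ z : K,
      z ^ (q + 1) + z ^ 2 + a * z ^ q + b * z + c =
        (z + a) * ((z + a) ^ q + (z + a) + BB) + γ := by
    intro z
    rw [pow_succ, hadd, hBB, hγ]
    ring
  -- core facts about the inverse map
  have hcore : ∀ r : K, r ^ q = r →
      (M - r + 2 * BB ≠ 0) ∧ (M - r + 2 * BB ^ q ≠ 0) ∧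
      ((-2 * γ / (M - r + 2 * BB)) ^ q = -2 * γ ^ q / (M - r + 2 * BB ^ q)) := by
    intro r hr
    have hDq : (M - r + 2 * BB) ^ q = M - r + 2 * BB ^ q := by
      simp only [hadd, hsub, mul_pow, h2, hMfix, hr]
    have hD0 : M - r + 2 * BB ≠ 0 := by
      intro h
      have hz : M - r + 2 * BB ^ q = 0 := by rw [← hDq, h]; exact hzero
      apply hε0
      have h2e : (2 : K) * ε = 0 := by rw [hεBB]; linear_combination h - hz
      exact (mul_eq_zero.mp h2e).resolve_left h2ne
    have hDq0 : M - r + 2 * BB ^ q ≠ 0 := by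
      rw [← hDq]; exact pow_ne_zero q hD0
    refine ⟨hD0, hDq0, ?_⟩
    rw [div_pow, hDq, show (-2 * γ : K) = -(2 * γ) by ring, hneg, mul_pow, h2]
    ring
  -- main key identity for the inverse map
  have hkey2 : ∀ r : K, r ^ q = r →
      (r ^ 3 - M * r ^ 2 + (4 * (γ ^ q + γ) - ε ^ 2) * r +
        4 * ((γ * ε) ^ q + γ * ε) + M * ε ^ 2 = 0) →
      4 * γ ^ q * (M - r + 2 * BB) + 4 * γ * (M - r + 2 * BB ^ q) +
        (M - r) * (M - r + 2 * BB) * (M - r + 2 * BB ^ q) = 0 := by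
    intro r hr hcub
    rw [show (γ * ε) ^ q = γ ^ q * -ε by rw [mul_pow, hεq]] at hcub
    rw [hBBq, hBB]
    have h := key2 a (a ^ q) b (b ^ q) c (c ^ q) r γ (γ ^ q) ε M hγ hγq hε hM'
    linear_combination h - hcub
  -- the bijection
  refine Finset.card_bij'
    (fun x _ => M - 2 * ((x + a) ^ q + (x + a)))
    (fun r _ => -2 * γ / (M - r + 2 * BB) - a) ?_ ?_ ?_ ?_
  · -- forward membership
    intro x hx
    simp only [mem_filter, mem_univ, true_and] at hx ⊢
    have hx' : x ^ q * x + x ^ 2 + a * x ^ q + b * x + c = 0 := by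
      rw [pow_succ] at hx; linear_combination hx
    have hxq : x * x ^ q + (x ^ q) ^ 2 + a ^ q * x + b ^ q * x ^ q + c ^ q = 0 := by
      have h := congrArg (· ^ q) hx'
      simp only [hadd, mul_pow, hsq, hqq, hzero] at h
      linear_combination h
    constructor
    · simp only [hsub, hadd, mul_pow, h2, hMfix, hqq]
      ring
    · rw [show (γ * ε) ^ q = γ ^ q * -ε by rw [mul_pow, hεq]]
      have hu : (x + a) ^ q + (x + a) = x ^ q + x + a ^ q + a := by rw [hadd]; ring
      linear_combination key1 a (a ^ q) b (b ^ q) c (c ^ q) x (x ^ q) γ (γ ^ q) ε M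
        ((x + a) ^ q + (x + a)) hγ hγq hε hM' hu hx' hxq
  · -- backward membership
    intro r hr
    simp only [mem_filter, mem_univ, true_and] at hr ⊢
    obtain ⟨hr1, hr2⟩ := hr
    obtain ⟨hD0, hDq0, hyq⟩ := hcore r hr1
    have hk := hkey2 r hr1 hr2
    rw [hfg]
    rw [show -2 * γ / (M - r + 2 * BB) - a + a = -2 * γ / (M - r + 2 * BB) by ring]
    rw [hyq]
    field_simp
    linear_combination γ * hk
  · -- left inverse
    intro x hx
    simp only [mem_filter, mem_univ, true_and] at hx
    have hkey : (x + a) * ((x + a) ^ q + (x + a) + BB) + γ = 0 := by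
      rw [← hfg x]; exact hx
    have hu : ((x + a) ^ q + (x + a)) ^ q = (x + a) ^ q + (x + a) := by
      rw [hadd, hqq]; ring
    have hden : (x + a) ^ q + (x + a) + BB ≠ 0 := by
      intro h
      apply hε0
      have hBq2 : BB ^ q = BB := by
        have hBeq : BB = -((x + a) ^ q + (x + a)) := by linear_combination h
        rw [hBeq, hneg, hu]
      rw [hεBB, hBq2, sub_self]
    show -2 * γ / (M - (M - 2 * ((x + a) ^ q + (x + a))) + 2 * BB) - a = x
    rw [show M - (M - 2 * ((x + a) ^ q + (x + a))) + 2 * BB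
          = 2 * ((x + a) ^ q + (x + a) + BB) by ring]
    rw [sub_eq_iff_eq_add, div_eq_iff (mul_ne_zero h2ne hden)]
    linear_combination -2 * hkey
  · -- right inverse
    intro r hr
    simp only [mem_filter, mem_univ, true_and] at hr
    obtain ⟨hr1, hr2⟩ := hr
    obtain ⟨hD0, hDq0, hyq⟩ := hcore r hr1
    have hk := hkey2 r hr1 hr2
    show M - 2 * ((-2 * γ / (M - r + 2 * BB) - a + a) ^ q +
        (-2 * γ / (M - r + 2 * BB) - a + a)) = r
    rw [show -2 * γ / (M - r + 2 * BB) - a + a = -2 * γ / (M - r + 2 * BB) by ring]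
    rw [hyq]
    field_simp
    linear_combination hk
end

section
/- Let a, b, c ∈ F_{q²} with a^q + b ∈ F_q. Then the number of zeros of x^{q+1} + x² + a·x^q + b·x + c in F_{q²} equals η((a^q + b)² − 4Tr(c)) + M₀, where M₀ = 1 if Tr(a² − ab + c) ≠ 0, M₀ = q if a² − ab + c = 0, and M₀ = 0 otherwise (i.e., if Tr(a² − ab + c) = 0 but a² − ab + c ≠ 0). -/
open Finset
open scoped Classical

private lemma rootcard_le {K : Type} [Field K] [Fintype K]
    (P : Polynomial K) (hP : P ≠ 0) :
    (Finset.univ.filter (fun x : K => Polynomial.eval x P = 0)).card ≤ P.natDegree := by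
  classical
  have hsub : (Finset.univ.filter (fun x : K => Polynomial.eval x P = 0)) ⊆ P.roots.toFinset := by
    intro x hx
    rw [Finset.mem_filter] at hx
    rw [Multiset.mem_toFinset, Polynomial.mem_roots hP]
    exact hx.2
  calc (Finset.univ.filter (fun x : K => Polynomial.eval x P = 0)).card
      ≤ P.roots.toFinset.card := Finset.card_le_card hsub
    _ ≤ Multiset.card P.roots := P.roots.toFinset_card_le
    _ ≤ P.natDegree := P.card_roots'

/-- Let `a, b, c ∈ F_{q²}` with `a^q + b ∈ F_q`. Then the number of zeros of
`x^{q+1} + x² + a·x^q + b·x + c` in `F_{q²}` equals `η((a^q + b)² − 4Tr(c)) + M₀`, where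
`M₀ = 1` if `Tr(a² − ab + c) ≠ 0`, `M₀ = q` if `a² − ab + c = 0`, and `M₀ = 0` otherwise.
Here `q` is a power of an odd prime, `K` plays the role of `F_{q²}`,
`F_q = {x : K | x^q = x}`, `Tr(x) = x^q + x` and `η` is the quadratic character of `F_q`
(with values in `ℤ`, extended by `η(0) = 0`). -/
theorem stmt5 (p n q : ℕ) (hp : p.Prime) (hp2 : p ≠ 2) (hn : 0 < n)
    (hq : q = p ^ n)
    (K : Type) [Field K] [Fintype K] (hK : Fintype.card K = q ^ 2)
    (η : K → ℤ) (hη0 : η 0 = 0)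
    (hη1 : ∀ x : K, x ≠ 0 → (∃ y : K, y ^ q = y ∧ y ^ 2 = x) → η x = 1)
    (hη2 : ∀ x : K, x ≠ 0 → ¬ (∃ y : K, y ^ q = y ∧ y ^ 2 = x) → η x = -1)
    (a b c : K) (hab : (a ^ q + b) ^ q = a ^ q + b)
    (γ : K) (hγ : γ = a ^ 2 - a * b + c)
    (M₀ : ℤ)
    (hM₀ : M₀ = if γ ^ q + γ ≠ 0 then 1 else if γ = 0 then (q : ℤ) else 0) :
    ((Finset.univ.filter
        (fun x : K => x ^ (q + 1) + x ^ 2 + a * x ^ q + b * x + c = 0)).card : ℤ) =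
      η ((a ^ q + b) ^ 2 - 4 * (c ^ q + c)) + M₀ := by
  classical
  haveI : Fact p.Prime := ⟨hp⟩
  have hq0 : 0 < q := by rw [hq]; exact pow_pos hp.pos n
  have hq2 : 2 ≤ q := by
    calc 2 ≤ p := hp.two_le
      _ ≤ p ^ n := Nat.le_self_pow hn.ne' p
      _ = q := hq.symm
  -- characteristic
  have hchar : CharP K p := by
    obtain ⟨m, hpr, hcard⟩ := FiniteField.card K (ringChar K)
    have hdvd : ringChar K ∣ p ^ (2 * n) := by
      have h1 : ringChar K ^ (m : ℕ) = p ^ (2 * n) := by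
        rw [← hcard, hK, hq, ← pow_mul, Nat.mul_comm]
      exact h1 ▸ dvd_pow_self (ringChar K) m.ne_zero
    have : ringChar K = p := by
      have h2 := hpr.dvd_of_dvd_pow hdvd
      exact (Nat.prime_dvd_prime_iff_eq hpr hp).mp h2
    exact this ▸ ringChar.charP K
  haveI := hchar
  -- Frobenius facts
  have hFadd : ∀ x y : K, (x + y) ^ q = x ^ q + y ^ q := by
    intro x y; rw [hq]; exact add_pow_char_pow (R := K) (p := p) (n := n) x y
  have hqodd : Odd q := by rw [hq]; exact (hp.odd_of_ne_two hp2).pow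
  have hFneg : ∀ x : K, (-x) ^ q = -(x ^ q) := fun x => hqodd.neg_pow x
  have hFsub : ∀ x y : K, (x - y) ^ q = x ^ q - y ^ q := by
    intro x y
    rw [sub_eq_add_neg, hFadd, hFneg, sub_eq_add_neg]
  have hcardK : Fintype.card K = q * q := by rw [hK]; ring
  have hpowcard : ∀ x : K, (x ^ q) ^ q = x := by
    intro x; rw [← pow_mul, ← hcardK]; exact FiniteField.pow_card x
  have h2K : (2 : K) ^ q = 2 := by
    have h := hFadd 1 1
    norm_num at h
    exact h
  have h2 : (2 : K) ≠ 0 := by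
    intro h
    have h4 : ((2 : ℕ) : K) = 0 := by exact_mod_cast h
    have h5 := (CharP.cast_eq_zero_iff K p 2).mp h4
    exact hp2 ((Nat.prime_dvd_prime_iff_eq hp Nat.prime_two).mp h5)
  -- u = b - a is in F_q
  have hu : (b - a) ^ q = b - a := by
    have h1 : a + b ^ q = a ^ q + b := by
      rw [← hab, hFadd, hpowcard]
    rw [hFsub]
    linear_combination h1
  -- main factorization
  have hfx : ∀ x : K, x ^ (q + 1) + x ^ 2 + a * x ^ q + b * x + c
      = (x + a) * (x ^ q + x) + (b - a) * x + c := by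
    intro x; ring
  -- degree facts for X^q - X and X^q + X
  have hdegsub : (Polynomial.X ^ q - Polynomial.X : Polynomial K).natDegree = q := by
    rw [Polynomial.natDegree_sub_eq_left_of_natDegree_lt, Polynomial.natDegree_X_pow]
    rw [Polynomial.natDegree_X_pow, Polynomial.natDegree_X]; omega
  have hdegadd : (Polynomial.X ^ q + Polynomial.X : Polynomial K).natDegree = q := by
    rw [Polynomial.natDegree_add_eq_left_of_natDegree_lt, Polynomial.natDegree_X_pow]
    rw [Polynomial.natDegree_X_pow, Polynomial.natDegree_X]; omega
  have hS_le : (univ.filter fun x : K => x ^ q = x).card ≤ q := by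
    have hne : (Polynomial.X ^ q - Polynomial.X : Polynomial K) ≠ 0 := by
      intro h; rw [h, Polynomial.natDegree_zero] at hdegsub; omega
    have heq : (univ.filter fun x : K => x ^ q = x)
        = (univ.filter fun x : K =>
            Polynomial.eval x (Polynomial.X ^ q - Polynomial.X : Polynomial K) = 0) := by
      apply Finset.filter_congr
      intro x _
      simp [sub_eq_zero]
    rw [heq]
    calc _ ≤ (Polynomial.X ^ q - Polynomial.X : Polynomial K).natDegree := rootcard_le _ hne
      _ = q := hdegsub
  have hker_le : (univ.filter fun x : K => x ^ q + x = 0).card ≤ q := by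
    have hne : (Polynomial.X ^ q + Polynomial.X : Polynomial K) ≠ 0 := by
      intro h; rw [h, Polynomial.natDegree_zero] at hdegadd; omega
    have heq : (univ.filter fun x : K => x ^ q + x = 0)
        = (univ.filter fun x : K =>
            Polynomial.eval x (Polynomial.X ^ q + Polynomial.X : Polynomial K) = 0) := by
      apply Finset.filter_congr
      intro x _
      simp
    rw [heq]
    calc _ ≤ (Polynomial.X ^ q + Polynomial.X : Polynomial K).natDegree := rootcard_le _ hne
      _ = q := hdegadd
  -- fibers of trace all have kernel cardinality
  have hfib_eq : ∀ x₀ : K, (univ.filter fun x : K => x ^ q + x = x₀ ^ q + x₀).card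
      = (univ.filter fun x : K => x ^ q + x = 0).card := by
    intro x₀
    apply Finset.card_nbij' (i := fun x => x - x₀) (j := fun y => y + x₀)
    · intro x hx
      simp only [mem_coe, mem_filter, mem_univ, true_and] at hx ⊢
      rw [hFsub]
      linear_combination hx
    · intro y hy
      simp only [mem_coe, mem_filter, mem_univ, true_and] at hy ⊢
      rw [hFadd]
      linear_combination hy
    · intro x _; simp
    · intro y _; simp
  have hsum : q * q = ∑ t ∈ univ.image (fun x : K => x ^ q + x),
      (univ.filter fun x : K => x ^ q + x = t).card := by
    rw [← hcardK, ← Finset.card_univ]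
    exact Finset.card_eq_sum_card_fiberwise (fun x _ => Finset.mem_image_of_mem _ (mem_univ x))
  have hsum2 : q * q = (univ.image (fun x : K => x ^ q + x)).card
      * (univ.filter fun x : K => x ^ q + x = 0).card := by
    rw [hsum, Finset.sum_congr rfl (fun t ht => ?_), Finset.sum_const, smul_eq_mul]
    obtain ⟨x₀, _, rfl⟩ := Finset.mem_image.mp ht
    exact hfib_eq x₀
  have him_sub : univ.image (fun x : K => x ^ q + x) ⊆ (univ.filter fun x : K => x ^ q = x) := by
    intro t ht
    obtain ⟨x, _, rfl⟩ := Finset.mem_image.mp ht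
    simp only [mem_filter, mem_univ, true_and]
    rw [hFadd, hpowcard]
    ring
  have him_le : (univ.image (fun x : K => x ^ q + x)).card ≤ q :=
    le_trans (Finset.card_le_card him_sub) hS_le
  have him_q : (univ.image (fun x : K => x ^ q + x)).card = q := by
    by_contra h
    have hlt : (univ.image (fun x : K => x ^ q + x)).card < q := lt_of_le_of_ne him_le h
    have h1 : (univ.image (fun x : K => x ^ q + x)).card
        * (univ.filter fun x : K => x ^ q + x = 0).card
        ≤ (univ.image (fun x : K => x ^ q + x)).card * q :=
      Nat.mul_le_mul_left _ hker_le
    have h2' : (univ.image (fun x : K => x ^ q + x)).card * q < q * q :=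
      mul_lt_mul_of_pos_right hlt hq0
    have h3 := lt_of_le_of_lt h1 h2'
    rw [← hsum2] at h3
    exact lt_irrefl _ h3
  have hker_q : (univ.filter fun x : K => x ^ q + x = 0).card = q := by
    have h := hsum2
    rw [him_q] at h
    exact (Nat.eq_of_mul_eq_mul_left hq0 h.symm)
  have him_eq : univ.image (fun x : K => x ^ q + x) = univ.filter (fun x : K => x ^ q = x) := by
    apply Finset.eq_of_subset_of_card_le him_sub
    rw [him_q]; exact hS_le
  have hfib_count : ∀ t : K, t ^ q = t →
      (univ.filter fun x : K => x ^ q + x = t).card = q := by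
    intro t ht
    have hmem : t ∈ univ.image (fun x : K => x ^ q + x) := by
      rw [him_eq]; simp only [mem_filter, mem_univ, true_and]; exact ht
    obtain ⟨x₀, _, rfl⟩ := Finset.mem_image.mp hmem
    rw [hfib_eq x₀, hker_q]
  -- decomposition of the zeros by trace value
  have hZsum : (univ.filter (fun x : K => x ^ (q + 1) + x ^ 2 + a * x ^ q + b * x + c = 0)).card
      = ∑ t ∈ (univ.filter fun t : K => t ^ q = t),
          ((univ.filter (fun x : K => x ^ (q + 1) + x ^ 2 + a * x ^ q + b * x + c = 0)).filter
             (fun x => x ^ q + x = t)).card := by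
    apply Finset.card_eq_sum_card_fiberwise
    intro x _
    simp only [mem_coe, mem_filter, mem_univ, true_and]
    rw [hFadd, hpowcard]
    ring
  have hnegu : (-(b - a) : K) ∈ (univ.filter fun t : K => t ^ q = t) := by
    simp only [mem_filter, mem_univ, true_and]
    rw [hFneg, hu]
  -- the fiber over -(b-a)
  have hγ2 : γ = c - a * (b - a) := by rw [hγ]; ring
  have hγq : γ ^ q = c ^ q - a ^ q * (b - a) := by
    rw [hγ2, hFsub, mul_pow, hu]
  have hTreq : γ ^ q + γ
      = (-(b - a)) ^ 2 + (a ^ q + b) * (-(b - a)) + (c ^ q + c) := by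
    rw [hγq, hγ2]; ring
  have hfib_negu : ((univ.filter
        (fun x : K => x ^ (q + 1) + x ^ 2 + a * x ^ q + b * x + c = 0)).filter
          (fun x => x ^ q + x = -(b - a))).card = if γ = 0 then q else 0 := by
    by_cases hγ0 : γ = 0
    · rw [if_pos hγ0]
      have heq : ((univ.filter
            (fun x : K => x ^ (q + 1) + x ^ 2 + a * x ^ q + b * x + c = 0)).filter
              (fun x => x ^ q + x = -(b - a)))
          = univ.filter (fun x : K => x ^ q + x = -(b - a)) := by
        ext x
        simp only [Finset.mem_filter, mem_univ, true_and]
        constructor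
        · rintro ⟨_, h⟩; exact h
        · intro h
          refine ⟨?_, h⟩
          rw [hfx, h]
          have hγ' : c - a * (b - a) = 0 := by rw [← hγ2]; exact hγ0
          linear_combination hγ'
      rw [heq]
      exact hfib_count _ (by rw [hFneg, hu])
    · rw [if_neg hγ0, Finset.card_eq_zero, Finset.eq_empty_iff_forall_notMem]
      intro x hx
      simp only [Finset.mem_filter, mem_univ, true_and] at hx
      obtain ⟨h1, h2⟩ := hx
      rw [hfx, h2] at h1
      apply hγ0
      rw [hγ2]
      linear_combination h1
  -- the fibers over t ≠ -(b-a)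
  have hfiber_ne : ∀ t : K, t ^ q = t → t + (b - a) ≠ 0 →
      ((univ.filter
          (fun x : K => x ^ (q + 1) + x ^ 2 + a * x ^ q + b * x + c = 0)).filter
            (fun x => x ^ q + x = t)).card
        = if t ^ 2 + (a ^ q + b) * t + (c ^ q + c) = 0 then 1 else 0 := by
    intro t ht htu
    have hx0q : (-(a * t + c) / (t + (b - a))) ^ q
        = -(a ^ q * t + c ^ q) / (t + (b - a)) := by
      simp only [div_pow, hFneg, hFadd, mul_pow, ht, hu]
    by_cases hQ : t ^ 2 + (a ^ q + b) * t + (c ^ q + c) = 0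
    · rw [if_pos hQ, Finset.card_eq_one]
      refine ⟨-(a * t + c) / (t + (b - a)), ?_⟩
      have hTt : (-(a * t + c) / (t + (b - a))) ^ q + (-(a * t + c) / (t + (b - a))) = t := by
        rw [hx0q, ← add_div, div_eq_iff htu]
        linear_combination -hQ
      ext x
      simp only [Finset.mem_filter, mem_univ, true_and, Finset.mem_singleton]
      constructor
      · rintro ⟨h1, h2⟩
        rw [hfx, h2] at h1
        rw [eq_div_iff htu]
        linear_combination h1
      · intro hx
        subst hx
        refine ⟨?_, hTt⟩
        rw [hfx, hTt]
        field_simp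
        ring
    · rw [if_neg hQ, Finset.card_eq_zero, Finset.eq_empty_iff_forall_notMem]
      intro x hx
      simp only [Finset.mem_filter, mem_univ, true_and] at hx
      obtain ⟨h1, h2⟩ := hx
      rw [hfx, h2] at h1
      have hxx : x = -(a * t + c) / (t + (b - a)) := by
        rw [eq_div_iff htu]
        linear_combination h1
      apply hQ
      rw [hxx, hx0q, ← add_div, div_eq_iff htu] at h2
      linear_combination -h2
  -- sum over the erased set is count of quadratic roots away from -(b-a)
  have hsum_erase : ∑ t ∈ ((univ.filter fun t : K => t ^ q = t).erase (-(b - a))),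
      ((univ.filter
          (fun x : K => x ^ (q + 1) + x ^ 2 + a * x ^ q + b * x + c = 0)).filter
            (fun x => x ^ q + x = t)).card
      = ((univ.filter (fun t : K => t ^ q = t
            ∧ t ^ 2 + (a ^ q + b) * t + (c ^ q + c) = 0)).erase (-(b - a))).card := by
    have h1 : ∀ t ∈ (univ.filter fun t : K => t ^ q = t).erase (-(b - a)),
        ((univ.filter
            (fun x : K => x ^ (q + 1) + x ^ 2 + a * x ^ q + b * x + c = 0)).filter
              (fun x => x ^ q + x = t)).card
          = if t ^ 2 + (a ^ q + b) * t + (c ^ q + c) = 0 then 1 else 0 := by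
      intro t ht
      rw [Finset.mem_erase, Finset.mem_filter] at ht
      refine hfiber_ne t ht.2.2 ?_
      intro h
      exact ht.1 (by linear_combination h)
    rw [Finset.sum_congr rfl h1, ← Finset.card_filter, Finset.filter_erase,
      Finset.filter_filter]
  -- total count
  have hZcard : (univ.filter
        (fun x : K => x ^ (q + 1) + x ^ 2 + a * x ^ q + b * x + c = 0)).card
      = (if γ = 0 then q else 0)
        + ((univ.filter (fun t : K => t ^ q = t
            ∧ t ^ 2 + (a ^ q + b) * t + (c ^ q + c) = 0)).erase (-(b - a))).card := by
    rw [hZsum, ← Finset.add_sum_erase _ _ hnegu, hsum_erase]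
    exact congrArg (fun z => z + _) hfib_negu
  -- counting quadratic roots with the character
  have hquad : ((univ.filter (fun t : K => t ^ q = t
        ∧ t ^ 2 + (a ^ q + b) * t + (c ^ q + c) = 0)).card : ℤ)
      = 1 + η ((a ^ q + b) ^ 2 - 4 * (c ^ q + c)) := by
    by_cases hD : (a ^ q + b) ^ 2 - 4 * (c ^ q + c) = 0
    · rw [hD, hη0]
      have hset : (univ.filter (fun t : K => t ^ q = t
          ∧ t ^ 2 + (a ^ q + b) * t + (c ^ q + c) = 0)) = {-(a ^ q + b) / 2} := by
        ext t
        simp only [Finset.mem_filter, mem_univ, true_and, Finset.mem_singleton]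
        constructor
        · rintro ⟨_, hroot⟩
          have h4 : (2 * t + (a ^ q + b)) ^ 2 = 0 := by
            linear_combination 4 * hroot + hD
          have h5 : 2 * t + (a ^ q + b) = 0 :=
            pow_eq_zero_iff (by norm_num : 2 ≠ 0) |>.mp h4
          rw [eq_div_iff h2]
          linear_combination h5
        · intro h
          subst h
          constructor
          · simp only [neg_div, hFneg, div_pow, hab, h2K]
          · field_simp
            linear_combination -hD
      rw [hset, Finset.card_singleton]
      norm_num
    · by_cases hsq : ∃ y : K, y ^ q = y ∧ y ^ 2 = (a ^ q + b) ^ 2 - 4 * (c ^ q + c)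
      · rw [hη1 _ hD hsq]
        obtain ⟨y, hyq, hy2⟩ := hsq
        have hy0 : y ≠ 0 := by
          rintro rfl
          exact hD (by rw [← hy2]; norm_num)
        have hset : (univ.filter (fun t : K => t ^ q = t
            ∧ t ^ 2 + (a ^ q + b) * t + (c ^ q + c) = 0))
            = {(-(a ^ q + b) + y) / 2, (-(a ^ q + b) - y) / 2} := by
          ext t
          simp only [Finset.mem_filter, mem_univ, true_and, Finset.mem_insert,
            Finset.mem_singleton]
          constructor
          · rintro ⟨_, hroot⟩
            have key : (2 * t + (a ^ q + b) - y) * (2 * t + (a ^ q + b) + y) = 0 := by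
              linear_combination 4 * hroot - hy2
            rcases mul_eq_zero.mp key with h | h
            · left
              rw [eq_div_iff h2]
              linear_combination h
            · right
              rw [eq_div_iff h2]
              linear_combination h
          · rintro (h | h) <;> subst h <;> constructor
            · rw [div_pow, hFadd, hFneg, hab, hyq, h2K]
            · field_simp
              linear_combination hy2
            · rw [div_pow, hFsub, hFneg, hab, hyq, h2K]
            · field_simp
              linear_combination hy2
        rw [hset]
        rw [Finset.card_insert_of_notMem, Finset.card_singleton]
        · norm_num
        · simp only [Finset.mem_singleton]
          intro h
          have h2y : (2 : K) * y = 0 := by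
            field_simp at h
            linear_combination h
          rcases mul_eq_zero.mp h2y with h' | h'
          · exact h2 h'
          · exact hy0 h'
      · rw [hη2 _ hD hsq]
        have hset : (univ.filter (fun t : K => t ^ q = t
            ∧ t ^ 2 + (a ^ q + b) * t + (c ^ q + c) = 0)) = ∅ := by
          rw [Finset.eq_empty_iff_forall_notMem]
          intro t ht
          rw [Finset.mem_filter] at ht
          obtain ⟨_, htq, hroot⟩ := ht
          apply hsq
          refine ⟨2 * t + (a ^ q + b), ?_, ?_⟩
          · rw [hFadd, mul_pow, h2K, htq, hab]
          · linear_combination 4 * hroot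
        rw [hset]
        simp
  -- final assembly
  by_cases hTrγ : γ ^ q + γ = 0
  · have hmem : (-(b - a) : K) ∈ univ.filter (fun t : K => t ^ q = t
        ∧ t ^ 2 + (a ^ q + b) * t + (c ^ q + c) = 0) := by
      simp only [Finset.mem_filter, mem_univ, true_and]
      refine ⟨by rw [hFneg, hu], ?_⟩
      rw [← hTreq]
      exact hTrγ
    have hpos : 1 ≤ (univ.filter (fun t : K => t ^ q = t
        ∧ t ^ 2 + (a ^ q + b) * t + (c ^ q + c) = 0)).card :=
      Finset.card_pos.mpr ⟨_, hmem⟩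
    rw [hM₀, if_neg (not_not_intro hTrγ), hZcard, Finset.card_erase_of_mem hmem]
    by_cases hγ0 : γ = 0
    · rw [if_pos hγ0, if_pos hγ0, Nat.cast_add, Nat.cast_sub hpos, hquad]
      push_cast
      ring
    · rw [if_neg hγ0, if_neg hγ0, Nat.cast_add, Nat.cast_sub hpos, hquad]
      push_cast
      ring
  · have hγ0 : γ ≠ 0 := by
      intro h
      apply hTrγ
      rw [h, zero_pow (by omega : q ≠ 0), add_zero]
    have hnotmem : (-(b - a) : K) ∉ univ.filter (fun t : K => t ^ q = t
        ∧ t ^ 2 + (a ^ q + b) * t + (c ^ q + c) = 0) := by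
      simp only [Finset.mem_filter, mem_univ, true_and, not_and]
      intro _ hroot
      exact hTrγ (hTreq.trans hroot)
    rw [hM₀, if_pos hTrγ, hZcard, Finset.erase_eq_of_notMem hnotmem, if_neg hγ0,
      Nat.cast_add, hquad]
    push_cast
    ring
end

section
/- Let β ∈ F_{q²} with β ≠ 0, and let a, c ∈ F_{q²}, b = −a^q. Then the number of zeros of −β^q·x^{2q} + β·x² + a·x^q + b·x + c in F_{q²} equals: 0 if Tr(c) ≠ 0; q − η(N(β)) if Tr(c) = 0 and β^{-1}a^{2q} − β^{-q}a² − 4c ≠ 0; and q + η(N(β))·(q − 1) if Tr(c) = 0 and β^{-1}a^{2q} − β^{-q}a² − 4c = 0. -/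
open Finset
open scoped Classical


lemma my_card_le {K : Type} [Field K] [Fintype K] (q : ℕ) (hq : 2 ≤ q) (d : K) :
    (Finset.univ.filter fun x : K => x ^ q = d * x).card ≤ q := by
  classical
  set P : Polynomial K := Polynomial.X ^ q - Polynomial.C d * Polynomial.X with hP
  have hPne : P ≠ 0 := by
    intro h
    have h2 : P.coeff q = 0 := by rw [h]; simp
    rw [hP] at h2
    have h3 : ¬ (1 = q) := by omega
    simp [Polynomial.coeff_X_pow, Polynomial.coeff_X, h3] at h2
  have hsub : (Finset.univ.filter fun x : K => x ^ q = d * x) ⊆ P.roots.toFinset := by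
    intro x hx
    rw [Finset.mem_filter] at hx
    rw [Multiset.mem_toFinset, Polynomial.mem_roots hPne]
    simp [hP, Polynomial.IsRoot, sub_eq_zero, hx.2]
  refine le_trans (Finset.card_le_card hsub) ?_
  refine le_trans (Multiset.toFinset_card_le _) ?_
  refine le_trans (Polynomial.card_roots' P) ?_
  have h1 : P.natDegree ≤ q := by
    refine le_trans (Polynomial.natDegree_sub_le _ _) ?_
    simp only [Polynomial.natDegree_X_pow]
    have : (Polynomial.C d * Polynomial.X).natDegree ≤ 1 := by
      refine le_trans (Polynomial.natDegree_mul_le) ?_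
      simp
    omega
  exact h1

lemma my_struct {K : Type} [Field K] [Fintype K] (q : ℕ) (hq : 2 ≤ q)
    (hcard : Fintype.card K = q ^ 2)
    (hadd : ∀ x y : K, (x + y) ^ q = x ^ q + y ^ q) :
    (Finset.univ.filter fun x : K => x ^ q = x).card = q ∧
    (∀ c : K, c ^ q + c = 0 → ∃ t : K, t ^ q - t = c) := by
  classical
  have hq0 : q ≠ 0 := by omega
  have hneg : ∀ x : K, (-x) ^ q = -(x ^ q) := by
    intro x
    have := hadd x (-x)
    rw [add_neg_cancel, zero_pow hq0] at this
    linear_combination this.symm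
  have hsub : ∀ x y : K, (x - y) ^ q = x ^ q - y ^ q := by
    intro x y
    rw [sub_eq_add_neg, hadd, hneg, sub_eq_add_neg]
  have hKK : ∀ x : K, (x ^ q) ^ q = x := by
    intro x
    have h := FiniteField.pow_card x
    rw [hcard, pow_two, pow_mul] at h
    exact h
  set S : Finset K := Finset.univ.filter fun x : K => x ^ q = x with hS
  set A : Finset K := Finset.univ.filter fun x : K => x ^ q = -x with hA
  set φ : K → K := fun y => y ^ q - y with hφ
  set B : Finset K := Finset.univ.image φ with hB
  have hBA : B ⊆ A := by
    intro z hz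
    rw [hB, Finset.mem_image] at hz
    obtain ⟨y, _, rfl⟩ := hz
    rw [hA, Finset.mem_filter]
    refine ⟨Finset.mem_univ _, ?_⟩
    rw [hφ]
    simp only
    rw [hsub, hKK]
    ring
  have hfib : ∀ z ∈ B, (Finset.univ.filter fun y : K => φ y = z).card = S.card := by
    intro z hz
    rw [hB, Finset.mem_image] at hz
    obtain ⟨y0, _, hy0⟩ := hz
    refine Finset.card_bij (fun y _ => y - y0) ?_ ?_ ?_
    · intro y hy
      rw [Finset.mem_filter] at hy
      rw [hS, Finset.mem_filter]
      refine ⟨Finset.mem_univ _, ?_⟩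
      rw [hsub]
      have h1 : φ y = φ y0 := by rw [hy.2, hy0]
      rw [hφ] at h1
      simp only at h1
      linear_combination h1
    · intro a _ b _ hab
      exact sub_left_injective hab
    · intro s hs
      rw [hS, Finset.mem_filter] at hs
      refine ⟨s + y0, ?_, by ring⟩
      rw [Finset.mem_filter]
      refine ⟨Finset.mem_univ _, ?_⟩
      rw [hφ]
      simp only
      rw [hadd, hs.2]
      rw [hφ] at hy0
      simp only at hy0
      linear_combination hy0
  have hcount : q * q = B.card * S.card := by
    have h1 : (Finset.univ : Finset K).card = ∑ z ∈ B, (Finset.univ.filter fun y : K => φ y = z).card := by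
      refine Finset.card_eq_sum_card_fiberwise ?_
      intro x _
      rw [hB]
      exact Finset.mem_image_of_mem φ (Finset.mem_univ x)
    rw [Finset.card_univ, hcard, pow_two] at h1
    rw [h1, Finset.sum_congr rfl hfib, Finset.sum_const, smul_eq_mul]
  have hS_le : S.card ≤ q := by
    have := my_card_le q hq (1 : K)
    simp only [one_mul] at this
    exact this
  have hA_le : A.card ≤ q := by
    have := my_card_le q hq (-1 : K)
    simp only [neg_one_mul] at this
    exact this
  have hB_le : B.card ≤ q := le_trans (Finset.card_le_card hBA) hA_le
  have hScard : S.card = q := by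
    have h2 : q * q ≤ q * S.card := by
      calc q * q = B.card * S.card := hcount
      _ ≤ q * S.card := Nat.mul_le_mul_right _ hB_le
    have h3 : q ≤ S.card := Nat.le_of_mul_le_mul_left h2 (by omega)
    omega
  have hBcard : B.card = q := by
    have h2 := hcount
    rw [hScard] at h2
    exact (Nat.eq_of_mul_eq_mul_right (by omega) h2.symm)
  have hBAeq : B = A := by
    refine Finset.eq_of_subset_of_card_le hBA ?_
    rw [hBcard]; exact hA_le
  constructor
  · exact hScard
  · intro c hc
    have hcA : c ∈ A := by
      rw [hA, Finset.mem_filter]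
      exact ⟨Finset.mem_univ _, by linear_combination hc⟩
    rw [← hBAeq, hB, Finset.mem_image] at hcA
    obtain ⟨t, _, ht⟩ := hcA
    exact ⟨t, ht⟩

/-- Let `β ∈ F_{q²}` with `β ≠ 0`, let `a, c ∈ F_{q²}` and `b = −a^q`. Then
the number of zeros of `−β^q·x^{2q} + β·x² + a·x^q + b·x + c` in `F_{q²}` equals: `0` if
`Tr(c) ≠ 0`; `q − η(N(β))` if `Tr(c) = 0` and `β⁻¹a^{2q} − β^{−q}a² − 4c ≠ 0`; and
`q + η(N(β))·(q − 1)` if `Tr(c) = 0` and `β⁻¹a^{2q} − β^{−q}a² − 4c = 0`.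
Here `q` is a power of an odd prime, `K` plays the role of `F_{q²}`,
`F_q = {x : K | x^q = x}`, `Tr(x) = x^q + x`, `N(x) = x^{q+1}` and `η` is the quadratic
character of `F_q` (values in `ℤ`, `η(0) = 0`). -/
theorem stmt7 (p n q : ℕ) (hp : p.Prime) (hp2 : p ≠ 2) (hn : 0 < n)
    (hq : q = p ^ n)
    (K : Type) [Field K] [Fintype K] (hK : Fintype.card K = q ^ 2)
    (η : K → ℤ) (hη0 : η 0 = 0)
    (hη1 : ∀ x : K, x ≠ 0 → (∃ y : K, y ^ q = y ∧ y ^ 2 = x) → η x = 1)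
    (hη2 : ∀ x : K, x ≠ 0 → ¬ (∃ y : K, y ^ q = y ∧ y ^ 2 = x) → η x = -1)
    (β a b c : K) (hβ : β ≠ 0) (hb : b = -a ^ q)
    (Z : ℤ)
    (hZ : Z = ((Finset.univ.filter (fun x : K =>
      -β ^ q * x ^ (2 * q) + β * x ^ 2 + a * x ^ q + b * x + c = 0)).card : ℤ)) :
    (c ^ q + c ≠ 0 → Z = 0) ∧
    (c ^ q + c = 0 → β⁻¹ * a ^ (2 * q) - (β ^ q)⁻¹ * a ^ 2 - 4 * c ≠ 0 →
      Z = (q : ℤ) - η (β ^ (q + 1))) ∧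
    (c ^ q + c = 0 → β⁻¹ * a ^ (2 * q) - (β ^ q)⁻¹ * a ^ 2 - 4 * c = 0 →
      Z = (q : ℤ) + η (β ^ (q + 1)) * ((q : ℤ) - 1)) := by
  classical
  -- basic numerics
  have hp3 : 3 ≤ p := by have := hp.two_le; omega
  have hq3 : 3 ≤ q := by
    have h1 : p ≤ p ^ n := Nat.le_self_pow (by omega) p
    omega
  have hq2 : 2 ≤ q := by omega
  have hqodd : Odd q := by
    rw [hq]; exact (hp.odd_of_ne_two hp2).pow
  obtain ⟨k, hk⟩ := hqodd
  -- characteristic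
  have hring : ringChar K = p := by
    obtain ⟨m, hrp, hrc⟩ := FiniteField.card K (ringChar K)
    have h1 : (ringChar K) ∣ p ^ (n * 2) := by
      rw [pow_mul, ← hq, ← hK, hrc]
      exact dvd_pow_self _ (by positivity)
    have := (Nat.Prime.dvd_of_dvd_pow hrp h1)
    exact ((Nat.prime_dvd_prime_iff_eq hrp hp).mp this)
  haveI : CharP K p := ringChar.of_eq hring
  haveI : Fact p.Prime := ⟨hp⟩
  set F : K →+* K := iterateFrobenius K p n with hFdef
  have hF : ∀ x : K, F x = x ^ q := by
    intro x; rw [hFdef, iterateFrobenius_def, ← hq]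
  have hFadd : ∀ x y : K, (x + y) ^ q = x ^ q + y ^ q := by
    intro x y; rw [← hF, ← hF, ← hF, map_add]
  have hKK : ∀ x : K, (x ^ q) ^ q = x := by
    intro x
    have h := FiniteField.pow_card x
    rw [hK, pow_two, pow_mul] at h
    exact h
  have hx2q : ∀ y : K, y ^ (2 * q) = (y ^ q) ^ 2 := by
    intro y; rw [Nat.mul_comm, pow_mul]
  have h2ne : (2 : K) ≠ 0 := by
    intro h
    have h1 := (CharP.cast_eq_zero_iff K p 2).mp (by exact_mod_cast h)
    have := Nat.le_of_dvd (by omega) h1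
    omega
  have h4ne : (4 : K) ≠ 0 := by
    intro h
    have : (2 : K) * 2 = 0 := by rw [← h]; norm_num
    rcases mul_eq_zero.mp this with h' | h' <;> exact h2ne h'
  have h2q : (2 : K) ^ q = 2 := by rw [← hF]; exact map_ofNat F 2
  have h4q : (4 : K) ^ q = 4 := by rw [← hF]; exact map_ofNat F 4
  have hβq : β ^ q ≠ 0 := pow_ne_zero _ hβ
  have hbq : b ^ q = -a := by
    rw [hb]
    have h1 : (-(a ^ q) : K) ^ q = -((a ^ q) ^ q) := by
      rw [← hF (-(a ^ q)), map_neg, hF]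
    rw [h1, hKK]
  have hchar2 : ringChar K ≠ 2 := by rw [hring]; exact hp2
  -- the subfield S
  set S : Finset K := Finset.univ.filter fun x : K => x ^ q = x with hSdef
  obtain ⟨hScard, hsurj⟩ := my_struct q hq2 hK hFadd
  rw [← hSdef] at hScard
  have hSmem : ∀ x : K, x ∈ S ↔ x ^ q = x := by
    intro x; rw [hSdef, Finset.mem_filter]; simp
  have hS0 : (0 : K) ∈ S := by rw [hSmem]; exact zero_pow (by omega)
  -- arithmetic identity for card/2
  have harith : q ^ 2 / 2 = (q + 1) * ((q - 1) / 2) := by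
    have h1 : q ^ 2 = 2 * ((q + 1) * ((q - 1) / 2)) + 1 := by
      have e1 : q + 1 = 2 * (k + 1) := by omega
      have e2 : (q - 1) / 2 = k := by omega
      rw [e1, e2, pow_two, hk]; ring
    omega
  -- powers in S are 1
  have hpow_q_sub_one : ∀ w : K, w ^ q = w → w ≠ 0 → w ^ (q - 1) = 1 := by
    intro w hw hw0
    have h1 : w ^ (q - 1) * w = w ^ q := by
      rw [← pow_succ]
      congr 1
      omega
    have h2 : w ^ (q - 1) * w = 1 * w := by rw [h1, hw, one_mul]
    exact mul_right_cancel₀ hw0 h2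
  have hsq_one : ∀ w : K, w ^ q = w → w ≠ 0 → quadraticChar K w = 1 := by
    intro w hw hw0
    rw [quadraticChar_one_iff_isSquare hw0]
    rw [FiniteField.isSquare_iff hchar2 hw0, hK, harith]
    rw [pow_mul, pow_succ, hw, ← pow_two, ← pow_mul]
    have : 2 * ((q - 1) / 2) = q - 1 := by omega
    rw [this]
    exact hpow_q_sub_one w hw hw0
  have hFsub : ∀ x y : K, (x - y) ^ q = x ^ q - y ^ q := by
    intro x y
    rw [← hF (x - y), map_sub, hF, hF]
  have hFneg : ∀ x : K, (-x) ^ q = -(x ^ q) := by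
    intro x
    rw [← hF (-x), map_neg, hF]
  have hpow2q : ∀ y : K, (y ^ 2) ^ q = (y ^ q) ^ 2 := fun y => pow_right_comm y 2 q
  -- sum of quadratic character over S
  have hsumS : ∑ w ∈ S, quadraticChar K w = (q : ℤ) - 1 := by
    rw [← Finset.add_sum_erase _ _ hS0, quadraticChar_zero, zero_add]
    have hone : ∀ w ∈ S.erase 0, quadraticChar K w = 1 := by
      intro w hw
      obtain ⟨hw0, hwS⟩ := Finset.mem_erase.mp hw
      exact hsq_one w ((hSmem w).mp hwS) hw0
    rw [Finset.sum_congr rfl hone, Finset.sum_const, Finset.card_erase_of_mem hS0, hScard]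
    rw [nsmul_eq_mul, mul_one]
    push_cast [Nat.cast_sub (by omega : 1 ≤ q)]
    ring
  -- the key character sum for v outside S
  have hT : ∀ v : K, v ^ q ≠ v → ∑ s ∈ S, quadraticChar K (s + v) = -1 := by
    intro v hv
    have hinj : ∀ x ∈ S ×ˢ S, ∀ y ∈ S ×ˢ S,
        (fun sr : K × K => sr.1 + sr.2 * v) x = (fun sr : K × K => sr.1 + sr.2 * v) y → x = y := by
      rintro ⟨s1, r1⟩ hx ⟨s2, r2⟩ hy hxy
      rw [Finset.mem_product, hSmem, hSmem] at hx hy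
      simp only at hxy
      by_cases hr : r1 = r2
      · subst hr
        have : s1 = s2 := by
          have := add_right_cancel hxy
          exact this
        rw [this]
      · exfalso
        apply hv
        have hd : r1 - r2 ≠ 0 := sub_ne_zero.mpr hr
        have hveq : v = (s2 - s1) * (r1 - r2)⁻¹ := by
          field_simp
          linear_combination hxy
        rw [hveq, mul_pow, inv_pow, hFsub, hFsub, hx.1, hx.2, hy.1, hy.2]
    have himg : ((S ×ˢ S).image (fun sr : K × K => sr.1 + sr.2 * v)) = Finset.univ := by
      apply Finset.eq_univ_of_card
      rw [Finset.card_image_of_injOn (fun x hx y hy h => hinj x hx y hy h),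
        Finset.card_product, hScard, hK]
      ring
    have h0 : (0 : ℤ) = ∑ sr ∈ S ×ˢ S, quadraticChar K (sr.1 + sr.2 * v) := by
      rw [← Finset.sum_image hinj, himg]
      exact (quadraticChar_sum_zero hchar2).symm
    rw [Finset.sum_product, Finset.sum_comm] at h0
    rw [← Finset.add_sum_erase _ _ hS0] at h0
    simp only [zero_mul, add_zero] at h0
    rw [hsumS] at h0
    have hry : ∀ r ∈ S.erase 0,
        (∑ x ∈ S, quadraticChar K (x + r * v)) = ∑ s ∈ S, quadraticChar K (s + v) := by
      intro r hr
      obtain ⟨hr0, hrS⟩ := Finset.mem_erase.mp hr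
      have hrq : r ^ q = r := (hSmem r).mp hrS
      have step : (∑ x ∈ S, quadraticChar K (x + r * v))
          = ∑ s ∈ S, quadraticChar K (r * (s + v)) := by
        refine Finset.sum_nbij' (fun x => r⁻¹ * x) (fun s => r * s) ?_ ?_ ?_ ?_ ?_
        · intro x hx
          rw [hSmem] at hx ⊢
          rw [mul_pow, inv_pow, hrq, hx]
        · intro s hs
          rw [hSmem] at hs ⊢
          rw [mul_pow, hrq, hs]
        · intro x _; field_simp
        · intro s _; field_simp
        · intro x _
          congr 1
          field_simp
      rw [step]
      have : ∀ s ∈ S, quadraticChar K (r * (s + v))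
          = quadraticChar K (s + v) := by
        intro s _
        rw [map_mul, hsq_one r hrq hr0, one_mul]
      rw [Finset.sum_congr rfl this]
    rw [Finset.sum_congr rfl hry, Finset.sum_const, Finset.card_erase_of_mem hS0, hScard] at h0
    have hcast : ((q - 1 : ℕ) : ℤ) = (q : ℤ) - 1 := by
      push_cast [Nat.cast_sub (by omega : 1 ≤ q)]; ring
    rw [nsmul_eq_mul, hcast] at h0
    have hq1 : (q : ℤ) - 1 ≠ 0 := by
      have : (3 : ℤ) ≤ (q : ℤ) := by exact_mod_cast hq3
      omega
    have hfac : ((q : ℤ) - 1) * (1 + ∑ s ∈ S, quadraticChar K (s + v)) = 0 := by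
      linarith [h0]
    have := (mul_eq_zero.mp hfac).resolve_left hq1
    linarith
  -- relation between quadraticChar and η
  have hfixq : ∀ w : K, (w ^ (q + 1)) ^ q = w ^ (q + 1) := by
    intro w
    rw [pow_succ, mul_pow, hKK]
    ring
  have hχη : quadraticChar K β = η (β ^ (q + 1)) := by
    have hNne : β ^ (q + 1) ≠ 0 := pow_ne_zero _ hβ
    by_cases hsq : IsSquare β
    · rw [(quadraticChar_one_iff_isSquare hβ).mpr hsq]
      obtain ⟨w, hw⟩ := hsq
      rw [hη1 _ hNne ⟨w ^ (q + 1), hfixq w, by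
        rw [← pow_mul, mul_comm (q + 1) 2, pow_mul, hw]; ring⟩]
    · rw [quadraticChar_neg_one_iff_not_isSquare.mpr hsq]
      symm
      apply hη2 _ hNne
      rintro ⟨y, hyq, hy2⟩
      have hy0 : y ≠ 0 := by
        rintro rfl
        exact hNne (by simpa using hy2.symm)
      apply hsq
      rw [FiniteField.isSquare_iff hchar2 hβ, hK, harith, pow_mul, ← hy2, ← pow_mul]
      have h21 : 2 * ((q - 1) / 2) = q - 1 := by omega
      rw [h21]
      exact hpow_q_sub_one y hyq hy0
  -- Frobenius applied to the defining polynomial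
  have hkey1 : ∀ x : K, (-β ^ q * x ^ (2 * q) + β * x ^ 2 + a * x ^ q + b * x + c) ^ q
      = β ^ q * (x ^ q) ^ 2 - β * x ^ 2 - a * x ^ q + a ^ q * x + c ^ q := by
    intro x
    rw [hx2q x]
    simp only [hFadd, hFsub, mul_pow, hFneg, hpow2q, hKK, hbq]
    ring
  -- the central computation for the case Tr(c) = 0
  have main23 : c ^ q + c = 0 → ∃ T : ℤ,
      Z = (q : ℤ) + quadraticChar K β * T ∧
      (β⁻¹ * a ^ (2 * q) - (β ^ q)⁻¹ * a ^ 2 - 4 * c = 0 → T = (q : ℤ) - 1) ∧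
      (β⁻¹ * a ^ (2 * q) - (β ^ q)⁻¹ * a ^ 2 - 4 * c ≠ 0 → T = -1) := by
    intro hTr
    obtain ⟨t, ht⟩ := hsurj c hTr
    have ht' : t ^ q = t + c := by linear_combination ht
    set u : K := b ^ 2 + 4 * β * t with hu
    set v : K := u * (4 * β)⁻¹ with hv
    have h4β : (4 * β : K) ≠ 0 := mul_ne_zero h4ne hβ
    have h2β : (2 * β : K) ≠ 0 := mul_ne_zero h2ne hβ
    have hvq : v ^ q = u ^ q * (4 * β ^ q)⁻¹ := by
      rw [hv, mul_pow, inv_pow, mul_pow, h4q]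
    have huq : u ^ q = a ^ 2 + 4 * β ^ q * (t + c) := by
      rw [hu]
      simp only [hFadd, mul_pow, hpow2q, h4q, hbq, ht']
      ring
    have hkeye : 4 * (v ^ q - v) = -(β⁻¹ * a ^ (2 * q) - (β ^ q)⁻¹ * a ^ 2 - 4 * c) := by
      rw [hvq, huq, hv, hu, hb, hx2q a]
      field_simp
      ring
    refine ⟨∑ s ∈ S, quadraticChar K (s + v), ?_, ?_, ?_⟩
    · -- Z = q + χ(β) * T
      have step1 : (Finset.univ.filter (fun x : K =>
          -β ^ q * x ^ (2 * q) + β * x ^ 2 + a * x ^ q + b * x + c = 0))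
          = (Finset.univ.filter (fun x : K =>
            (β * x ^ 2 + b * x - t) ^ q = β * x ^ 2 + b * x - t)) := by
        apply Finset.filter_congr
        intro x _
        have e1 : (β * x ^ 2 + b * x - t) ^ q = β ^ q * (x ^ q) ^ 2 + b ^ q * x ^ q - t ^ q := by
          simp only [hFadd, hFsub, mul_pow, hpow2q]
        constructor
        · intro hx
          rw [hx2q x] at hx
          rw [e1, hbq, ht']
          linear_combination -hx
        · intro hx
          rw [e1, hbq, ht'] at hx
          rw [hx2q x]
          linear_combination -hx
      have step2 : (Finset.univ.filter (fun x : K =>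
          (β * x ^ 2 + b * x - t) ^ q = β * x ^ 2 + b * x - t)).card
          = ∑ s ∈ S, (Finset.univ.filter (fun x : K => β * x ^ 2 + b * x - t = s)).card := by
        have h1 := Finset.card_eq_sum_card_fiberwise
          (f := fun x : K => β * x ^ 2 + b * x - t)
          (s := Finset.univ.filter (fun x : K =>
            (β * x ^ 2 + b * x - t) ^ q = β * x ^ 2 + b * x - t))
          (t := S) ?_
        · rw [h1]
          refine Finset.sum_congr rfl ?_
          intro s hs
          congr 1
          rw [Finset.filter_filter]
          apply Finset.filter_congr
          intro x _
          simp only [and_iff_right_iff_imp]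
          intro hfx
          rw [hfx]
          exact (hSmem s).mp hs
        · intro x hx
          rw [Finset.mem_coe, Finset.mem_filter] at hx
          rw [Finset.mem_coe, hSmem]
          exact hx.2
      have step3 : ∀ s ∈ S, (Finset.univ.filter (fun x : K => β * x ^ 2 + b * x - t = s)).card
          = (Finset.univ.filter (fun y : K => y ^ 2 = u + 4 * β * s)).card := by
        intro s _
        refine Finset.card_bij (fun x _ => 2 * β * x + b) ?_ ?_ ?_
        · intro x hx
          rw [Finset.mem_filter] at hx ⊢
          refine ⟨Finset.mem_univ _, ?_⟩
          rw [hu]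
          linear_combination (4 * β) * hx.2
        · intro x1 _ x2 _ he
          have h1 : (2 * β) * x1 = (2 * β) * x2 := by linear_combination he
          exact mul_left_cancel₀ h2β h1
        · intro y hy
          rw [Finset.mem_filter] at hy
          refine ⟨(y - b) / (2 * β), Finset.mem_filter.mpr ⟨Finset.mem_univ _, ?_⟩, ?_⟩
          · have hyx : 2 * β * ((y - b) / (2 * β)) + b = y := by field_simp; ring
            have h2 : (2 * β * ((y - b) / (2 * β)) + b) ^ 2 = u + 4 * β * s := by
              rw [hyx]; exact hy.2
            rw [hu] at h2
            have h3 : 4 * β * (β * ((y - b) / (2 * β)) ^ 2 + b * ((y - b) / (2 * β)) - t - s)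
                = 0 := by linear_combination h2
            have h4 := (mul_eq_zero.mp h3).resolve_left h4β
            linear_combination h4
          · field_simp
            ring
      have step4 : ∀ s ∈ S, ((Finset.univ.filter (fun y : K => y ^ 2 = u + 4 * β * s)).card : ℤ)
          = quadraticChar K (u + 4 * β * s) + 1 := by
        intro s _
        have h1 := quadraticChar_card_sqrts hchar2 (u + 4 * β * s)
        rw [Set.toFinset_setOf] at h1
        convert h1 using 3
      have huv : ∀ s : K, u + 4 * β * s = (4 * β) * (s + v) := by
        intro s
        rw [hv]
        field_simp
        ring
      have hχ4β : quadraticChar K (4 * β) = quadraticChar K β := by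
        have h24 : ((2 : K)) ^ 2 = 4 := by norm_num
        rw [map_mul, ← h24, quadraticChar_sq_one' h2ne, one_mul]
      calc Z = ((∑ s ∈ S, (Finset.univ.filter
            (fun x : K => β * x ^ 2 + b * x - t = s)).card : ℕ) : ℤ) := by
              rw [hZ, step1, step2]
        _ = ∑ s ∈ S, ((Finset.univ.filter
            (fun y : K => y ^ 2 = u + 4 * β * s)).card : ℤ) := by
              rw [Nat.cast_sum]
              refine Finset.sum_congr rfl (fun s hs => ?_)
              exact_mod_cast step3 s hs
        _ = ∑ s ∈ S, (quadraticChar K (u + 4 * β * s) + 1) := Finset.sum_congr rfl step4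
        _ = (∑ s ∈ S, quadraticChar K (u + 4 * β * s)) + (q : ℤ) := by
              rw [Finset.sum_add_distrib, Finset.sum_const, hScard, nsmul_eq_mul, mul_one]
        _ = (∑ s ∈ S, quadraticChar K β * quadraticChar K (s + v)) + (q : ℤ) := by
              refine congrArg (· + (q : ℤ)) (Finset.sum_congr rfl ?_)
              intro s _
              rw [huv s, map_mul, hχ4β]
        _ = (q : ℤ) + quadraticChar K β * ∑ s ∈ S, quadraticChar K (s + v) := by
              rw [Finset.mul_sum]
              ring
    · -- case the discriminant condition holds
      intro hcnd
      have hvS : v ^ q = v := by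
        rw [hcnd] at hkeye
        simp only [neg_zero] at hkeye
        have h1 := (mul_eq_zero.mp hkeye).resolve_left h4ne
        exact sub_eq_zero.mp h1
      have hshift : ∑ s ∈ S, quadraticChar K (s + v) = ∑ w ∈ S, quadraticChar K w := by
        refine Finset.sum_nbij' (fun s => s + v) (fun w => w - v) ?_ ?_ ?_ ?_ ?_
        · intro s hs
          rw [hSmem] at hs ⊢
          rw [hFadd, hs, hvS]
        · intro w hw
          rw [hSmem] at hw ⊢
          rw [hFsub, hw, hvS]
        · intro s _; ring
        · intro w _; ring
        · intro s _; rfl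
      rw [hshift, hsumS]
    · intro hcnd
      have hvn : v ^ q ≠ v := by
        intro hvv
        apply hcnd
        have h1 : (0 : K) = -(β⁻¹ * a ^ (2 * q) - (β ^ q)⁻¹ * a ^ 2 - 4 * c) := by
          rw [← hkeye, hvv, sub_self, mul_zero]
        linear_combination h1
      exact hT v hvn
  refine ⟨?_, ?_, ?_⟩
  · -- Part 1
    intro hc
    rw [hZ]
    have hempty : (Finset.univ.filter (fun x : K =>
        -β ^ q * x ^ (2 * q) + β * x ^ 2 + a * x ^ q + b * x + c = 0)) = ∅ := by
      rw [Finset.filter_eq_empty_iff]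
      intro x _
      intro hx
      apply hc
      have hfx := hkey1 x
      rw [hx] at hfx
      rw [zero_pow (by omega : q ≠ 0)] at hfx
      rw [hb, hx2q x] at hx
      linear_combination hx - hfx
    rw [hempty]
    simp
  · -- Part 2
    intro hTr hcnd
    obtain ⟨T, hZT, _, hcn⟩ := main23 hTr
    rw [hZT, hcn hcnd, hχη]
    ring
  · -- Part 3
    intro hTr hcnd
    obtain ⟨T, hZT, hc0, _⟩ := main23 hTr
    rw [hZT, hc0 hcnd, hχη]
end
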